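/- arXiv:2106.10376 — 4 statements merged into one kernel-verified Lean document; each statement's English description precedes it below -/
import Mathlib

section
/- For all integers m,n ≥ 2, the grid graph G_{m,n} has the strict 1-density property: every subgraph H of G_{m,n} that is vertex-induced, connected, has at least one edge, and satisfies H ≠ G_{m,n}, obeys θ(H) < θ(G_{m,n}). -/
open scoped Classical

noncomputable section
set_option maxHeartbeats 1600000

/-- The `m`-by-`n` grid graph: vertices are pairs in `Fin m × Fin n`, and two vertices
are adjacent iff they agree in one coordinate and differ by exactly one in the other
(the box product of two path graphs). -/
def gridGraph (m n : ℕ) : SimpleGraph (Fin m × Fin n) :=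
  SimpleGraph.fromRel fun v w =>
    (v.1 = w.1 ∧ v.2.val + 1 = w.2.val) ∨ (v.2 = w.2 ∧ v.1.val + 1 = w.1.val)

variable {V : Type*} [Fintype V] [DecidableEq V]

/-- Edges of `G` with both endpoints in `S`: the edge set of the vertex-induced subgraph
of `G` on `S`. -/
def inducedEdges (G : SimpleGraph V) (S : Finset V) : Finset (Sym2 V) :=
  G.edgeFinset.filter fun e => ∀ v ∈ e, v ∈ S

/-- The 1-density `θ(H) = |E(H)|/(|V(H)|-1)` of the vertex-induced subgraph of `G`
on the vertex set `S`. -/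
def density (G : SimpleGraph V) (S : Finset V) : ℝ :=
  ((inducedEdges G S).card : ℝ) / ((S.card : ℝ) - 1)

namespace GridAux

/-! ### Arithmetic core -/

lemma chain_ineq (A B C D a b d f : ℤ)
    (hapos : 0 < a) (hbpos : 0 < b) (hdpos : 0 < d) (hfpos : 0 < f)
    (i1 : A*b ≤ B*a) (i2 : B*d ≤ C*b) (i3 : C*f ≤ D*d)
    (hstrict : A*b < B*a ∨ B*d < C*b ∨ C*f < D*d) :
    A*f < D*a := by
  have k1 : A*b*(d*f) ≤ B*a*(d*f) := mul_le_mul_of_nonneg_right i1 (by positivity)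
  have k2 : B*d*(a*f) ≤ C*b*(a*f) := mul_le_mul_of_nonneg_right i2 (by positivity)
  have k3 : C*f*(a*b) ≤ D*d*(a*b) := mul_le_mul_of_nonneg_right i3 (by positivity)
  have hstep : A*f*(b*d) < D*a*(b*d) := by
    rcases hstrict with h | h | h
    · have k1' : A*b*(d*f) < B*a*(d*f) := mul_lt_mul_of_pos_right h (by positivity)
      nlinarith
    · have k2' : B*d*(a*f) < C*b*(a*f) := mul_lt_mul_of_pos_right h (by positivity)
      nlinarith
    · have k3' : C*f*(a*b) < D*d*(a*b) := mul_lt_mul_of_pos_right h (by positivity)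
      nlinarith
  exact lt_of_mul_lt_mul_right hstep (by positivity)

lemma key_ineq (m n r c s : ℤ) (hm : 2 ≤ m) (hn : 2 ≤ n) (hr : 1 ≤ r) (hc : 1 ≤ c)
    (hrm : r ≤ m) (hcn : c ≤ n) (hs : 2 ≤ s) (hsrc : s ≤ r*c) (hsmn : s < m*n) :
    (2*s - r - c) * (m*n - 1) < (2*m*n - m - n) * (s - 1) := by
  rcases eq_or_lt_of_le hc with hc1 | hc2
  · have h1 : s ≤ r := by nlinarith
    nlinarith [mul_pos (by linarith : (0:ℤ) < s - 1) (by nlinarith : (0:ℤ) < (m-1)*(n-1))]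
  rcases eq_or_lt_of_le hr with hr1 | hr2
  · have h1 : s ≤ c := by nlinarith
    nlinarith [mul_pos (by linarith : (0:ℤ) < s - 1) (by nlinarith : (0:ℤ) < (m-1)*(n-1))]
  have hapos : (0:ℤ) < s - 1 := by linarith
  have hbpos : (0:ℤ) < r*c - 1 := by nlinarith
  have hdpos : (0:ℤ) < m*c - 1 := by nlinarith
  have hfpos : (0:ℤ) < m*n - 1 := by nlinarith
  have i1 : (2*s-r-c)*(r*c-1) ≤ (2*r*c-r-c)*(s-1) := by nlinarith
  have i2 : (2*r*c-r-c)*(m*c-1) ≤ (2*m*c-m-c)*(r*c-1) := by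
    nlinarith [mul_nonneg (by linarith : (0:ℤ) ≤ m - r) (sq_nonneg (c-1))]
  have i3 : (2*m*c-m-c)*(m*n-1) ≤ (2*m*n-m-n)*(m*c-1) := by
    nlinarith [mul_nonneg (by linarith : (0:ℤ) ≤ n - c) (sq_nonneg (m-1))]
  have hstrict : (2*s-r-c)*(r*c-1) < (2*r*c-r-c)*(s-1)
      ∨ (2*r*c-r-c)*(m*c-1) < (2*m*c-m-c)*(r*c-1)
      ∨ (2*m*c-m-c)*(m*n-1) < (2*m*n-m-n)*(m*c-1) := by
    rcases lt_or_eq_of_le hsrc with h | h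
    · left; nlinarith
    · rcases lt_or_eq_of_le hrm with h' | h'
      · right; left
        nlinarith [mul_pos (by linarith : (0:ℤ) < m - r) (by nlinarith : (0:ℤ) < (c-1)^2)]
      · right; right
        have : c < n := by
          rcases lt_or_eq_of_le hcn with h'' | h''
          · exact h''
          · exfalso; rw [h', h''] at h; omega
        nlinarith [mul_pos (by linarith : (0:ℤ) < n - c) (by nlinarith : (0:ℤ) < (m-1)^2)]
  exact chain_ineq _ _ _ _ _ _ _ _ hapos hbpos hdpos hfpos i1 i2 i3 hstrict

/-! ### Grid combinatorics -/

variable {m n : ℕ}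

lemma grid_adj {v w : Fin m × Fin n} :
    (gridGraph m n).Adj v w ↔
      ((v.1 = w.1 ∧ v.2.val + 1 = w.2.val) ∨ (v.2 = w.2 ∧ v.1.val + 1 = w.1.val)) ∨
      ((w.1 = v.1 ∧ w.2.val + 1 = v.2.val) ∨ (w.2 = v.2 ∧ w.1.val + 1 = v.1.val)) := by
  constructor
  · rintro ⟨hne, h⟩; exact h
  · intro h
    refine ⟨?_, h⟩
    rintro rfl
    rcases h with (⟨_, h2⟩|⟨_, h2⟩)|(⟨_, h2⟩|⟨_, h2⟩) <;> omega

lemma edge_struct {S : Finset (Fin m × Fin n)} {e : Sym2 (Fin m × Fin n)}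
    (he : e ∈ inducedEdges (gridGraph m n) S) :
    ∃ v w : Fin m × Fin n, e = s(v, w) ∧ v ∈ S ∧ w ∈ S ∧
      ((v.1 = w.1 ∧ v.2.val + 1 = w.2.val) ∨ (v.2 = w.2 ∧ v.1.val + 1 = w.1.val)) := by
  rw [inducedEdges, Finset.mem_filter] at he
  obtain ⟨he1, he2⟩ := he
  rw [SimpleGraph.mem_edgeFinset] at he1
  induction e using Sym2.ind with
  | _ x y =>
    rw [SimpleGraph.mem_edgeSet, grid_adj] at he1
    have hx : x ∈ S := he2 x (by simp)
    have hy : y ∈ S := he2 y (by simp)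
    rcases he1 with h | h
    · exact ⟨x, y, rfl, hx, hy, h⟩
    · exact ⟨y, x, Sym2.eq_swap, hy, hx, h⟩

/-- The "horizontal" predicate on edges: all endpoints share the first coordinate. -/
def isH (e : Sym2 (Fin m × Fin n)) : Prop := ∀ v ∈ e, ∀ w ∈ e, v.1 = w.1

/-- Sorting key: lexicographic. -/
def key (v : Fin m × Fin n) : ℕ := v.1.val * n + v.2.val

lemma key_lt_of_fst_lt {v w : Fin m × Fin n} (h : v.1.val < w.1.val) : key v < key w := by
  have h1 : v.1.val * n + n ≤ w.1.val * n := by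
    calc v.1.val * n + n = (v.1.val + 1) * n := by ring
      _ ≤ w.1.val * n := Nat.mul_le_mul_right n h
  have h2 := v.2.isLt
  simp only [key]
  linarith

lemma key_inj {x y : Fin m × Fin n} (h : key x = key y) : x = y := by
  have hac : x.1.val = y.1.val := by
    rcases Nat.lt_trichotomy x.1.val y.1.val with h' | h' | h'
    · exact absurd h (Nat.ne_of_lt (key_lt_of_fst_lt h'))
    · exact h'
    · exact absurd h.symm (Nat.ne_of_lt (key_lt_of_fst_lt h'))
  simp only [key, hac] at h
  have hbd : x.2.val = y.2.val := by omega
  exact Prod.ext (Fin.ext hac) (Fin.ext hbd)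

/-- The larger endpoint of an edge (by `key`). -/
def topFun : Sym2 (Fin m × Fin n) → Fin m × Fin n :=
  Sym2.lift ⟨fun x y => if key x ≤ key y then y else x, by
    intro x y
    dsimp only
    split_ifs with h1 h2 h2
    · exact (key_inj (le_antisymm h1 h2)).symm
    · rfl
    · rfl
    · omega⟩

lemma topFun_mk {v w : Fin m × Fin n} (h : key v < key w) : topFun s(v, w) = w := by
  simp only [topFun, Sym2.lift_mk]
  rw [if_pos (le_of_lt h)]

lemma key_lt_of_horiz {v w : Fin m × Fin n} (h1 : v.1 = w.1) (h2 : v.2.val + 1 = w.2.val) :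
    key v < key w := by
  simp only [key, h1]
  omega

lemma key_lt_of_vert {v w : Fin m × Fin n} (h1 : v.2 = w.2) (h2 : v.1.val + 1 = w.1.val) :
    key v < key w :=
  key_lt_of_fst_lt (by omega)

lemma isH_mk {v w : Fin m × Fin n} (h : v.1 = w.1) : isH s(v, w) := by
  intro p hp q hq
  rw [Sym2.mem_iff] at hp hq
  rcases hp with rfl | rfl <;> rcases hq with rfl | rfl <;>
    first | rfl | exact h | exact h.symm

lemma not_isH_mk {v w : Fin m × Fin n} (h : v.1.val + 1 = w.1.val) : ¬ isH s(v, w) := by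
  intro hH
  have := hH v (by simp) w (by simp)
  have : v.1.val = w.1.val := congrArg Fin.val this
  omega

/-- Row counting: horizontal induced edges + number of occupied rows ≤ number of vertices. -/
lemma row_count (S : Finset (Fin m × Fin n)) :
    ((inducedEdges (gridGraph m n) S).filter isH).card + (S.image Prod.fst).card ≤ S.card := by
  set M : Finset (Fin m × Fin n) :=
    S.filter (fun v => ∀ w ∈ S, w.1 = v.1 → v.2 ≤ w.2) with hM
  have hMS : M ⊆ S := Finset.filter_subset _ _
  have hMcard : M.card = (S.image Prod.fst).card := by
    have hinj : Set.InjOn Prod.fst (M : Set (Fin m × Fin n)) := by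
      intro v hv v' hv' hvv'
      simp only [hM, Finset.coe_filter, Set.mem_setOf_eq] at hv hv'
      have h1 := hv.2 v' hv'.1 hvv'.symm
      have h2 := hv'.2 v hv.1 hvv'
      exact Prod.ext hvv' (le_antisymm h1 h2)
    have himg : M.image Prod.fst = S.image Prod.fst := by
      apply Finset.Subset.antisymm (Finset.image_subset_image hMS)
      intro a ha
      simp only [Finset.mem_image] at ha ⊢
      obtain ⟨v, hv, rfl⟩ := ha
      obtain ⟨u, hu, humin⟩ := Finset.exists_min_image (S.filter fun w => w.1 = v.1)
        Prod.snd ⟨v, Finset.mem_filter.2 ⟨hv, rfl⟩⟩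
      obtain ⟨huS, hu1⟩ := Finset.mem_filter.1 hu
      refine ⟨u, Finset.mem_filter.2 ⟨huS, ?_⟩, hu1⟩
      intro w hw hw1
      exact humin w (Finset.mem_filter.2 ⟨hw, by rw [hw1, hu1]⟩)
    rw [← himg, Finset.card_image_of_injOn hinj]
  have hE : ((inducedEdges (gridGraph m n) S).filter isH).card ≤ (S \ M).card := by
    apply Finset.card_le_card_of_injOn topFun
    · intro e he
      rw [Finset.mem_coe, Finset.mem_filter] at he
      obtain ⟨v, w, rfl, hv, hw, hsort⟩ := edge_struct he.1
      rcases hsort with ⟨h1, h2⟩ | ⟨h1, h2⟩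
      · rw [topFun_mk (key_lt_of_horiz h1 h2), Finset.mem_coe, Finset.mem_sdiff]
        refine ⟨hw, ?_⟩
        simp only [hM, Finset.mem_filter, not_and]
        intro _ hmin
        have hle := hmin v hv h1
        have : w.2.val ≤ v.2.val := hle
        omega
      · exact absurd he.2 (not_isH_mk h2)
    · intro e he e' he' hee'
      rw [Finset.mem_coe, Finset.mem_filter] at he he'
      obtain ⟨v, w, rfl, hv, hw, hsort⟩ := edge_struct he.1
      obtain ⟨v', w', rfl, hv', hw', hsort'⟩ := edge_struct he'.1
      rcases hsort with ⟨h1, h2⟩ | ⟨h1, h2⟩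
      · rcases hsort' with ⟨h1', h2'⟩ | ⟨h1', h2'⟩
        · rw [topFun_mk (key_lt_of_horiz h1 h2), topFun_mk (key_lt_of_horiz h1' h2')] at hee'
          subst hee'
          have hveq : v = v' := by
            apply Prod.ext
            · rw [h1, h1']
            · exact Fin.ext (by omega)
          rw [hveq]
        · exact absurd he'.2 (not_isH_mk h2')
      · exact absurd he.2 (not_isH_mk h2)
  have hsd : (S \ M).card = S.card - M.card := Finset.card_sdiff_of_subset hMS
  have hMle : M.card ≤ S.card := Finset.card_le_card hMS
  omega

/-- Column counting: non-horizontal induced edges + number of occupied columns ≤ vertices. -/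
lemma col_count (S : Finset (Fin m × Fin n)) :
    ((inducedEdges (gridGraph m n) S).filter (fun e => ¬ isH e)).card
      + (S.image Prod.snd).card ≤ S.card := by
  set M : Finset (Fin m × Fin n) :=
    S.filter (fun v => ∀ w ∈ S, w.2 = v.2 → v.1 ≤ w.1) with hM
  have hMS : M ⊆ S := Finset.filter_subset _ _
  have hMcard : M.card = (S.image Prod.snd).card := by
    have hinj : Set.InjOn Prod.snd (M : Set (Fin m × Fin n)) := by
      intro v hv v' hv' hvv'
      simp only [hM, Finset.coe_filter, Set.mem_setOf_eq] at hv hv'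
      have h1 := hv.2 v' hv'.1 hvv'.symm
      have h2 := hv'.2 v hv.1 hvv'
      exact Prod.ext (le_antisymm h1 h2) hvv'
    have himg : M.image Prod.snd = S.image Prod.snd := by
      apply Finset.Subset.antisymm (Finset.image_subset_image hMS)
      intro a ha
      simp only [Finset.mem_image] at ha ⊢
      obtain ⟨v, hv, rfl⟩ := ha
      obtain ⟨u, hu, humin⟩ := Finset.exists_min_image (S.filter fun w => w.2 = v.2)
        Prod.fst ⟨v, Finset.mem_filter.2 ⟨hv, rfl⟩⟩
      obtain ⟨huS, hu1⟩ := Finset.mem_filter.1 hu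
      refine ⟨u, Finset.mem_filter.2 ⟨huS, ?_⟩, hu1⟩
      intro w hw hw1
      exact humin w (Finset.mem_filter.2 ⟨hw, by rw [hw1, hu1]⟩)
    rw [← himg, Finset.card_image_of_injOn hinj]
  have hE : ((inducedEdges (gridGraph m n) S).filter (fun e => ¬ isH e)).card
      ≤ (S \ M).card := by
    apply Finset.card_le_card_of_injOn topFun
    · intro e he
      rw [Finset.mem_coe, Finset.mem_filter] at he
      obtain ⟨v, w, rfl, hv, hw, hsort⟩ := edge_struct he.1
      rcases hsort with ⟨h1, h2⟩ | ⟨h1, h2⟩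
      · exact absurd (isH_mk h1) he.2
      · rw [topFun_mk (key_lt_of_vert h1 h2), Finset.mem_coe, Finset.mem_sdiff]
        refine ⟨hw, ?_⟩
        simp only [hM, Finset.mem_filter, not_and]
        intro _ hmin
        have hle := hmin v hv h1
        have : w.1.val ≤ v.1.val := hle
        omega
    · intro e he e' he' hee'
      rw [Finset.mem_coe, Finset.mem_filter] at he he'
      obtain ⟨v, w, rfl, hv, hw, hsort⟩ := edge_struct he.1
      obtain ⟨v', w', rfl, hv', hw', hsort'⟩ := edge_struct he'.1
      rcases hsort with ⟨h1, h2⟩ | ⟨h1, h2⟩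
      · exact absurd (isH_mk h1) he.2
      · rcases hsort' with ⟨h1', h2'⟩ | ⟨h1', h2'⟩
        · exact absurd (isH_mk h1') he'.2
        · rw [topFun_mk (key_lt_of_vert h1 h2), topFun_mk (key_lt_of_vert h1' h2')] at hee'
          subst hee'
          have hveq : v = v' := by
            apply Prod.ext
            · exact Fin.ext (by omega)
            · rw [h1, h1']
          rw [hveq]
  have hsd : (S \ M).card = S.card - M.card := Finset.card_sdiff_of_subset hMS
  have hMle : M.card ≤ S.card := Finset.card_le_card hMS
  omega

/-- Lower bound on the number of edges of the full grid. -/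
lemma full_edge_lower (hm : 2 ≤ m) (hn : 2 ≤ n) :
    m * (n - 1) + n * (m - 1) ≤ (inducedEdges (gridGraph m n) Finset.univ).card := by
  set E := inducedEdges (gridGraph m n) (Finset.univ : Finset (Fin m × Fin n)) with hEdef
  have hsplit : (E.filter isH).card + (E.filter (fun e => ¬ isH e)).card = E.card :=
    Finset.card_filter_add_card_filter_not _
  have hmemE : ∀ v w : Fin m × Fin n,
      ((v.1 = w.1 ∧ v.2.val + 1 = w.2.val) ∨ (v.2 = w.2 ∧ v.1.val + 1 = w.1.val)) →
      s(v, w) ∈ E := by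
    intro v w h
    rw [hEdef, inducedEdges, Finset.mem_filter]
    refine ⟨?_, fun _ _ => Finset.mem_univ _⟩
    rw [SimpleGraph.mem_edgeFinset, SimpleGraph.mem_edgeSet, grid_adj]
    exact Or.inl h
  have hH : m * (n - 1) ≤ (E.filter isH).card := by
    have := Finset.card_le_card_of_injOn
      (f := fun p : Fin m × Fin (n - 1) =>
        s(((p.1, ⟨p.2.val, by omega⟩) : Fin m × Fin n), (p.1, ⟨p.2.val + 1, by omega⟩)))
      (s := Finset.univ) (t := E.filter isH)
      (by
        intro p _
        rw [Finset.mem_coe, Finset.mem_filter]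
        constructor
        · exact hmemE _ _ (Or.inl ⟨rfl, rfl⟩)
        · exact isH_mk rfl)
      (by
        intro p _ q _ hpq
        rw [Sym2.eq_iff] at hpq
        rcases hpq with ⟨h1, h2⟩ | ⟨h1, h2⟩
        · injection h1 with e1 e2
          injection e2 with e2
          exact Prod.ext e1 (Fin.ext e2)
        · injection h1 with e1 e2
          injection h2 with e3 e4
          injection e2 with e2
          injection e4 with e4
          omega)
    simpa using this
  have hV : n * (m - 1) ≤ (E.filter (fun e => ¬ isH e)).card := by
    have := Finset.card_le_card_of_injOn
      (f := fun p : Fin n × Fin (m - 1) =>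
        s(((⟨p.2.val, by omega⟩, p.1) : Fin m × Fin n), (⟨p.2.val + 1, by omega⟩, p.1)))
      (s := Finset.univ) (t := E.filter (fun e => ¬ isH e))
      (by
        intro p _
        rw [Finset.mem_coe, Finset.mem_filter]
        constructor
        · exact hmemE _ _ (Or.inr ⟨rfl, rfl⟩)
        · exact not_isH_mk rfl)
      (by
        intro p _ q _ hpq
        rw [Sym2.eq_iff] at hpq
        rcases hpq with ⟨h1, h2⟩ | ⟨h1, h2⟩
        · injection h1 with e1 e2
          injection e1 with e1
          exact Prod.ext e2 (Fin.ext e1)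
        · injection h1 with e1 e2
          injection h2 with e3 e4
          injection e1 with e1
          injection e3 with e3
          omega)
    simpa [mul_comm] using this
  omega

end GridAux

/-- for `m, n ≥ 2` the grid graph `G_{m,n}` has the strict 1-density
property: every vertex-induced subgraph `H` (given by its vertex set `S`) that is
connected, has at least one edge, and is not all of `G_{m,n}` satisfies
`θ(H) < θ(G_{m,n})`. -/
theorem gridGraph_strict_density (m n : ℕ) (hm : 2 ≤ m) (hn : 2 ≤ n) :
    ∀ S : Finset (Fin m × Fin n),
      (inducedEdges (gridGraph m n) S).Nonempty →
      ((gridGraph m n).induce (↑S : Set (Fin m × Fin n))).Connected →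
      S ≠ Finset.univ →
      density (gridGraph m n) S < density (gridGraph m n) Finset.univ := by
  intro S hne _ hSne
  classical
  obtain ⟨e0, he0⟩ := hne
  obtain ⟨v0, w0, -, hv0, hw0, hsort0⟩ := GridAux.edge_struct he0
  have hv0w0 : v0 ≠ w0 := by
    rintro rfl
    rcases hsort0 with ⟨_, h⟩ | ⟨_, h⟩ <;> omega
  have hs2 : 2 ≤ S.card := Finset.one_lt_card.2 ⟨v0, hv0, w0, hw0, hv0w0⟩
  set s := S.card with hs
  set r := (S.image Prod.fst).card with hr
  set c := (S.image Prod.snd).card with hc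
  have hr1 : 1 ≤ r := Finset.card_pos.2 (Finset.image_nonempty.2 ⟨v0, hv0⟩)
  have hc1 : 1 ≤ c := Finset.card_pos.2 (Finset.image_nonempty.2 ⟨v0, hv0⟩)
  have hrm : r ≤ m := by
    calc r ≤ (Finset.univ : Finset (Fin m)).card := Finset.card_le_univ _
      _ = m := by simp
  have hcn : c ≤ n := by
    calc c ≤ (Finset.univ : Finset (Fin n)).card := Finset.card_le_univ _
      _ = n := by simp
  have hsrc : s ≤ r * c := by
    have hsub : S ⊆ (S.image Prod.fst) ×ˢ (S.image Prod.snd) := by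
      intro v hv
      rw [Finset.mem_product]
      exact ⟨Finset.mem_image_of_mem _ hv, Finset.mem_image_of_mem _ hv⟩
    calc s ≤ ((S.image Prod.fst) ×ˢ (S.image Prod.snd)).card := Finset.card_le_card hsub
      _ = r * c := Finset.card_product _ _
  have hsmn : s < m * n := by
    have : S ⊂ Finset.univ := Finset.ssubset_univ_iff.2 hSne
    have := Finset.card_lt_card this
    simpa using this
  -- edge count bound
  set E := inducedEdges (gridGraph m n) S with hE
  have hsplit : (E.filter GridAux.isH).card
      + (E.filter (fun e => ¬ GridAux.isH e)).card = E.card :=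
    Finset.card_filter_add_card_filter_not _
  have hrow := GridAux.row_count S
  have hcol := GridAux.col_count S
  rw [← hE] at hrow hcol
  have hEbound : E.card + r + c ≤ 2 * s := by omega
  -- full grid edge count
  have hfull := GridAux.full_edge_lower hm hn
  -- pass to integers
  have hZ : (E.card : ℤ) * ((m : ℤ) * n - 1)
      < ((inducedEdges (gridGraph m n) Finset.univ).card : ℤ) * ((s : ℤ) - 1) := by
    have key := GridAux.key_ineq (m : ℤ) (n : ℤ) (r : ℤ) (c : ℤ) (s : ℤ)
      (by exact_mod_cast hm) (by exact_mod_cast hn) (by exact_mod_cast hr1)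
      (by exact_mod_cast hc1) (by exact_mod_cast hrm) (by exact_mod_cast hcn)
      (by exact_mod_cast hs2) (by exact_mod_cast hsrc) (by exact_mod_cast hsmn)
    have hE1 : (E.card : ℤ) ≤ 2 * (s : ℤ) - r - c := by
      have : (E.card : ℤ) + r + c ≤ 2 * s := by exact_mod_cast hEbound
      linarith
    have hfull' : 2 * (m : ℤ) * n - m - n
        ≤ ((inducedEdges (gridGraph m n) Finset.univ).card : ℤ) := by
      have : ((m * (n - 1) + n * (m - 1) : ℕ) : ℤ)
          ≤ ((inducedEdges (gridGraph m n) Finset.univ).card : ℤ) := by exact_mod_cast hfull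
      have hmn : ((m * (n - 1) + n * (m - 1) : ℕ) : ℤ) = 2 * (m : ℤ) * n - m - n := by
        push_cast [Nat.cast_sub (by omega : 1 ≤ n), Nat.cast_sub (by omega : 1 ≤ m)]
        ring
      linarith [hmn ▸ this]
    have hmn1 : (0 : ℤ) < (m : ℤ) * n - 1 := by
      have : (4 : ℤ) ≤ (m : ℤ) * n := by
        have : (2 : ℤ) ≤ m := by exact_mod_cast hm
        have : (2 : ℤ) ≤ n := by exact_mod_cast hn
        nlinarith [show (2:ℤ) ≤ m from by exact_mod_cast hm, show (2:ℤ) ≤ n from by exact_mod_cast hn]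
      linarith
    have hs1 : (0 : ℤ) < (s : ℤ) - 1 := by
      have : (2 : ℤ) ≤ s := by exact_mod_cast hs2
      linarith
    calc (E.card : ℤ) * ((m : ℤ) * n - 1)
        ≤ (2 * (s : ℤ) - r - c) * ((m : ℤ) * n - 1) :=
          mul_le_mul_of_nonneg_right hE1 (by linarith)
      _ < (2 * (m : ℤ) * n - m - n) * ((s : ℤ) - 1) := by
          have := key
          linarith [key]
      _ ≤ ((inducedEdges (gridGraph m n) Finset.univ).card : ℤ) * ((s : ℤ) - 1) :=
          mul_le_mul_of_nonneg_right hfull' (by linarith)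
  -- conclude in ℝ
  have hcardu : ((Finset.univ : Finset (Fin m × Fin n)).card : ℝ) = (m : ℝ) * n := by
    simp [Fintype.card_prod]
  rw [density, density, hcardu]
  have hs1R : (0 : ℝ) < (s : ℝ) - 1 := by
    have : (2 : ℝ) ≤ s := by exact_mod_cast hs2
    linarith
  have hmn1R : (0 : ℝ) < (m : ℝ) * n - 1 := by
    have h2m : (2 : ℝ) ≤ m := by exact_mod_cast hm
    have h2n : (2 : ℝ) ≤ n := by exact_mod_cast hn
    nlinarith
  rw [div_lt_div_iff₀ hs1R hmn1R, ← hE]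
  exact_mod_cast hZ
end
end

section
/- Let G be a finite connected simple graph and let H₀ be a minimal 1-densest subgraph of G with H₀ ≠ G. Then H₀ has the restriction property with respect to G: for every fair tree γ of G, the set γ ∩ E(H₀) of edges of γ that join two vertices of H₀ is a spanning tree of H₀ (a connected acyclic subgraph of H₀ containing all vertices of H₀). -/
open scoped Classical

set_option maxHeartbeats 1000000
set_option linter.unusedSectionVars false
set_option linter.unusedVariables false
set_option linter.unreachableTactic false
set_option linter.unusedTactic false

noncomputable section

variable {V : Type*} [Fintype V] [DecidableEq V]

/-- `T` is (the edge set of) a spanning tree of the vertex-induced subgraph of `G`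
on the vertex set `S`: its edges are edges of `G` with both endpoints in `S`,
it is acyclic, and every two vertices of `S` are joined by a path using edges of `T`. -/
def IsSpanningTreeOn (G : SimpleGraph V) (S : Finset V) (T : Finset (Sym2 V)) : Prop :=
  (↑T : Set (Sym2 V)) ⊆ G.edgeSet ∧ (∀ e ∈ T, ∀ v ∈ e, v ∈ S) ∧
    (SimpleGraph.fromEdgeSet (↑T : Set (Sym2 V))).IsAcyclic ∧
    ∀ u ∈ S, ∀ w ∈ S, (SimpleGraph.fromEdgeSet (↑T : Set (Sym2 V))).Reachable u w

/-- A probability mass function on the spanning trees of the induced subgraph of `G` on `S`. -/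
structure TreePMFOn (G : SimpleGraph V) (S : Finset V) where
  toFun : Finset (Sym2 V) → ℝ
  nonneg : ∀ T, 0 ≤ toFun T
  supp : ∀ T, toFun T ≠ 0 → IsSpanningTreeOn G S T
  sum_one : ∑ T : Finset (Sym2 V), toFun T = 1

/-- Edge probability `η_μ(e)`. -/
def edgeProbOn {G : SimpleGraph V} {S : Finset V} (μ : TreePMFOn G S) (e : Sym2 V) : ℝ :=
  ∑ T : Finset (Sym2 V), if e ∈ T then μ.toFun T else 0

/-- Variance of the edge probabilities of `μ` over the edges within `S`. -/
def edgeVarOn {G : SimpleGraph V} {S : Finset V} (μ : TreePMFOn G S) : ℝ :=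
  (∑ e ∈ inducedEdges G S, (edgeProbOn μ e) ^ 2) / ((inducedEdges G S).card : ℝ) -
    ((∑ e ∈ inducedEdges G S, edgeProbOn μ e) / ((inducedEdges G S).card : ℝ)) ^ 2

/-- A pmf is fair if it minimizes the variance of the edge probabilities. -/
def IsFairOn {G : SimpleGraph V} {S : Finset V} (μ : TreePMFOn G S) : Prop :=
  ∀ ν : TreePMFOn G S, edgeVarOn μ ≤ edgeVarOn ν

/-- A fair tree: a spanning tree in the support of some fair pmf. -/
def IsFairTreeOn (G : SimpleGraph V) (S : Finset V) (T : Finset (Sym2 V)) : Prop :=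
  ∃ μ : TreePMFOn G S, IsFairOn μ ∧ μ.toFun T ≠ 0

/-- `S` induces a member of `H(G)`: connected, vertex-induced, with at least one edge. -/
def InH (G : SimpleGraph V) (S : Finset V) : Prop :=
  (inducedEdges G S).Nonempty ∧ (G.induce (↑S : Set V)).Connected

/-- `S` induces a 1-densest subgraph of `G`. -/
def IsDensest (G : SimpleGraph V) (S : Finset V) : Prop :=
  InH G S ∧ ∀ S' : Finset V, InH G S' → density G S' ≤ density G S

/-- `S` induces a minimal 1-densest subgraph of `G`. -/
def IsMinimalDensest (G : SimpleGraph V) (S : Finset V) : Prop :=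
  IsDensest G S ∧ ∀ S' : Finset V, S' ⊆ S → S' ≠ S → ¬ IsDensest G S'

/-- The induced subgraph on `S` is homogeneous: some pmf on its spanning trees
has constant edge probabilities. -/
def IsHomogeneousOn (G : SimpleGraph V) (S : Finset V) : Prop :=
  ∃ μ : TreePMFOn G S, ∃ c : ℝ, ∀ e ∈ inducedEdges G S, edgeProbOn μ e = c

/-- The induced subgraph on `S` has the strict 1-density property. -/
def StrictDensityOn (G : SimpleGraph V) (S : Finset V) : Prop :=
  ∀ S' : Finset V, S' ⊆ S → InH G S' → S' ≠ S → density G S' < density G S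


namespace FairAux

open SimpleGraph

abbrev FG (B : Finset (Sym2 V)) : SimpleGraph V := SimpleGraph.fromEdgeSet (↑B : Set (Sym2 V))

lemma fg_adj {B : Finset (Sym2 V)} {v w : V} : (FG B).Adj v w ↔ s(v,w) ∈ B ∧ v ≠ w := by
  rw [SimpleGraph.fromEdgeSet_adj]; simp

lemma fg_mono {B C : Finset (Sym2 V)} (h : B ⊆ C) : FG B ≤ FG C :=
  SimpleGraph.fromEdgeSet_mono (by exact_mod_cast h)

lemma isAcyclic_anti {G H : SimpleGraph V} (hle : G ≤ H) (hH : H.IsAcyclic) : G.IsAcyclic := by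
  intro v c hc
  exact hH (c.mapLe hle) (hc.mapLe hle)

lemma reach_trans_adj {X Y : SimpleGraph V} (h : ∀ p q, X.Adj p q → Y.Reachable p q)
    {v w : V} (hr : X.Reachable v w) : Y.Reachable v w := by
  obtain ⟨p⟩ := hr
  induction p with
  | nil => exact Reachable.refl _
  | cons ha _ ih => exact (h _ _ ha).trans ih

lemma reach_erase_cases {B : Finset (Sym2 V)} {a b : V}
    {p q : V} (h : (FG B).Reachable p q) :
    (FG (B.erase s(a,b))).Reachable p q ∨
      ((FG (B.erase s(a,b))).Reachable p a ∧ (FG (B.erase s(a,b))).Reachable q b) ∨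
      ((FG (B.erase s(a,b))).Reachable p b ∧ (FG (B.erase s(a,b))).Reachable q a) := by
  set R := FG (B.erase s(a,b)) with hR
  obtain ⟨w⟩ := h
  induction w with
  | nil => exact Or.inl (Reachable.refl _)
  | @cons u x y ha w ih =>
    by_cases hd : s(u,x) = s(a,b)
    · rw [Sym2.eq_iff] at hd
      rcases hd with ⟨rfl, rfl⟩ | ⟨rfl, rfl⟩
      · rcases ih with h1 | ⟨h2, h3⟩ | ⟨h2, h3⟩
        · exact Or.inr (Or.inl ⟨Reachable.refl _, h1.symm⟩)
        · exact Or.inr (Or.inl ⟨Reachable.refl _, h3⟩)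
        · exact Or.inl h3.symm
      · rcases ih with h1 | ⟨h2, h3⟩ | ⟨h2, h3⟩
        · exact Or.inr (Or.inr ⟨Reachable.refl _, h1.symm⟩)
        · exact Or.inl h3.symm
        · exact Or.inl (h3.trans h2).symm
    · have hadj : R.Adj u x := by
        rw [hR, fg_adj]
        exact ⟨Finset.mem_erase.2 ⟨hd, (fg_adj.1 ha).1⟩, (fg_adj.1 ha).2⟩
      rcases ih with h1 | ⟨h2, h3⟩ | ⟨h2, h3⟩
      · exact Or.inl (hadj.reachable.trans h1)
      · exact Or.inr (Or.inl ⟨hadj.reachable.trans h2, h3⟩)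
      · exact Or.inr (Or.inr ⟨hadj.reachable.trans h2, h3⟩)

lemma walk_edges_mem {B : Finset (Sym2 V)} {u w : V} (p : (FG B).Walk u w)
    {d : Sym2 V} (hd : d ∈ p.edges) : d ∈ B ∧ ¬ d.IsDiag := by
  have h1 := p.edges_subset_edgeSet hd
  rw [SimpleGraph.edgeSet_fromEdgeSet] at h1
  exact ⟨by exact_mod_cast h1.1, h1.2⟩

lemma reach_of_edges_mem {B C : Finset (Sym2 V)} {u w : V} (p : (FG B).Walk u w)
    (h : ∀ d ∈ p.edges, d ∈ C) : (FG C).Reachable u w := by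
  refine ⟨p.transfer (FG C) fun e he => ?_⟩
  rw [SimpleGraph.edgeSet_fromEdgeSet]
  exact ⟨by exact_mod_cast h e he, (walk_edges_mem p he).2⟩

lemma path_split {B : Finset (Sym2 V)} {u w : V} (p : (FG B).Walk u w)
    (hnd : p.edges.Nodup) {a b : V} (hf : s(a,b) ∈ p.edges) :
    ((FG (B.erase s(a,b))).Reachable u a ∧ (FG (B.erase s(a,b))).Reachable w b) ∨
      ((FG (B.erase s(a,b))).Reachable u b ∧ (FG (B.erase s(a,b))).Reachable w a) := by
  set R := FG (B.erase s(a,b)) with hR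
  induction p with
  | nil => simp at hf
  | @cons u x y ha q ih =>
    rw [Walk.edges_cons, List.nodup_cons] at hnd
    rw [Walk.edges_cons, List.mem_cons] at hf
    rcases hf with hf | hf
    · have hq : R.Reachable x y := by
        apply reach_of_edges_mem q
        intro d hd
        refine Finset.mem_erase.2 ⟨?_, (walk_edges_mem q hd).1⟩
        rintro rfl
        exact hnd.1 (hf ▸ hd)
      rw [Sym2.eq_iff] at hf
      rcases hf with ⟨rfl, rfl⟩ | ⟨rfl, rfl⟩
      · exact Or.inl ⟨Reachable.refl _, hq.symm⟩
      · exact Or.inr ⟨Reachable.refl _, hq.symm⟩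
    · have hadj : R.Adj u x := by
        rw [hR, fg_adj]
        refine ⟨Finset.mem_erase.2 ⟨?_, (fg_adj.1 ha).1⟩, (fg_adj.1 ha).2⟩
        intro heq
        exact hnd.1 (by rw [heq]; exact hf)
      rcases ih hnd.2 hf with ⟨h1, h2⟩ | ⟨h1, h2⟩
      · exact Or.inl ⟨hadj.reachable.trans h1, h2⟩
      · exact Or.inr ⟨hadj.reachable.trans h1, h2⟩

lemma reach_filter {B : Finset (Sym2 V)} {W : Finset V}
    (hcl : ∀ p q, (FG B).Adj p q → p ∈ W → q ∈ W) {v w : V} (hv : v ∈ W)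
    (h : (FG B).Reachable v w) :
    (FG (B.filter (fun d => ∀ z ∈ d, z ∈ W))).Reachable v w ∧ w ∈ W := by
  obtain ⟨p⟩ := h
  induction p with
  | nil => exact ⟨Reachable.refl _, hv⟩
  | @cons u x y ha q ih =>
    have hx : x ∈ W := hcl u x ha hv
    have hadj : (FG (B.filter (fun d => ∀ z ∈ d, z ∈ W))).Adj u x := by
      rw [fg_adj]
      refine ⟨Finset.mem_filter.2 ⟨(fg_adj.1 ha).1, ?_⟩, (fg_adj.1 ha).2⟩
      intro z hz
      rcases Sym2.mem_iff.1 hz with rfl | rfl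
      · exact hv
      · exact hx
    obtain ⟨h1, h2⟩ := ih hx
    exact ⟨hadj.reachable.trans h1, h2⟩

lemma not_reach_erase {B : Finset (Sym2 V)} {a b : V} (hac : (FG B).IsAcyclic)
    (hf : s(a,b) ∈ B) (hab : a ≠ b) : ¬ (FG (B.erase s(a,b))).Reachable a b := by
  have hadj : (FG B).Adj a b := fg_adj.2 ⟨hf, hab⟩
  have hbr : (FG B).IsBridge s(a,b) :=
    (isAcyclic_iff_forall_edge_isBridge.1 hac) ((SimpleGraph.mem_edgeSet _).2 hadj)
  rw [isBridge_iff] at hbr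
  intro hr
  refine hbr (hr.mono ?_)
  intro p q hpq
  rw [fg_adj] at hpq
  constructor
  · exact fg_adj.2 ⟨Finset.mem_of_mem_erase hpq.1, hpq.2⟩
  · rw [SimpleGraph.fromEdgeSet_adj]
    rintro ⟨hmem, -⟩
    exact (Finset.ne_of_mem_erase hpq.1) (Set.mem_singleton_iff.1 hmem)

def ccount (B : Finset (Sym2 V)) : ℕ :=
  (Finset.univ.image (fun v => (FG B).connectedComponentMk v)).card

lemma ccount_empty : ccount (∅ : Finset (Sym2 V)) = Fintype.card V := by
  rw [ccount, Finset.card_image_of_injective]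
  · exact Finset.card_univ
  · intro p q hpq
    have : (FG (∅ : Finset (Sym2 V))) = (⊥ : SimpleGraph V) := by
      simp [FG]
    rw [this] at hpq
    simpa using (SimpleGraph.ConnectedComponent.eq.1 hpq)

lemma ccount_erase {B : Finset (Sym2 V)} {a b : V} (hac : (FG B).IsAcyclic)
    (hf : s(a,b) ∈ B) (hab : a ≠ b) :
    ccount (B.erase s(a,b)) = ccount B + 1 := by
  set B' := B.erase s(a,b) with hB'
  have hle : FG B' ≤ FG B := fg_mono (Finset.erase_subset _ _)
  set mk : V → (FG B).ConnectedComponent := fun v => (FG B).connectedComponentMk v with hmk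
  set mk' : V → (FG B').ConnectedComponent := fun v => (FG B').connectedComponentMk v with hmk'
  set h : (FG B').ConnectedComponent → (FG B).ConnectedComponent :=
    fun c => c.map (SimpleGraph.Hom.ofLE hle) with hh
  have hcomm : ∀ v, h (mk' v) = mk v := fun v => SimpleGraph.ConnectedComponent.map_mk _ _
  have hnr : ¬ (FG B').Reachable a b := not_reach_erase hac hf hab
  have hmkne : mk' a ≠ mk' b := fun hEq => hnr (SimpleGraph.ConnectedComponent.eq.1 hEq)
  have hmkab : mk a = mk b :=
    SimpleGraph.ConnectedComponent.eq.2 (fg_adj.2 ⟨hf, hab⟩).reachable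
  set I' := Finset.univ.image mk' with hI'
  set J := I'.erase (mk' a) with hJ
  have hbJ : mk' b ∈ J :=
    Finset.mem_erase.2 ⟨fun hEq => hmkne hEq.symm, Finset.mem_image_of_mem _ (Finset.mem_univ _)⟩
  have haI' : mk' a ∈ I' := Finset.mem_image_of_mem _ (Finset.mem_univ _)
  have hIJ : Finset.univ.image mk = J.image h := by
    have h1 : Finset.univ.image mk = I'.image h := by
      rw [hI', Finset.image_image]
      exact Finset.image_congr (fun v _ => (hcomm v).symm)
    rw [h1, ← Finset.insert_erase haI', Finset.image_insert, ← hJ]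
    apply Finset.insert_eq_self.2
    have : h (mk' a) = h (mk' b) := by rw [hcomm, hcomm, hmkab]
    rw [this]
    exact Finset.mem_image_of_mem _ hbJ
  have hinj : Set.InjOn h ↑J := by
    intro c₁ hc₁ c₂ hc₂ hEq
    obtain ⟨p, -, rfl⟩ := Finset.mem_image.1 (Finset.mem_of_mem_erase (by exact_mod_cast hc₁))
    obtain ⟨q, -, rfl⟩ := Finset.mem_image.1 (Finset.mem_of_mem_erase (by exact_mod_cast hc₂))
    rw [hcomm, hcomm] at hEq
    have hr : (FG B).Reachable p q := SimpleGraph.ConnectedComponent.eq.1 hEq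
    rcases reach_erase_cases (a := a) (b := b) hr with h1 | ⟨h1, -⟩ | ⟨-, h1⟩
    · exact SimpleGraph.ConnectedComponent.eq.2 h1
    · exact absurd (SimpleGraph.ConnectedComponent.eq.2 h1)
        (Finset.mem_erase.1 (by exact_mod_cast hc₁)).1
    · exact absurd (SimpleGraph.ConnectedComponent.eq.2 h1)
        (Finset.mem_erase.1 (by exact_mod_cast hc₂)).1
  have hcard : ccount B = J.card := by
    rw [ccount, hIJ, Finset.card_image_of_injOn hinj]
  have hJcard : J.card = I'.card - 1 := by rw [hJ, Finset.card_erase_of_mem haI']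
  have hI'pos : 1 ≤ I'.card := Finset.card_pos.2 ⟨mk' a, haI'⟩
  have : ccount B' = I'.card := rfl
  omega

lemma forest_ccount (B : Finset (Sym2 V)) (hnl : ∀ d ∈ B, ¬ d.IsDiag)
    (hac : (FG B).IsAcyclic) : ccount B + B.card = Fintype.card V := by
  induction B using Finset.strongInductionOn with
  | _ B ih =>
    rcases Finset.eq_empty_or_nonempty B with rfl | ⟨f, hf⟩
    · simpa using ccount_empty
    · obtain ⟨⟨a, b⟩, rfl⟩ := f.exists_rep
      have hab : a ≠ b := fun hEq => hnl _ hf (by simp [hEq])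
      have herase := ih (B.erase s(a,b)) (Finset.erase_ssubset hf)
        (fun d hd => hnl d (Finset.mem_of_mem_erase hd))
        (isAcyclic_anti (fg_mono (Finset.erase_subset _ _)) hac)
      have hc := ccount_erase hac hf hab
      have hcard : (B.erase s(a,b)).card + 1 = B.card := Finset.card_erase_add_one hf
      omega

lemma outside_reach {B : Finset (Sym2 V)} {W : Finset V}
    (hW : ∀ d ∈ B, ∀ z ∈ d, z ∈ W) {v u : V} (hv : v ∉ W)
    (h : (FG B).Reachable v u) : v = u := by
  obtain ⟨p⟩ := h
  cases p with
  | nil => rfl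
  | cons ha q =>
    exfalso
    have := (fg_adj.1 ha).1
    exact hv (hW _ this _ (Sym2.mem_mk_left _ _))

lemma ccount_within {B : Finset (Sym2 V)} {W : Finset V}
    (hW : ∀ d ∈ B, ∀ z ∈ d, z ∈ W) :
    ccount B = (Fintype.card V - W.card) +
      (W.image (fun v => (FG B).connectedComponentMk v)).card := by
  set mk : V → (FG B).ConnectedComponent := fun v => (FG B).connectedComponentMk v with hmk
  have hsplit : (Finset.univ : Finset V) = W ∪ Wᶜ := by
    rw [Finset.union_compl]
  have himg : Finset.univ.image mk = W.image mk ∪ Wᶜ.image mk := by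
    rw [hsplit, Finset.image_union]
  have hdisj : Disjoint (W.image mk) (Wᶜ.image mk) := by
    rw [Finset.disjoint_left]
    rintro c hc1 hc2
    obtain ⟨w, hw, rfl⟩ := Finset.mem_image.1 hc1
    obtain ⟨v, hv, hEq⟩ := Finset.mem_image.1 hc2
    rw [Finset.mem_compl] at hv
    have : v = w := outside_reach hW hv (SimpleGraph.ConnectedComponent.eq.1 hEq)
    exact hv (this ▸ hw)
  have hinj : Set.InjOn mk ↑(Wᶜ) := by
    intro p hp q hq hEq
    exact outside_reach hW (Finset.mem_compl.1 (by exact_mod_cast hp))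
      (SimpleGraph.ConnectedComponent.eq.1 hEq)
  rw [ccount, himg, Finset.card_union_of_disjoint hdisj, Finset.card_image_of_injOn hinj,
    Finset.card_compl]
  omega

lemma forest_card_le {B : Finset (Sym2 V)} {W : Finset V}
    (hnl : ∀ d ∈ B, ¬ d.IsDiag) (hac : (FG B).IsAcyclic)
    (hW : ∀ d ∈ B, ∀ z ∈ d, z ∈ W) (hWne : W.Nonempty) :
    B.card ≤ W.card - 1 ∧ B.card + 1 ≤ W.card := by
  have h1 := forest_ccount B hnl hac
  have h2 := ccount_within hW
  have h3 : 1 ≤ (W.image (fun v => (FG B).connectedComponentMk v)).card :=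
    Finset.card_pos.2 ((Finset.image_nonempty).2 hWne)
  have h4 : W.card ≤ Fintype.card V := by
    simpa using Finset.card_le_card (Finset.subset_univ W)
  omega

lemma tree_card {B : Finset (Sym2 V)} {W : Finset V}
    (hnl : ∀ d ∈ B, ¬ d.IsDiag) (hac : (FG B).IsAcyclic)
    (hW : ∀ d ∈ B, ∀ z ∈ d, z ∈ W) (hWne : W.Nonempty)
    (hreach : ∀ u ∈ W, ∀ w ∈ W, (FG B).Reachable u w) :
    B.card + 1 = W.card := by
  have h1 := forest_ccount B hnl hac
  have h2 := ccount_within hW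
  obtain ⟨w₀, hw₀⟩ := hWne
  have h3 : (W.image (fun v => (FG B).connectedComponentMk v)).card = 1 := by
    rw [Finset.card_eq_one]
    refine ⟨(FG B).connectedComponentMk w₀, ?_⟩
    apply Finset.eq_singleton_iff_unique_mem.2
    refine ⟨Finset.mem_image_of_mem _ hw₀, ?_⟩
    rintro c hc
    obtain ⟨v, hv, rfl⟩ := Finset.mem_image.1 hc
    exact SimpleGraph.ConnectedComponent.eq.2 (hreach v hv w₀ hw₀)
  have h4 : W.card ≤ Fintype.card V := by
    simpa using Finset.card_le_card (Finset.subset_univ W)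
  omega

lemma reach_of_card {B : Finset (Sym2 V)} {W : Finset V}
    (hnl : ∀ d ∈ B, ¬ d.IsDiag) (hac : (FG B).IsAcyclic)
    (hW : ∀ d ∈ B, ∀ z ∈ d, z ∈ W)
    (hcard : B.card + 1 = W.card) :
    ∀ u ∈ W, ∀ w ∈ W, (FG B).Reachable u w := by
  have h1 := forest_ccount B hnl hac
  have h2 := ccount_within hW
  have h4 : W.card ≤ Fintype.card V := by
    simpa using Finset.card_le_card (Finset.subset_univ W)
  have h3 : (W.image (fun v => (FG B).connectedComponentMk v)).card = 1 := by omega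
  obtain ⟨c, hc⟩ := Finset.card_eq_one.1 h3
  intro u hu w hw
  have hu' : (FG B).connectedComponentMk u ∈ W.image _ := Finset.mem_image_of_mem _ hu
  have hw' : (FG B).connectedComponentMk w ∈ W.image _ := Finset.mem_image_of_mem _ hw
  rw [hc, Finset.mem_singleton] at hu' hw'
  exact SimpleGraph.ConnectedComponent.eq.1 (hu'.trans hw'.symm)

lemma inducedEdges_univ (G : SimpleGraph V) :
    inducedEdges G Finset.univ = G.edgeFinset := by
  rw [inducedEdges, Finset.filter_true_of_mem]
  intro e he v hv
  exact Finset.mem_univ v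

lemma mem_inducedEdges {G : SimpleGraph V} {S : Finset V} {d : Sym2 V} :
    d ∈ inducedEdges G S ↔ d ∈ G.edgeFinset ∧ ∀ z ∈ d, z ∈ S := by
  rw [inducedEdges]; exact Finset.mem_filter

lemma edgeProb_nonneg {G : SimpleGraph V} {S : Finset V} (μ : TreePMFOn G S) (e : Sym2 V) :
    0 ≤ edgeProbOn μ e := by
  apply Finset.sum_nonneg
  intro T _
  by_cases h : e ∈ T <;> simp [h, μ.nonneg T]

lemma sum_edgeProb {G : SimpleGraph V} {S : Finset V} (μ : TreePMFOn G S)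
    (B : Finset (Sym2 V)) :
    ∑ e ∈ B, edgeProbOn μ e = ∑ T : Finset (Sym2 V), μ.toFun T * ((B ∩ T).card : ℝ) := by
  simp only [edgeProbOn]
  rw [Finset.sum_comm]
  apply Finset.sum_congr rfl
  intro T _
  rw [← Finset.sum_filter, Finset.filter_mem_eq_inter, Finset.sum_const, nsmul_eq_mul, mul_comm]

lemma fair_swap {G : SimpleGraph V} {μ : TreePMFOn G Finset.univ} (hfair : IsFairOn μ)
    {γ : Finset (Sym2 V)} (hγ : μ.toFun γ ≠ 0)
    {e f : Sym2 V} (he : e ∈ inducedEdges G Finset.univ) (hf : f ∈ inducedEdges G Finset.univ)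
    (heγ : e ∉ γ) (hfγ : f ∈ γ) (hγP : γ ⊆ inducedEdges G Finset.univ)
    (hst : IsSpanningTreeOn G Finset.univ (insert e (γ.erase f))) :
    edgeProbOn μ f ≤ edgeProbOn μ e := by
  by_contra hlt
  push_neg at hlt
  have hμγ : 0 < μ.toFun γ := lt_of_le_of_ne (μ.nonneg γ) (Ne.symm hγ)
  obtain ⟨ε, hεpos, hεle, hεleγ⟩ :
      ∃ ε : ℝ, 0 < ε ∧ ε ≤ (edgeProbOn μ f - edgeProbOn μ e)/2 ∧ ε ≤ μ.toFun γ := by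
    refine ⟨min (μ.toFun γ) ((edgeProbOn μ f - edgeProbOn μ e)/2),
      lt_min hμγ (by linarith), min_le_right _ _, min_le_left _ _⟩
  set γ' : Finset (Sym2 V) := insert e (γ.erase f) with hγ'def
  have hef : e ≠ f := fun h => heγ (h ▸ hfγ)
  have heγ' : e ∈ γ' := Finset.mem_insert_self _ _
  have hfγ' : f ∉ γ' := by
    rw [hγ'def, Finset.mem_insert]
    rintro (h | h)
    · exact hef h.symm
    · exact Finset.notMem_erase _ _ h
  have hγne : γ' ≠ γ := fun h => heγ (h ▸ heγ')
  have hmem_same : ∀ d, d ≠ e → d ≠ f → (d ∈ γ' ↔ d ∈ γ) := by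
    intro d hde hdf
    rw [hγ'def, Finset.mem_insert, Finset.mem_erase]
    constructor
    · rintro (h | h)
      · exact absurd h hde
      · exact h.2
    · intro h
      exact Or.inr ⟨hdf, h⟩
  have hγ'P : γ' ⊆ inducedEdges G Finset.univ := by
    intro d hd
    rw [hγ'def, Finset.mem_insert] at hd
    rcases hd with rfl | hd
    · exact he
    · exact hγP (Finset.mem_of_mem_erase hd)
  set νf : Finset (Sym2 V) → ℝ :=
    fun T => μ.toFun T + (if T = γ' then ε else 0) - (if T = γ then ε else 0) with hνf
  have hνfγ : νf γ = μ.toFun γ - ε := by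
    simp [hνf, Ne.symm hγne]
  have hνfγ' : νf γ' = μ.toFun γ' + ε := by
    simp [hνf, hγne]
  have hνfo : ∀ T, T ≠ γ → T ≠ γ' → νf T = μ.toFun T := by
    intro T h1 h2
    simp [hνf, h1, h2]
  have hnn : ∀ T, 0 ≤ νf T := by
    intro T
    by_cases h1 : T = γ
    · subst h1; rw [hνfγ]; linarith
    · by_cases h2 : T = γ'
      · subst h2; rw [hνfγ']; have := μ.nonneg γ'; linarith
      · rw [hνfo T h1 h2]; exact μ.nonneg T
  have hsupp : ∀ T, νf T ≠ 0 → IsSpanningTreeOn G Finset.univ T := by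
    intro T hT
    by_cases h1 : T = γ
    · subst h1; exact μ.supp _ hγ
    · by_cases h2 : T = γ'
      · subst h2; exact hst
      · rw [hνfo T h1 h2] at hT; exact μ.supp T hT
  have hsum1 : ∑ T : Finset (Sym2 V), νf T = 1 := by
    rw [hνf]
    rw [Finset.sum_sub_distrib, Finset.sum_add_distrib]
    rw [Finset.sum_ite_eq' Finset.univ γ' (fun _ => ε),
      Finset.sum_ite_eq' Finset.univ γ (fun _ => ε)]
    simp [μ.sum_one]
  set ν : TreePMFOn G Finset.univ := ⟨νf, hnn, hsupp, hsum1⟩ with hν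
  have hη : ∀ d, edgeProbOn ν d
      = edgeProbOn μ d + (if d ∈ γ' then ε else 0) - (if d ∈ γ then ε else 0) := by
    intro d
    have h1 : ∀ T : Finset (Sym2 V),
        (if d ∈ T then νf T else 0)
          = (if d ∈ T then μ.toFun T else 0)
            + (if T = γ' then (if d ∈ γ' then ε else 0) else 0)
            - (if T = γ then (if d ∈ γ then ε else 0) else 0) := by
      intro T
      by_cases h2 : T = γ'
      · subst h2
        by_cases hdT : d ∈ γ'
        · simp [hdT, hγne, hνfγ'] <;> ring
        · simp [hdT, hγne]
      · by_cases h3 : T = γ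
        · subst h3
          by_cases hdT : d ∈ T
          · simp [hdT, h2, hνfγ] <;> ring
          · simp [hdT, h2]
        · by_cases hdT : d ∈ T
          · simp [hdT, h2, h3, hνfo T h3 h2]
          · simp [hdT, h2, h3]
    have h2 : edgeProbOn ν d = ∑ T : Finset (Sym2 V), (if d ∈ T then νf T else 0) := rfl
    rw [h2, Finset.sum_congr rfl (fun T _ => h1 T), Finset.sum_sub_distrib,
      Finset.sum_add_distrib,
      Finset.sum_ite_eq' Finset.univ γ' (fun _ => (if d ∈ γ' then ε else 0)),
      Finset.sum_ite_eq' Finset.univ γ (fun _ => (if d ∈ γ then ε else 0))]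
    simp only [Finset.mem_univ, if_pos]
    rfl
  have hηe : edgeProbOn ν e = edgeProbOn μ e + ε := by
    rw [hη e, if_pos heγ', if_neg heγ]; ring
  have hηf : edgeProbOn ν f = edgeProbOn μ f - ε := by
    rw [hη f, if_neg hfγ', if_pos hfγ]; ring
  have hηo : ∀ d, d ≠ e → d ≠ f → edgeProbOn ν d = edgeProbOn μ d := by
    intro d h1 h2
    rw [hη d]
    by_cases h3 : d ∈ γ
    · rw [if_pos h3, if_pos ((hmem_same d h1 h2).2 h3)]; ring
    · rw [if_neg h3, if_neg (fun hc => h3 ((hmem_same d h1 h2).1 hc))]; ring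
  set P := inducedEdges G Finset.univ with hP
  have hsum_eq : ∑ d ∈ P, edgeProbOn ν d = ∑ d ∈ P, edgeProbOn μ d := by
    have key : ∑ d ∈ P, (edgeProbOn ν d - edgeProbOn μ d) = 0 := by
      have hsub : ({e, f} : Finset (Sym2 V)) ⊆ P := by
        intro d hd
        rcases Finset.mem_insert.1 hd with rfl | hd
        · exact he
        · rw [Finset.mem_singleton.1 hd]; exact hf
      rw [← Finset.sum_subset hsub]
      · rw [Finset.sum_pair hef, hηe, hηf]; ring
      · intro d hd hd2
        rw [Finset.mem_insert, Finset.mem_singleton] at hd2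
        push_neg at hd2
        rw [hηo d hd2.1 hd2.2]; ring
    have := Finset.sum_sub_distrib (s := P)
      (f := fun d => edgeProbOn ν d) (g := fun d => edgeProbOn μ d)
    rw [this] at key
    linarith
  have hsq : ∑ d ∈ P, (edgeProbOn ν d)^2
      = (∑ d ∈ P, (edgeProbOn μ d)^2) + 2*ε*(edgeProbOn μ e - edgeProbOn μ f) + 2*ε^2 := by
    have key : ∑ d ∈ P, ((edgeProbOn ν d)^2 - (edgeProbOn μ d)^2)
        = 2*ε*(edgeProbOn μ e - edgeProbOn μ f) + 2*ε^2 := by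
      have hsub : ({e, f} : Finset (Sym2 V)) ⊆ P := by
        intro d hd
        rcases Finset.mem_insert.1 hd with rfl | hd
        · exact he
        · rw [Finset.mem_singleton.1 hd]; exact hf
      rw [← Finset.sum_subset hsub]
      · rw [Finset.sum_pair hef, hηe, hηf]; ring
      · intro d hd hd2
        rw [Finset.mem_insert, Finset.mem_singleton] at hd2
        push_neg at hd2
        rw [hηo d hd2.1 hd2.2]; ring
    have := Finset.sum_sub_distrib (s := P)
      (f := fun d => (edgeProbOn ν d)^2) (g := fun d => (edgeProbOn μ d)^2)
    rw [this] at key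
    linarith
  have hPpos : (0:ℝ) < (P.card : ℝ) := by
    have : P.Nonempty := ⟨e, he⟩
    exact_mod_cast Finset.card_pos.2 this
  have hvar := hfair ν
  rw [edgeVarOn, edgeVarOn, ← hP, hsum_eq, hsq] at hvar
  have h6 : 0 ≤ 2*ε*(edgeProbOn μ e - edgeProbOn μ f) + 2*ε^2 := by
    by_contra h7
    push_neg at h7
    have h8 := div_neg_of_neg_of_pos h7 hPpos
    rw [add_div] at h8
    rw [add_div, add_div] at hvar
    linarith [hvar, h8]
  nlinarith [hεpos, hεle, h6, hlt, mul_pos hεpos (sub_pos.2 hlt)]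

lemma induce_connected {G : SimpleGraph V} {W : Finset V} {B : Finset (Sym2 V)}
    (hBG : ∀ d ∈ B, d ∈ G.edgeFinset) (hBW : ∀ d ∈ B, ∀ z ∈ d, z ∈ W)
    (hWne : W.Nonempty)
    (hreach : ∀ u ∈ W, ∀ w ∈ W, (FG B).Reachable u w) :
    (G.induce (↑W : Set V)).Connected := by
  have key : ∀ (a b : V) (p : (FG B).Walk a b), a ∈ W → b ∈ W →
      ∀ (ha : a ∈ (↑W : Set V)) (hb : b ∈ (↑W : Set V)),
      (G.induce (↑W : Set V)).Reachable ⟨a, ha⟩ ⟨b, hb⟩ := by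
    intro a b p
    induction p with
    | nil => intro _ _ _ _; exact SimpleGraph.Reachable.refl _
    | @cons a c b hadj q ih =>
      intro haW hbW ha hb
      have hd : s(a,c) ∈ B := (fg_adj.1 hadj).1
      have hcW : c ∈ W := hBW _ hd c (Sym2.mem_mk_right _ _)
      have hGadj : G.Adj a c := by
        have h2 := hBG _ hd
        rw [SimpleGraph.mem_edgeFinset, SimpleGraph.mem_edgeSet] at h2
        exact h2
      have hadj' : (G.induce (↑W : Set V)).Adj ⟨a, ha⟩ ⟨c, by exact_mod_cast hcW⟩ := hGadj
      exact hadj'.reachable.trans (ih hcW hbW _ hb)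
  rw [SimpleGraph.connected_iff]
  constructor
  · rintro ⟨u, hu⟩ ⟨w, hw⟩
    have hu' : u ∈ W := by exact_mod_cast hu
    have hw' : w ∈ W := by exact_mod_cast hw
    obtain ⟨p⟩ := hreach u hu' w hw'
    exact key u w p hu' hw' hu hw
  · exact ⟨⟨hWne.choose, by exact_mod_cast hWne.choose_spec⟩⟩

lemma support_A_connect {G : SimpleGraph V} {μ : TreePMFOn G Finset.univ} (hfair : IsFairOn μ)
    {γ : Finset (Sym2 V)} (hγ : μ.toFun γ ≠ 0)
    {A : Finset (Sym2 V)} (hAP : A ⊆ inducedEdges G Finset.univ)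
    (hthr : ∀ d ∈ A, ∀ g ∈ inducedEdges G Finset.univ, g ∉ A →
      edgeProbOn μ d < edgeProbOn μ g)
    {p q : V} (hd : s(p,q) ∈ A) :
    (FG (γ ∩ A)).Reachable p q := by
  obtain ⟨hsub, -, hac, hreach⟩ := μ.supp γ hγ
  have hγP : γ ⊆ inducedEdges G Finset.univ := by
    intro d hdγ
    rw [inducedEdges_univ, SimpleGraph.mem_edgeFinset]
    exact hsub hdγ
  have hpq : p ≠ q := by
    have h3 := hAP hd
    rw [inducedEdges_univ, SimpleGraph.mem_edgeFinset, SimpleGraph.mem_edgeSet] at h3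
    exact h3.ne
  by_contra hnr
  have hdγn : s(p,q) ∉ γ := by
    intro hmem
    exact hnr (SimpleGraph.Adj.reachable (fg_adj.2 ⟨Finset.mem_inter.2 ⟨hmem, hd⟩, hpq⟩))
  obtain ⟨w₀⟩ := hreach p (Finset.mem_univ p) q (Finset.mem_univ q)
  set pp := w₀.toPath with hppdef
  have hnd : pp.1.edges.Nodup := pp.2.isTrail.edges_nodup
  have hex : ∃ f ∈ pp.1.edges, f ∉ A := by
    by_contra hall
    push_neg at hall
    exact hnr (reach_of_edges_mem pp.1 (fun d hd2 =>
      Finset.mem_inter.2 ⟨(walk_edges_mem pp.1 hd2).1, hall d hd2⟩))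
  obtain ⟨f, hfpp, hfA⟩ := hex
  have hfγ : f ∈ γ := (walk_edges_mem pp.1 hfpp).1
  have hfnd : ¬ f.IsDiag := (walk_edges_mem pp.1 hfpp).2
  have key : ∀ a b : V, s(a,b) ∈ γ → s(a,b) ∉ A →
      (FG (γ.erase s(a,b))).Reachable p a →
      (FG (γ.erase s(a,b))).Reachable q b → False := by
    intro a b hfγ' hfA' hpa hqb
    have habne : a ≠ b := by
      have h4 : s(a,b) ∈ G.edgeSet := hsub hfγ'
      rw [SimpleGraph.mem_edgeSet] at h4
      exact h4.ne
    have hnotreach : ¬ (FG (γ.erase s(a,b))).Reachable a b :=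
      not_reach_erase hac hfγ' habne
    set γ'' := insert (s(p,q)) (γ.erase s(a,b)) with hγ''def
    have hle : FG (γ.erase s(a,b)) ≤ FG γ'' := fg_mono (Finset.subset_insert _ _)
    have hadjpq : (FG γ'').Adj p q := fg_adj.2 ⟨Finset.mem_insert_self _ _, hpq⟩
    have hreach'' : ∀ v, (FG γ'').Reachable v p := by
      intro v
      have hv : (FG γ).Reachable v a := hreach v (Finset.mem_univ v) a (Finset.mem_univ a)
      have hva : (FG (γ.erase s(a,b))).Reachable v a ∨
          (FG (γ.erase s(a,b))).Reachable v b := by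
        rcases reach_erase_cases (a := a) (b := b) hv with h1 | ⟨h1, -⟩ | ⟨h1, -⟩
        · exact Or.inl h1
        · exact Or.inl h1
        · exact Or.inr h1
      rcases hva with h1 | h1
      · exact (h1.mono hle).trans ((hpa.mono hle).symm)
      · exact ((h1.mono hle).trans ((hqb.mono hle).symm)).trans hadjpq.symm.reachable
    have hst'' : IsSpanningTreeOn G Finset.univ γ'' := by
      refine ⟨?_, fun e _ v _ => Finset.mem_univ v, ?_, ?_⟩
      · intro d hd2
        have hd3 : d ∈ γ'' := by exact_mod_cast hd2
        rw [hγ''def, Finset.mem_insert] at hd3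
        rcases hd3 with rfl | hd3
        · have h3 := hAP hd
          rw [inducedEdges_univ, SimpleGraph.mem_edgeFinset] at h3
          exact h3
        · exact hsub (Finset.mem_of_mem_erase hd3)
      · intro v c hc
        by_cases hec : s(p,q) ∈ c.edges
        · have h5 := (SimpleGraph.adj_and_reachable_delete_edges_iff_exists_cycle.2
            ⟨v, c, hc, hec⟩).2
          have hle2 : (FG γ'' \ SimpleGraph.fromEdgeSet {s(p,q)}) ≤ FG (γ.erase s(a,b)) := by
            intro x y hxy
            obtain ⟨hxy1, hxy2⟩ := hxy
            rw [fg_adj] at hxy1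
            have hne' : s(x,y) ≠ s(p,q) := by
              intro hEq
              apply hxy2
              rw [SimpleGraph.fromEdgeSet_adj]
              exact ⟨by simp [hEq], hxy1.2⟩
            have : s(x,y) ∈ γ'' := hxy1.1
            rw [hγ''def, Finset.mem_insert] at this
            rcases this with hEq | hmem
            · exact absurd hEq hne'
            · exact fg_adj.2 ⟨hmem, hxy1.2⟩
          have h6 : (FG (γ.erase s(a,b))).Reachable p q := h5.mono hle2
          exact hnotreach ((hpa.symm.trans h6).trans hqb)
        · have hedges : ∀ d ∈ c.edges, d ∈ (FG (γ.erase s(a,b))).edgeSet := by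
            intro d hd2
            have h7 := c.edges_subset_edgeSet hd2
            rw [SimpleGraph.edgeSet_fromEdgeSet] at h7 ⊢
            refine ⟨?_, h7.2⟩
            have h8 : d ∈ γ'' := by exact_mod_cast h7.1
            rw [hγ''def, Finset.mem_insert] at h8
            rcases h8 with rfl | h8
            · exact absurd hd2 hec
            · exact_mod_cast h8
          exact (isAcyclic_anti (fg_mono (Finset.erase_subset _ _)) hac)
            (c.transfer _ hedges) (hc.transfer hedges)
      · intro u _ w _
        exact (hreach'' u).trans (hreach'' w).symm
    have hswap := fair_swap hfair hγ (hAP hd) (hγP hfγ') hdγn hfγ' hγP hst''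
    have hlt := hthr _ hd _ (hγP hfγ') hfA'
    linarith
  obtain ⟨⟨a, b⟩, hab0⟩ := f.exists_rep
  have hab : s(a,b) = f := hab0
  have habmem : s(a,b) ∈ pp.1.edges := by rw [hab]; exact hfpp
  rcases path_split pp.1 hnd habmem with ⟨h1, h2⟩ | ⟨h1, h2⟩
  · exact key a b (by rw [hab]; exact hfγ) (by rw [hab]; exact hfA) h1 h2
  · refine key b a ?_ ?_ ?_ ?_
    · rw [Sym2.eq_swap, hab]; exact hfγ
    · rw [Sym2.eq_swap, hab]; exact hfA
    · rw [Sym2.eq_swap]; exact h1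
    · rw [Sym2.eq_swap]; exact h2

end FairAux

/-- If `H₀` (induced on `S`) is a minimal 1-densest subgraph of the finite
connected simple graph `G` with `H₀ ≠ G`, then `H₀` has the restriction property: for every
fair tree `γ` of `G`, the set of edges of `γ` joining two vertices of `H₀` is a spanning
tree of `H₀`. -/
theorem restriction_property_of_minimalDensest
    {V : Type*} [Fintype V] [DecidableEq V] (G : SimpleGraph V) (hG : G.Connected)
    (S : Finset V) (hmin : IsMinimalDensest G S) (hne : S ≠ Finset.univ) :
    ∀ T : Finset (Sym2 V), IsFairTreeOn G Finset.univ T →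
      IsSpanningTreeOn G S (T.filter fun e => ∀ v ∈ e, v ∈ S) := by
  classical
  intro T hT
  obtain ⟨μ, hfair, hμT⟩ := hT
  have hES_ne : (inducedEdges G S).Nonempty := hmin.1.1.1
  have hESP : inducedEdges G S ⊆ inducedEdges G Finset.univ := by
    intro d hd
    rw [FairAux.inducedEdges_univ]
    exact (Finset.mem_filter.1 hd).1
  have hS2 : 2 ≤ S.card := by
    obtain ⟨e₀, he₀⟩ := hES_ne
    obtain ⟨⟨p0, q0⟩, hrep0⟩ := e₀.exists_rep
    have hrep : s(p0,q0) = e₀ := hrep0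
    have hmem := Finset.mem_filter.1 he₀
    have hpq : p0 ≠ q0 := by
      have h2 : s(p0,q0) ∈ G.edgeFinset := by rw [hrep]; exact hmem.1
      rw [SimpleGraph.mem_edgeFinset, SimpleGraph.mem_edgeSet] at h2
      exact h2.ne
    have hp0 : p0 ∈ S := hmem.2 p0 (by rw [← hrep]; exact Sym2.mem_mk_left _ _)
    have hq0 : q0 ∈ S := hmem.2 q0 (by rw [← hrep]; exact Sym2.mem_mk_right _ _)
    exact Finset.one_lt_card.2 ⟨p0, hp0, q0, hq0, hpq⟩
  have hScard1 : (1:ℝ) ≤ (S.card:ℝ) - 1 := by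
    have h2 : (2:ℝ) ≤ (S.card:ℝ) := by exact_mod_cast hS2
    linarith
  have hsupport : ∀ γ : Finset (Sym2 V), μ.toFun γ ≠ 0 →
      γ ⊆ inducedEdges G Finset.univ ∧ (↑γ : Set (Sym2 V)) ⊆ G.edgeSet ∧
        (FairAux.FG γ).IsAcyclic := by
    intro γ hγ
    obtain ⟨h1, -, h3, -⟩ := μ.supp γ hγ
    refine ⟨?_, h1, h3⟩
    intro d hd
    rw [FairAux.inducedEdges_univ, SimpleGraph.mem_edgeFinset]
    exact h1 hd
  have hforest : ∀ γ : Finset (Sym2 V), μ.toFun γ ≠ 0 →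
      (γ ∩ inducedEdges G S).card + 1 ≤ S.card := by
    intro γ hγ
    obtain ⟨-, hsub, hac⟩ := hsupport γ hγ
    refine (FairAux.forest_card_le ?_ ?_ ?_ ?_).2
    · intro d hd
      exact SimpleGraph.not_isDiag_of_mem_edgeFinset
        (Finset.mem_filter.1 (Finset.mem_inter.1 hd).2).1
    · exact FairAux.isAcyclic_anti (FairAux.fg_mono Finset.inter_subset_left) hac
    · intro d hd
      exact (Finset.mem_filter.1 (Finset.mem_inter.1 hd).2).2
    · exact Finset.card_pos.1 (by omega)
  have hlower : (S.card : ℝ) - 1 ≤ ∑ d ∈ inducedEdges G S, edgeProbOn μ d := by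
    by_contra hcon
    push_neg at hcon
    obtain ⟨estar, hestar, hemin⟩ :=
      Finset.exists_min_image (inducedEdges G S) (fun d => edgeProbOn μ d) hES_ne
    have ht0 : 0 ≤ edgeProbOn μ estar := FairAux.edgeProb_nonneg μ estar
    have htsum : edgeProbOn μ estar * ((inducedEdges G S).card:ℝ)
        ≤ ∑ d ∈ inducedEdges G S, edgeProbOn μ d := by
      have h2 := Finset.card_nsmul_le_sum (inducedEdges G S)
        (fun d => edgeProbOn μ d) (edgeProbOn μ estar) (fun d hd => hemin d hd)
      rwa [nsmul_eq_mul, mul_comm] at h2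
    set A := (inducedEdges G Finset.univ).filter
      (fun d => edgeProbOn μ d ≤ edgeProbOn μ estar) with hAdef
    have hAP : A ⊆ inducedEdges G Finset.univ := Finset.filter_subset _ _
    have hthr : ∀ d ∈ A, ∀ g ∈ inducedEdges G Finset.univ, g ∉ A →
        edgeProbOn μ d < edgeProbOn μ g := by
      intro d hdA g hgP hgA
      have h1 : edgeProbOn μ d ≤ edgeProbOn μ estar := (Finset.mem_filter.1 hdA).2
      have h2 : ¬ edgeProbOn μ g ≤ edgeProbOn μ estar :=
        fun hc => hgA (Finset.mem_filter.2 ⟨hgP, hc⟩)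
      push_neg at h2
      linarith
    have hestarA : estar ∈ A := Finset.mem_filter.2 ⟨hESP hestar, le_refl _⟩
    obtain ⟨⟨u₀, w₀⟩, hrep0⟩ := estar.exists_rep
    have hrep : s(u₀,w₀) = estar := hrep0
    have hu₀w₀ : u₀ ≠ w₀ := by
      have h2 : s(u₀,w₀) ∈ G.edgeFinset := by
        rw [hrep, ← FairAux.inducedEdges_univ]; exact hESP hestar
      rw [SimpleGraph.mem_edgeFinset, SimpleGraph.mem_edgeSet] at h2
      exact h2.ne
    set W := Finset.univ.filter (fun v => (FairAux.FG A).Reachable u₀ v) with hWdef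
    have hclW : ∀ p q : V, (FairAux.FG A).Adj p q → p ∈ W → q ∈ W := by
      intro p q hadj hp
      rw [hWdef, Finset.mem_filter] at hp ⊢
      exact ⟨Finset.mem_univ q, hp.2.trans hadj.reachable⟩
    have hu₀W : u₀ ∈ W := by
      rw [hWdef, Finset.mem_filter]
      exact ⟨Finset.mem_univ _, SimpleGraph.Reachable.refl _⟩
    have hadj0 : (FairAux.FG A).Adj u₀ w₀ :=
      FairAux.fg_adj.2 ⟨by rw [hrep]; exact hestarA, hu₀w₀⟩
    have hw₀W : w₀ ∈ W := hclW _ _ hadj0 hu₀W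
    have hWreachA : ∀ u ∈ W, ∀ w ∈ W, (FairAux.FG A).Reachable u w := by
      intro u hu w hw
      rw [hWdef, Finset.mem_filter] at hu hw
      exact hu.2.symm.trans hw.2
    set AW := A.filter (fun d => ∀ z ∈ d, z ∈ W) with hAWdef
    have hWreachAW : ∀ u ∈ W, ∀ w ∈ W, (FairAux.FG AW).Reachable u w := by
      intro u hu w hw
      exact (FairAux.reach_filter hclW hu (hWreachA u hu w hw)).1
    have hAWestar : estar ∈ AW := by
      refine Finset.mem_filter.2 ⟨hestarA, ?_⟩
      rw [← hrep]
      intro z hz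
      rcases Sym2.mem_iff.1 hz with rfl | rfl
      · exact hu₀W
      · exact hw₀W
    have htree : ∀ γ : Finset (Sym2 V), μ.toFun γ ≠ 0 → (γ ∩ AW).card + 1 = W.card := by
      intro γ hγ
      obtain ⟨hγP, hsub, hac⟩ := hsupport γ hγ
      have hBeq : γ ∩ AW = (γ ∩ A).filter (fun d => ∀ z ∈ d, z ∈ W) := by
        ext d
        simp only [Finset.mem_inter, hAWdef, Finset.mem_filter]
        tauto
      refine FairAux.tree_card ?_ ?_ ?_ ⟨u₀, hu₀W⟩ ?_
      · intro d hd
        have h2 : d ∈ γ := (Finset.mem_inter.1 hd).1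
        exact SimpleGraph.not_isDiag_of_mem_edgeSet G (hsub h2)
      · exact FairAux.isAcyclic_anti (FairAux.fg_mono Finset.inter_subset_left) hac
      · intro d hd
        exact (Finset.mem_filter.1 (Finset.mem_inter.1 hd).2).2
      · intro u hu w hw
        refine FairAux.reach_trans_adj ?_ (hWreachAW u hu w hw)
        intro p' q' hadj
        have hdAW : s(p',q') ∈ AW := (FairAux.fg_adj.1 hadj).1
        have hdA : s(p',q') ∈ A := (Finset.mem_filter.1 hdAW).1
        have hp'W : p' ∈ W := (Finset.mem_filter.1 hdAW).2 p' (Sym2.mem_mk_left _ _)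
        have hmain : (FairAux.FG (γ ∩ A)).Reachable p' q' :=
          FairAux.support_A_connect hfair hγ hAP hthr hdA
        have hcl2 : ∀ p q : V, (FairAux.FG (γ ∩ A)).Adj p q → p ∈ W → q ∈ W := by
          intro p q hadj2 hp
          refine hclW p q ?_ hp
          exact FairAux.fg_adj.2 ⟨(Finset.mem_inter.1 (FairAux.fg_adj.1 hadj2).1).2,
            (FairAux.fg_adj.1 hadj2).2⟩
        have h3 := (FairAux.reach_filter hcl2 hp'W hmain).1
        rw [hBeq]
        exact h3
    have hAWsum : ∑ d ∈ AW, edgeProbOn μ d = (W.card : ℝ) - 1 := by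
      rw [FairAux.sum_edgeProb μ AW]
      have h2 : ∀ γ ∈ (Finset.univ : Finset (Finset (Sym2 V))),
          μ.toFun γ * ((AW ∩ γ).card : ℝ) = μ.toFun γ * ((W.card:ℝ) - 1) := by
        intro γ _
        by_cases hγ : μ.toFun γ = 0
        · rw [hγ]; ring
        · have h3 := htree γ hγ
          have h4 : ((γ ∩ AW).card : ℝ) + 1 = (W.card : ℝ) := by exact_mod_cast h3
          rw [Finset.inter_comm]
          congr 1
          linarith
      rw [Finset.sum_congr rfl h2, ← Finset.sum_mul, μ.sum_one, one_mul]
    have hAWupper : ∑ d ∈ AW, edgeProbOn μ d ≤ edgeProbOn μ estar * (AW.card:ℝ) := by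
      have h2 := Finset.sum_le_card_nsmul AW (fun d => edgeProbOn μ d)
        (edgeProbOn μ estar)
        (fun d hd => (Finset.mem_filter.1 ((Finset.mem_filter.1 hd).1)).2)
      rwa [nsmul_eq_mul, mul_comm] at h2
    have hW2 : 2 ≤ W.card := Finset.one_lt_card.2 ⟨u₀, hu₀W, w₀, hw₀W, hu₀w₀⟩
    have hAW1 : 1 ≤ AW.card := Finset.card_pos.2 ⟨estar, hAWestar⟩
    have hAWsub : AW ⊆ inducedEdges G W := by
      intro d hd
      obtain ⟨hdA, hdW⟩ := Finset.mem_filter.1 hd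
      refine Finset.mem_filter.2 ⟨?_, hdW⟩
      have h2 := hAP hdA
      rw [FairAux.inducedEdges_univ] at h2
      exact h2
    have hInHW : InH G W := by
      refine ⟨⟨estar, hAWsub hAWestar⟩, ?_⟩
      refine FairAux.induce_connected ?_ ?_ ⟨u₀, hu₀W⟩ hWreachAW
      · intro d hd
        have h2 := hAP ((Finset.mem_filter.1 hd).1)
        rw [FairAux.inducedEdges_univ] at h2
        exact h2
      · intro d hd
        exact (Finset.mem_filter.1 hd).2
    have hle := hmin.1.2 W hInHW
    rw [density, density] at hle
    have hIEW : (AW.card : ℝ) ≤ ((inducedEdges G W).card : ℝ) := by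
      exact_mod_cast Finset.card_le_card hAWsub
    have hWr : (2:ℝ) ≤ (W.card:ℝ) := by exact_mod_cast hW2
    have hAWr : (1:ℝ) ≤ (AW.card:ℝ) := by exact_mod_cast hAW1
    have hESr : (1:ℝ) ≤ ((inducedEdges G S).card:ℝ) := by
      have := Finset.card_pos.2 hES_ne
      exact_mod_cast this
    have h1 : edgeProbOn μ estar * ((inducedEdges G S).card:ℝ) < (S.card:ℝ) - 1 :=
      lt_of_le_of_lt htsum hcon
    have h2 : (W.card:ℝ) - 1 ≤ edgeProbOn μ estar * (AW.card:ℝ) := by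
      rw [← hAWsum]; exact hAWupper
    have hd1 : (0:ℝ) < (W.card:ℝ) - 1 := by linarith
    have hd2 : (0:ℝ) < (S.card:ℝ) - 1 := by linarith
    rw [div_le_div_iff₀ hd1 hd2] at hle
    nlinarith [h1, h2, hd1, hd2, hIEW, hAWr, hESr, ht0,
      mul_le_mul_of_nonneg_left hIEW (le_of_lt hd2)]
  have hTcount : (T ∩ inducedEdges G S).card + 1 = S.card := by
    have hg0 : ∀ γ ∈ (Finset.univ : Finset (Finset (Sym2 V))),
        0 ≤ μ.toFun γ * (((S.card:ℝ) - 1) - ((inducedEdges G S ∩ γ).card : ℝ)) := by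
      intro γ _
      by_cases hγ : μ.toFun γ = 0
      · rw [hγ]; simp
      · refine mul_nonneg (μ.nonneg γ) ?_
        have h2 := hforest γ hγ
        have h3 : ((γ ∩ inducedEdges G S).card : ℝ) + 1 ≤ (S.card:ℝ) := by exact_mod_cast h2
        rw [Finset.inter_comm]
        linarith
    have hgsum : ∑ γ : Finset (Sym2 V),
        μ.toFun γ * (((S.card:ℝ) - 1) - ((inducedEdges G S ∩ γ).card : ℝ)) = 0 := by
      have heq : ∑ γ : Finset (Sym2 V),
          μ.toFun γ * (((S.card:ℝ) - 1) - ((inducedEdges G S ∩ γ).card : ℝ))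
          = ((S.card:ℝ) - 1) - ∑ d ∈ inducedEdges G S, edgeProbOn μ d := by
        rw [FairAux.sum_edgeProb μ (inducedEdges G S)]
        have hpt : ∀ γ ∈ (Finset.univ : Finset (Finset (Sym2 V))),
            μ.toFun γ * (((S.card:ℝ) - 1) - ((inducedEdges G S ∩ γ).card : ℝ))
              = μ.toFun γ * ((S.card:ℝ) - 1)
                - μ.toFun γ * ((inducedEdges G S ∩ γ).card : ℝ) := by
          intro γ _; ring
        rw [Finset.sum_congr rfl hpt, Finset.sum_sub_distrib, ← Finset.sum_mul,
          μ.sum_one, one_mul]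
      have hup : ∑ d ∈ inducedEdges G S, edgeProbOn μ d ≤ (S.card:ℝ) - 1 := by
        rw [FairAux.sum_edgeProb μ (inducedEdges G S)]
        calc ∑ γ : Finset (Sym2 V), μ.toFun γ * ((inducedEdges G S ∩ γ).card : ℝ)
            ≤ ∑ γ : Finset (Sym2 V), μ.toFun γ * ((S.card:ℝ) - 1) := by
              apply Finset.sum_le_sum
              intro γ _
              by_cases hγ : μ.toFun γ = 0
              · rw [hγ]; simp
              · apply mul_le_mul_of_nonneg_left ?_ (μ.nonneg γ)
                have h2 := hforest γ hγ
                have h3 : ((γ ∩ inducedEdges G S).card : ℝ) + 1 ≤ (S.card:ℝ) := by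
                  exact_mod_cast h2
                rw [Finset.inter_comm]
                linarith
          _ = (S.card:ℝ) - 1 := by rw [← Finset.sum_mul, μ.sum_one, one_mul]
      rw [heq]
      linarith
    have hall0 := (Finset.sum_eq_zero_iff_of_nonneg hg0).1 hgsum
    have hTeq := hall0 T (Finset.mem_univ T)
    have h5 : ((inducedEdges G S ∩ T).card : ℝ) = (S.card:ℝ) - 1 := by
      rcases mul_eq_zero.1 hTeq with h6 | h6
      · exact absurd h6 hμT
      · linarith [h6]
    rw [Finset.inter_comm] at h5
    have h6 : ((T ∩ inducedEdges G S).card : ℝ) + 1 = (S.card:ℝ) := by linarith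
    exact_mod_cast h6
  have hFeq : T.filter (fun e => ∀ v ∈ e, v ∈ S) = T ∩ inducedEdges G S := by
    ext d
    rw [Finset.mem_filter, Finset.mem_inter, FairAux.mem_inducedEdges]
    constructor
    · rintro ⟨hdT, hdS⟩
      refine ⟨hdT, ⟨?_, hdS⟩⟩
      rw [SimpleGraph.mem_edgeFinset]
      exact (μ.supp T hμT).1 hdT
    · rintro ⟨hdT, -, hdS⟩
      exact ⟨hdT, hdS⟩
  rw [hFeq]
  obtain ⟨hsubT, -, hacT, -⟩ := μ.supp T hμT
  have hnlT : ∀ d ∈ T ∩ inducedEdges G S, ¬ d.IsDiag := by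
    intro d hd
    exact SimpleGraph.not_isDiag_of_mem_edgeFinset
      (Finset.mem_filter.1 (Finset.mem_inter.1 hd).2).1
  have hacT' : (FairAux.FG (T ∩ inducedEdges G S)).IsAcyclic :=
    FairAux.isAcyclic_anti (FairAux.fg_mono Finset.inter_subset_left) hacT
  have hWin : ∀ d ∈ T ∩ inducedEdges G S, ∀ z ∈ d, z ∈ S := by
    intro d hd
    exact (Finset.mem_filter.1 (Finset.mem_inter.1 hd).2).2
  refine ⟨?_, hWin, hacT', ?_⟩
  · intro d hd
    have h2 : d ∈ T := (Finset.mem_inter.1 (by exact_mod_cast hd)).1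
    exact hsubT h2
  · exact FairAux.reach_of_card hnlT hacT' hWin hTcount
end
end

section
/- Let G be a finite connected simple graph and let H₀ be a minimal 1-densest subgraph of G with H₀ ≠ G. Then for every fair pmf μ* on the spanning trees of G and every edge e of H₀, the edge probability satisfies η_{μ*}(e) = (|V(H₀)|−1)/|E(H₀)| = θ(H₀)^{−1}. -/
open scoped Classical

noncomputable section

variable {V : Type*} [Fintype V] [DecidableEq V]

section AuxLemmas
set_option linter.unusedSectionVars false
set_option linter.unusedVariables false
set_option maxHeartbeats 1000000
open SimpleGraph

set_option linter.unusedSectionVars false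
set_option linter.unusedVariables false
set_option maxHeartbeats 1000000
open SimpleGraph

-- acyclicity is antitone
lemma aux_acyclic_mono {A B : SimpleGraph V} (h : A ≤ B) (hB : B.IsAcyclic) : A.IsAcyclic := by
  intro v c hc
  exact hB (c.transfer B (fun e he => edgeSet_mono h (c.edges_subset_edgeSet he))) (hc.transfer _)

-- reachability promotion
lemma aux_reach_promote {A B : SimpleGraph V} (h : ∀ x y, A.Adj x y → B.Reachable x y)
    {u v : V} (r : A.Reachable u v) : B.Reachable u v := by
  obtain ⟨w⟩ := r
  induction w with
  | nil => exact Reachable.refl _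
  | cons hadj p ih => exact (h _ _ hadj).trans ih

lemma aux_reach_of_insert_not_acyclic {F : Finset (Sym2 V)} {a b : V} (hab : a ≠ b)
    (hF : (fromEdgeSet (↑F : Set (Sym2 V))).IsAcyclic)
    (h : ¬ (fromEdgeSet (↑(insert s(a,b) F) : Set (Sym2 V))).IsAcyclic) :
    (fromEdgeSet (↑F : Set (Sym2 V))).Reachable a b := by
  rw [IsAcyclic] at h
  push_neg at h
  obtain ⟨v, c, hc⟩ := h
  by_cases hmem : s(a,b) ∈ c.edges
  · have hiff := (adj_and_reachable_delete_edges_iff_exists_cycle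
      (G := fromEdgeSet (↑(insert s(a,b) F) : Set (Sym2 V))) (v := a) (w := b)).mpr
      ⟨v, c, hc, hmem⟩
    refine hiff.2.mono ?_
    intro x y hxy
    rw [fromEdgeSet_adj]
    obtain ⟨h1, h2⟩ := hxy
    rw [fromEdgeSet_adj] at h1
    refine ⟨?_, h1.2⟩
    rcases Finset.mem_insert.mp (by exact_mod_cast h1.1) with heq | hmemF
    · exfalso; exact h2 (by simp [SimpleGraph.fromEdgeSet_adj, heq, h1.2])
    · exact_mod_cast hmemF
  · exfalso
    apply hF (c := c.transfer _ ?_) (hc.transfer _)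
    intro e he
    have h1 := c.edges_subset_edgeSet he
    rw [edgeSet_fromEdgeSet] at h1 ⊢
    obtain ⟨h1, h2⟩ := h1
    refine ⟨?_, h2⟩
    rcases Finset.mem_insert.mp (by exact_mod_cast h1) with heq | hmemF
    · exact absurd (heq ▸ he) hmem
    · exact_mod_cast hmemF

lemma aux_not_acyclic_insert_of_reach {F : Finset (Sym2 V)} {a b : V} (hab : a ≠ b)
    (hnotmem : s(a,b) ∉ F) (h : (fromEdgeSet (↑F : Set (Sym2 V))).Reachable a b) :
    ¬ (fromEdgeSet (↑(insert s(a,b) F) : Set (Sym2 V))).IsAcyclic := by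
  have hadj : (fromEdgeSet (↑(insert s(a,b) F) : Set (Sym2 V))).Adj a b := by
    rw [fromEdgeSet_adj]; exact ⟨by simp, hab⟩
  have hreach : ((fromEdgeSet (↑(insert s(a,b) F) : Set (Sym2 V))) \
      fromEdgeSet {s(a,b)}).Reachable a b := by
    refine h.mono ?_
    intro x y hxy
    rw [fromEdgeSet_adj] at hxy
    constructor
    · rw [fromEdgeSet_adj]; exact ⟨by simp [hxy.1], hxy.2⟩
    · rw [fromEdgeSet_adj]
      rintro ⟨hmem, -⟩
      rw [Set.mem_singleton_iff] at hmem
      exact hnotmem (hmem ▸ (by exact_mod_cast hxy.1))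
  obtain ⟨u, c, hc, -⟩ := (adj_and_reachable_delete_edges_iff_exists_cycle).mp ⟨hadj, hreach⟩
  intro hacyc
  exact hacyc c hc

-- lift a walk in fromEdgeSet F into the induced subgraph on S', for any ambient B ≥ fromEdgeSet F
lemma aux_lift_reach {B : SimpleGraph V} {S' : Finset V} {F : Finset (Sym2 V)}
    (hsub : fromEdgeSet (↑F : Set (Sym2 V)) ≤ B)
    (hend : ∀ e ∈ F, ∀ v ∈ e, v ∈ S') :
    ∀ {u v : V} (w : (fromEdgeSet (↑F : Set (Sym2 V))).Walk u v) (hu : u ∈ (↑S' : Set V))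
      (hv : v ∈ (↑S' : Set V)),
      (B.induce (↑S' : Set V)).Reachable ⟨u, hu⟩ ⟨v, hv⟩ := by
    intro u v w
    induction w with
    | nil => intro hu hv; exact Reachable.refl _
    | @cons a x c hadj p ih =>
      intro hu hv
      have he : s(a, x) ∈ F := by
        have := ((fromEdgeSet_adj _).mp hadj).1; exact_mod_cast this
      have hx : x ∈ (↑S' : Set V) := by
        exact_mod_cast hend _ he x (Sym2.mem_mk_right a x)
      refine Reachable.trans ?_ (ih hx hv)
      exact SimpleGraph.Adj.reachable (by
        simp only [comap_adj, Function.Embedding.coe_subtype]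
        exact hsub hadj)

-- tree count: an acyclic edge set connecting S' with all endpoints in S' has |S'| - 1 edges
lemma aux_tree_count {G : SimpleGraph V} {S' : Finset V} {F : Finset (Sym2 V)}
    (hSne : S'.Nonempty)
    (hF : (↑F : Set (Sym2 V)) ⊆ G.edgeSet)
    (hend : ∀ e ∈ F, ∀ v ∈ e, v ∈ S')
    (hacyc : (fromEdgeSet (↑F : Set (Sym2 V))).IsAcyclic)
    (hconn : ∀ u ∈ S', ∀ v ∈ S', (fromEdgeSet (↑F : Set (Sym2 V))).Reachable u v) :
    F.card + 1 = S'.card := by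
  set D := fromEdgeSet (↑F : Set (Sym2 V)) with hD
  have hFD : (↑F : Set (Sym2 V)) ⊆ D.edgeSet := by
    rw [hD, edgeSet_fromEdgeSet]
    intro e he
    exact ⟨he, fun hdiag => (G.not_isDiag_of_mem_edgeSet (hF he)) hdiag⟩
  set H := D.induce (↑S' : Set V) with hH
  have htree : H.IsTree := by
    have hnon : Nonempty (↑S' : Set V) := by
      obtain ⟨x, hx⟩ := hSne
      exact ⟨⟨x, by exact_mod_cast hx⟩⟩
    constructor
    · exact Connected.mk (by
        rintro ⟨u, hu⟩ ⟨v, hv⟩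
        exact aux_lift_reach le_rfl hend (Classical.choice
          (hconn u (by exact_mod_cast hu) v (by exact_mod_cast hv))) hu hv)
    · intro v c hc
      exact hacyc (c.map (SimpleGraph.Embedding.induce (G := D) (↑S' : Set V)).toHom)
        (hc.map (SimpleGraph.Embedding.induce (G := D) (↑S' : Set V)).injective)
  have hcard := htree.card_edgeFinset
  have hVcard : Fintype.card (↑S' : Set V) = S'.card := by
    simpa using Fintype.card_coe S'
  rw [hVcard] at hcard
  rw [← hcard]
  congr 1
  -- H.edgeFinset.card = F.card
  refine (Finset.card_bij (fun e _ => Sym2.map Subtype.val e) ?_ ?_ ?_).symm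
  · intro e he
    rw [SimpleGraph.mem_edgeFinset] at he
    induction e with
    | h x y =>
      have : H.Adj x y := he
      have : D.Adj x.val y.val := by
        exact this
      have := ((fromEdgeSet_adj _).mp this).1
      simpa using (by exact_mod_cast this : s(x.val, y.val) ∈ F)
  · intro e1 h1 e2 h2 heq
    exact Sym2.map.injective Subtype.val_injective heq
  · intro f hf
    induction f with
    | h x y =>
      have hx : x ∈ S' := hend _ hf x (Sym2.mem_mk_left x y)
      have hy : y ∈ S' := hend _ hf y (Sym2.mem_mk_right x y)
      have hne : x ≠ y := by
        intro h
        exact (G.not_isDiag_of_mem_edgeSet (hF (by exact_mod_cast hf))) (by simp [h])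
      refine ⟨s(⟨x, by exact_mod_cast hx⟩, ⟨y, by exact_mod_cast hy⟩), ?_, rfl⟩
      rw [SimpleGraph.mem_edgeFinset]
      show H.Adj _ _
      simp only [hH, comap_adj, Function.Embedding.coe_subtype]
      rw [hD, fromEdgeSet_adj _]
      exact ⟨by exact_mod_cast hf, hne⟩

-- vertices in a walk's support are reachable from the start
lemma aux_support_reach {A : SimpleGraph V} {u v w : V} (p : A.Walk u v)
    (h : w ∈ p.support) : A.Reachable u w :=
  ⟨p.takeUntil w h⟩

lemma aux_fromEdgeSet_le {G : SimpleGraph V} {F : Finset (Sym2 V)}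
    (h : (↑F : Set (Sym2 V)) ⊆ G.edgeSet) : fromEdgeSet (↑F : Set (Sym2 V)) ≤ G := by
  intro x y hxy
  rw [fromEdgeSet_adj] at hxy
  exact (G.mem_edgeSet).mp (h hxy.1)

/-- Key density decomposition: if every connected induced subgraph has density at most
`density G S`, and `F ⊆ L` is a forest joining the endpoints of every edge of `L`, then
`|L| ≤ density G S * |F|`. -/
lemma aux_dens_bound (G : SimpleGraph V) (S : Finset V)
    (hmax : ∀ S', InH G S' → density G S' ≤ density G S) :
    ∀ (n : ℕ) (L F : Finset (Sym2 V)), L.card ≤ n → L ⊆ G.edgeFinset → F ⊆ L →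
    (fromEdgeSet (↑F : Set (Sym2 V))).IsAcyclic →
    (∀ e ∈ L, ∀ x ∈ e, ∀ y ∈ e, (fromEdgeSet (↑F : Set (Sym2 V))).Reachable x y) →
    (L.card : ℝ) ≤ density G S * F.card := by
  intro n
  induction n with
  | zero =>
    intro L F hn _ hFL _ _
    have : L = ∅ := Finset.card_eq_zero.mp (Nat.le_zero.mp hn)
    subst this
    have : F = ∅ := Finset.subset_empty.mp hFL
    subst this
    simp
  | succ n ih =>
    intro L F hn hLE hFL hacyc hreach
    rcases Finset.eq_empty_or_nonempty L with hL | hL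
    · subst hL
      have : F = ∅ := Finset.subset_empty.mp hFL
      subst this
      simp
    obtain ⟨e₀, he₀⟩ := hL
    obtain ⟨⟨x₀, y₀⟩, hrep⟩ := Quot.exists_rep e₀
    set D := fromEdgeSet (↑F : Set (Sym2 V)) with hD
    set SC : Finset V := Finset.univ.filter (fun v => D.Reachable x₀ v) with hSC
    have hmemSC : ∀ v, v ∈ SC ↔ D.Reachable x₀ v := by
      intro v; simp [hSC]
    set C : Finset (Sym2 V) := L.filter (fun e => ∀ v ∈ e, v ∈ SC) with hC
    have hx₀e : x₀ ∈ e₀ := by rw [← hrep]; exact Sym2.mem_mk_left x₀ y₀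
    have hy₀e : y₀ ∈ e₀ := by rw [← hrep]; exact Sym2.mem_mk_right x₀ y₀
    have hx₀SC : x₀ ∈ SC := (hmemSC x₀).mpr (Reachable.refl x₀)
    have hy₀SC : y₀ ∈ SC := (hmemSC y₀).mpr (hreach e₀ he₀ x₀ hx₀e y₀ hy₀e)
    have he₀C : e₀ ∈ C := by
      rw [hC, Finset.mem_filter]
      refine ⟨he₀, ?_⟩
      intro v hv
      rw [← hrep] at hv
      rcases Sym2.mem_iff.mp hv with h | h
      · subst h; exact hx₀SC
      · subst h; exact hy₀SC
    -- edges of D-walks starting at an SC vertex remain in C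
    have hwalkC : ∀ (a b : V), a ∈ SC → ∀ (p : D.Walk a b), ∀ f ∈ p.edges, f ∈ F ∩ C := by
      intro a b ha p f hf
      have hfF : f ∈ F := by
        have := p.edges_subset_edgeSet hf
        rw [hD, edgeSet_fromEdgeSet] at this
        exact_mod_cast this.1
      have hfL : f ∈ L := hFL hfF
      rw [Finset.mem_inter]
      refine ⟨hfF, ?_⟩
      rw [hC, Finset.mem_filter]
      refine ⟨hfL, ?_⟩
      intro v hv
      rw [hmemSC]
      have hra : D.Reachable x₀ a := (hmemSC a).mp ha
      refine hra.trans ?_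
      -- v is an endpoint of an edge of p, hence in p.support
      have hvs : v ∈ p.support := by
        revert hv hf
        induction f using Sym2.inductionOn with
        | _ x y =>
          intro hf hv
          rcases Sym2.mem_iff.mp hv with rfl | rfl
          · exact p.fst_mem_support_of_mem_edges hf
          · exact p.snd_mem_support_of_mem_edges hf
      exact aux_support_reach p hvs
    -- the forest piece F ∩ C connects SC
    have hFCconn : ∀ u ∈ SC, ∀ v ∈ SC,
        (fromEdgeSet (↑(F ∩ C) : Set (Sym2 V))).Reachable u v := by
      intro u hu v hv
      have hru : D.Reachable u v := ((hmemSC u).mp hu).symm.trans ((hmemSC v).mp hv)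
      obtain ⟨p⟩ := hru
      refine ⟨p.transfer _ ?_⟩
      intro f hf
      have hfFC := hwalkC u v hu p f hf
      rw [edgeSet_fromEdgeSet]
      refine ⟨by exact_mod_cast hfFC, ?_⟩
      have := p.edges_subset_edgeSet hf
      rw [hD, edgeSet_fromEdgeSet] at this
      exact this.2
    have hFCend : ∀ e ∈ F ∩ C, ∀ v ∈ e, v ∈ SC := by
      intro e he v hv
      have := (Finset.mem_inter.mp he).2
      rw [hC, Finset.mem_filter] at this
      exact this.2 v hv
    have hFCsub : (↑(F ∩ C) : Set (Sym2 V)) ⊆ G.edgeSet := by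
      intro e he
      have : e ∈ F ∩ C := by exact_mod_cast he
      exact (SimpleGraph.mem_edgeFinset).mp (hLE (hFL (Finset.mem_inter.mp this).1))
    have hFCacyc : (fromEdgeSet (↑(F ∩ C) : Set (Sym2 V))).IsAcyclic := by
      refine aux_acyclic_mono (fromEdgeSet_mono ?_) hacyc
      exact_mod_cast Finset.inter_subset_left
    have hSCne : SC.Nonempty := ⟨x₀, hx₀SC⟩
    have hcount := aux_tree_count (G := G) hSCne hFCsub hFCend hFCacyc hFCconn
    -- SC has at least 2 elements
    have hx₀y₀ : x₀ ≠ y₀ := by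
      have : e₀ ∈ G.edgeSet := (SimpleGraph.mem_edgeFinset).mp (hLE he₀)
      intro h
      exact (G.not_isDiag_of_mem_edgeSet this) (by rw [← hrep, h]; exact Sym2.mk_isDiag_iff.mpr rfl)
    have hSC2 : 2 ≤ SC.card := Finset.one_lt_card.mpr ⟨x₀, hx₀SC, y₀, hy₀SC, hx₀y₀⟩
    -- InH G SC
    have hInH : InH G SC := by
      constructor
      · refine ⟨e₀, ?_⟩
        rw [inducedEdges, Finset.mem_filter]
        refine ⟨hLE he₀, ?_⟩
        rw [hC, Finset.mem_filter] at he₀C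
        exact he₀C.2
      · have hnon : Nonempty (↑SC : Set V) := ⟨⟨x₀, by exact_mod_cast hx₀SC⟩⟩
        refine Connected.mk ?_
        rintro ⟨u, hu⟩ ⟨v, hv⟩
        obtain ⟨p⟩ := hFCconn u (by exact_mod_cast hu) v (by exact_mod_cast hv)
        exact aux_lift_reach (aux_fromEdgeSet_le hFCsub) hFCend p hu hv
    -- C is inside the induced edges of SC
    have hCsub : C ⊆ inducedEdges G SC := by
      intro e he
      rw [hC, Finset.mem_filter] at he
      rw [inducedEdges, Finset.mem_filter]
      exact ⟨hLE he.1, he.2⟩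
    -- density bound on C
    have hdns := hmax SC hInH
    have hpos : (0 : ℝ) < (SC.card : ℝ) - 1 := by
      have : (2 : ℝ) ≤ (SC.card : ℝ) := by exact_mod_cast hSC2
      linarith
    have hcard' : (((F ∩ C).card : ℝ)) = (SC.card : ℝ) - 1 := by
      have := hcount
      push_cast [← this]
      ring
    have hC1 : (C.card : ℝ) ≤ density G S * ((F ∩ C).card : ℝ) := by
      rw [density, div_le_iff₀ hpos] at hdns
      have h2 : ((C.card : ℝ)) ≤ ((inducedEdges G SC).card : ℝ) := by
        exact_mod_cast Finset.card_le_card hCsub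
      rw [hcard']
      linarith
    -- recursive call on L \ C
    have hssub : L \ C ⊂ L := by
      refine Finset.sdiff_ssubset ?_ ?_
      · exact Finset.filter_subset _ _
      · exact ⟨e₀, he₀C⟩
    have hrec : ((L \ C).card : ℝ) ≤ density G S * ((F \ C).card : ℝ) := by
      refine ih (L \ C) (F \ C) ?_ ?_ ?_ ?_ ?_
      · have := Finset.card_lt_card hssub
        omega
      · exact (Finset.sdiff_subset).trans hLE
      · exact Finset.sdiff_subset_sdiff hFL (le_refl C)
      · refine aux_acyclic_mono (fromEdgeSet_mono ?_) hacyc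
        exact_mod_cast Finset.sdiff_subset
      · -- endpoints of edges of L \ C are joined within F \ C
        intro e he x hx y hy
        have heL : e ∈ L := (Finset.mem_sdiff.mp he).1
        have heC : e ∉ C := (Finset.mem_sdiff.mp he).2
        -- some endpoint of e is not in SC
        have hnot : ∃ z ∈ e, z ∉ SC := by
          by_contra hcon
          push_neg at hcon
          exact heC (by rw [hC, Finset.mem_filter]; exact ⟨heL, hcon⟩)
        -- all endpoints of e are mutually reachable in D, so none is in SC
        have hxnot : x ∉ SC := by
          obtain ⟨z, hz, hznot⟩ := hnot
          intro hxSC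
          exact hznot ((hmemSC z).mpr (((hmemSC x).mp hxSC).trans (hreach e heL x hx z hz)))
        obtain ⟨p⟩ := hreach e heL x hx y hy
        refine ⟨p.transfer _ ?_⟩
        intro f hf
        have hfF : f ∈ F := by
          have := p.edges_subset_edgeSet hf
          rw [hD, edgeSet_fromEdgeSet] at this
          exact_mod_cast this.1
        have hfnC : f ∉ C := by
          intro hfC
          -- endpoints of f are in SC, but they are reachable from x, contradiction
          rw [hC, Finset.mem_filter] at hfC
          -- pick an endpoint of f; it is in p.support hence reachable from x
          apply hxnot
          rw [hmemSC]
          -- get an endpoint of f in SC reachable back to x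
          revert hf
          induction f using Sym2.inductionOn with
          | _ a b =>
            intro hf
            have haSC : a ∈ SC := hfC.2 a (Sym2.mem_mk_left a b)
            have haS : a ∈ p.support := p.fst_mem_support_of_mem_edges hf
            exact ((hmemSC a).mp haSC).trans (aux_support_reach p haS).symm
        rw [edgeSet_fromEdgeSet]
        constructor
        · exact_mod_cast Finset.mem_sdiff.mpr ⟨hfF, hfnC⟩
        · have := p.edges_subset_edgeSet hf
          rw [hD, edgeSet_fromEdgeSet] at this
          exact this.2
    -- combine
    have hLsplit : (L.card : ℝ) = (C.card : ℝ) + ((L \ C).card : ℝ) := by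
      have := Finset.card_sdiff_add_card_eq_card (Finset.filter_subset (fun e => ∀ v ∈ e, v ∈ SC) L)
      push_cast [← this]
      ring
    have hFsplit : (F.card : ℝ) = ((F ∩ C).card : ℝ) + ((F \ C).card : ℝ) := by
      have := Finset.card_inter_add_card_sdiff F C
      push_cast [← this]
      ring
    rw [hLsplit, hFsplit, mul_add]
    exact add_le_add hC1 hrec

lemma aux_extend_forest :
    ∀ (n : ℕ) (L F : Finset (Sym2 V)), (L \ F).card ≤ n → F ⊆ L →
    (fromEdgeSet (↑F : Set (Sym2 V))).IsAcyclic →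
    ∃ F', F ⊆ F' ∧ F' ⊆ L ∧ (fromEdgeSet (↑F' : Set (Sym2 V))).IsAcyclic ∧
      ∀ e ∈ L, e ∉ F' → ¬ (fromEdgeSet (↑(insert e F') : Set (Sym2 V))).IsAcyclic := by
  intro n
  induction n with
  | zero =>
    intro L F hn hFL hacyc
    have h0 : L \ F = ∅ := Finset.card_eq_zero.mp (Nat.le_zero.mp hn)
    have hLF : L ⊆ F := by
      intro e he
      by_contra hc
      exact (Finset.notMem_empty e) (h0 ▸ Finset.mem_sdiff.mpr ⟨he, hc⟩)
    exact ⟨F, le_refl F, hFL, hacyc, fun e heL heF => absurd (hLF heL) heF⟩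
  | succ n ih =>
    intro L F hn hFL hacyc
    by_cases h : ∃ e ∈ L, e ∉ F ∧ (fromEdgeSet (↑(insert e F) : Set (Sym2 V))).IsAcyclic
    · obtain ⟨e, heL, heF, hac⟩ := h
      have hsub : insert e F ⊆ L := Finset.insert_subset heL hFL
      have hcard : (L \ insert e F).card ≤ n := by
        have h1 : L \ insert e F = (L \ F).erase e := by
          ext x; simp [Finset.mem_sdiff, Finset.mem_erase, Finset.mem_insert]; tauto
        rw [h1]
        have h2 : e ∈ L \ F := Finset.mem_sdiff.mpr ⟨heL, heF⟩
        have := Finset.card_erase_of_mem h2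
        omega
      obtain ⟨F', h1, h2, h3, h4⟩ := ih L (insert e F) hcard hsub hac
      exact ⟨F', (Finset.subset_insert e F).trans h1, h2, h3, h4⟩
    · push_neg at h
      exact ⟨F, le_refl F, hFL, hacyc, h⟩

/-- Tree exchange: if `T` spans `univ`, `s(a,b)` is a `G`-edge not in `T`, `p` is a `T`-path
from `a` to `b` and `f` is an edge of `p`, then swapping `f` for `s(a,b)` yields a spanning
tree. -/
lemma aux_swap {G : SimpleGraph V} {T : Finset (Sym2 V)}
    (hT : IsSpanningTreeOn G Finset.univ T) {a b : V}
    (he : s(a,b) ∈ G.edgeSet) (heT : s(a,b) ∉ T)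
    (p : (fromEdgeSet (↑T : Set (Sym2 V))).Walk a b) (hp : p.IsPath)
    {f : Sym2 V} (hf : f ∈ p.edges) :
    f ∈ T ∧ IsSpanningTreeOn G Finset.univ (insert s(a,b) (T.erase f)) := by
  have hTsub : (↑T : Set (Sym2 V)) ⊆ G.edgeSet := hT.1
  have hacycT : (fromEdgeSet (↑T : Set (Sym2 V))).IsAcyclic := hT.2.2.1
  have hreachT := hT.2.2.2
  have hab : a ≠ b := G.ne_of_adj he
  have hedges : ∀ g ∈ p.edges, g ∈ T := by
    intro g hg
    have := p.edges_subset_edgeSet hg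
    rw [edgeSet_fromEdgeSet] at this
    exact_mod_cast this.1
  have hfT : f ∈ T := hedges f hf
  refine ⟨hfT, ?_⟩
  revert hf hfT
  induction f using Sym2.inductionOn with
  | _ x y =>
    intro hf hfT
    set K := fromEdgeSet (↑(insert s(a,b) T) : Set (Sym2 V)) with hK
    have hTK : (fromEdgeSet (↑T : Set (Sym2 V))) ≤ K := by
      refine fromEdgeSet_mono ?_
      exact_mod_cast Finset.subset_insert _ _
    have hq0 : ∀ g ∈ p.edges, g ∈ K.edgeSet := by
      intro g hg
      exact edgeSet_mono hTK (p.edges_subset_edgeSet hg)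
    set q := p.transfer K hq0 with hqdef
    have hq : q.IsPath := hp.transfer hq0
    have hqe : q.edges = p.edges := p.edges_transfer hq0
    have hKadj : K.Adj b a := by
      rw [hK, fromEdgeSet_adj]
      constructor
      · rw [Sym2.eq_swap]
        exact_mod_cast Finset.mem_insert_self _ _
      · exact hab.symm
    have hnotq : s(b,a) ∉ q.edges := by
      rw [hqe, Sym2.eq_swap]
      intro hcon
      exact heT (hedges _ hcon)
    set c : K.Walk b b := SimpleGraph.Walk.cons hKadj (q : K.Walk a b) with hc
    have hcyc : c.IsCycle := SimpleGraph.Path.cons_isCycle ⟨q, hq⟩ hKadj hnotq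
    have hfc : s(x,y) ∈ c.edges := by
      rw [hc, SimpleGraph.Walk.edges_cons]
      exact List.mem_cons.mpr (Or.inr (hqe ▸ hf))
    set T' := insert s(a,b) (T.erase s(x,y)) with hT'
    set K' := fromEdgeSet (↑T' : Set (Sym2 V)) with hK'
    -- (1) endpoints of the removed edge are reachable in K'
    have h1 : K'.Reachable x y := by
      have h2 := (adj_and_reachable_delete_edges_iff_exists_cycle
        (G := K) (v := x) (w := y)).mpr ⟨b, c, hcyc, hfc⟩
      refine h2.2.mono ?_
      intro u v huv
      obtain ⟨huv1, huv2⟩ := huv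
      rw [hK, fromEdgeSet_adj] at huv1
      rw [hK', fromEdgeSet_adj]
      refine ⟨?_, huv1.2⟩
      have hne : s(u,v) ≠ s(x,y) := by
        intro hcon
        exact huv2 (by rw [fromEdgeSet_adj]; exact ⟨by simp [hcon], huv1.2⟩)
      have := huv1.1
      rcases Finset.mem_insert.mp (by exact_mod_cast this) with heq | hmem
      · exact_mod_cast Finset.mem_insert.mpr (Or.inl heq)
      · exact_mod_cast Finset.mem_insert.mpr (Or.inr (Finset.mem_erase.mpr ⟨hne, hmem⟩))
    -- (2) K' is preconnected
    have h2 : ∀ u w : V, K'.Reachable u w := by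
      intro u w
      refine aux_reach_promote ?_ (hreachT u (Finset.mem_univ u) w (Finset.mem_univ w))
      intro z z' hzz
      rw [fromEdgeSet_adj] at hzz
      by_cases hcase : s(z,z') = s(x,y)
      · rcases Sym2.eq_iff.mp hcase with ⟨rfl, rfl⟩ | ⟨rfl, rfl⟩
        · exact h1
        · exact h1.symm
      · refine SimpleGraph.Adj.reachable ?_
        rw [hK', fromEdgeSet_adj]
        refine ⟨?_, hzz.2⟩
        have hmem' : s(z,z') ∈ T' := by
          rw [hT']
          exact Finset.mem_insert.mpr
            (Or.inr (Finset.mem_erase.mpr ⟨hcase, by exact_mod_cast hzz.1⟩))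
        exact_mod_cast hmem'
    -- (3) K' is acyclic
    have hacycE' : (fromEdgeSet (↑(T.erase s(x,y)) : Set (Sym2 V))).IsAcyclic := by
      refine aux_acyclic_mono (fromEdgeSet_mono ?_) hacycT
      exact_mod_cast Finset.erase_subset _ _
    have h3 : K'.IsAcyclic := by
      intro v c' hc'
      by_cases hin : s(a,b) ∈ c'.edges
      · have h4 := (adj_and_reachable_delete_edges_iff_exists_cycle
          (G := K') (v := a) (w := b)).mpr ⟨v, c', hc', hin⟩
        have h5 : (fromEdgeSet (↑(T.erase s(x,y)) : Set (Sym2 V))).Reachable a b := by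
          refine h4.2.mono ?_
          intro u' v' huv
          obtain ⟨huv1, huv2⟩ := huv
          rw [hK', fromEdgeSet_adj] at huv1
          rw [fromEdgeSet_adj]
          refine ⟨?_, huv1.2⟩
          have hne : s(u',v') ≠ s(a,b) := by
            intro hcon
            exact huv2 (by rw [fromEdgeSet_adj]; exact ⟨by simp [hcon], huv1.2⟩)
          rcases Finset.mem_insert.mp (by exact_mod_cast huv1.1) with heq | hmem
          · exact absurd heq hne
          · exact_mod_cast hmem
        obtain ⟨w₁⟩ := h5
        set p₁ := w₁.toPath with hp₁
        have hp₁edges : ∀ g ∈ (p₁ : (fromEdgeSet (↑(T.erase s(x,y)) : Set (Sym2 V))).Walk a b).edges,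
            g ∈ T.erase s(x,y) := by
          intro g hg
          have := SimpleGraph.Walk.edges_subset_edgeSet _ hg
          rw [edgeSet_fromEdgeSet] at this
          exact_mod_cast this.1
        have hp₂sub : ∀ g ∈ (p₁ : (fromEdgeSet (↑(T.erase s(x,y)) : Set (Sym2 V))).Walk a b).edges,
            g ∈ (fromEdgeSet (↑T : Set (Sym2 V))).edgeSet := by
          intro g hg
          rw [edgeSet_fromEdgeSet]
          refine ⟨?_, ?_⟩
          · exact_mod_cast Finset.erase_subset _ _ (hp₁edges g hg)
          · have := SimpleGraph.Walk.edges_subset_edgeSet _ hg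
            rw [edgeSet_fromEdgeSet] at this
            exact this.2
        set p₂ := (p₁ : (fromEdgeSet (↑(T.erase s(x,y)) : Set (Sym2 V))).Walk a b).transfer
          (fromEdgeSet (↑T : Set (Sym2 V))) hp₂sub with hp₂def
        have hp₂ : p₂.IsPath := (p₁.2).transfer hp₂sub
        have hpeq : p₂ = p := by
          have := hacycT.path_unique ⟨p₂, hp₂⟩ ⟨p, hp⟩
          exact congrArg Subtype.val this
        have hfp₂ : s(x,y) ∈ p₂.edges := by rw [hpeq]; exact hf
        rw [hp₂def, SimpleGraph.Walk.edges_transfer] at hfp₂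
        have := hp₁edges _ hfp₂
        exact absurd (Finset.mem_erase.mp this).1 (by simp)
      · -- cycle avoiding s(a,b) lives in T.erase s(x,y)
        have hsub : ∀ g ∈ c'.edges, g ∈ (fromEdgeSet (↑(T.erase s(x,y)) : Set (Sym2 V))).edgeSet := by
          intro g hg
          have := c'.edges_subset_edgeSet hg
          rw [hK', edgeSet_fromEdgeSet] at this
          rw [edgeSet_fromEdgeSet]
          refine ⟨?_, this.2⟩
          rcases Finset.mem_insert.mp (by exact_mod_cast this.1) with heq | hmem
          · exact absurd (heq ▸ hg) hin
          · exact_mod_cast hmem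
        exact hacycE' (c'.transfer _ hsub) (hc'.transfer hsub)
    -- assemble
    refine ⟨?_, ?_, h3, ?_⟩
    · intro g hg
      rcases Finset.mem_insert.mp (by exact_mod_cast hg) with heq | hmem
      · rw [heq]; exact he
      · exact hTsub (by exact_mod_cast (Finset.erase_subset _ _ hmem))
    · intro e' he' v hv
      exact Finset.mem_univ v
    · intro u hu w hw
      exact h2 u w

end AuxLemmas

section Analytic
set_option linter.unusedSectionVars false
set_option linter.unusedVariables false
set_option maxHeartbeats 1000000
open SimpleGraph

set_option linter.unusedSectionVars false
set_option linter.unusedVariables false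
set_option maxHeartbeats 1000000
open SimpleGraph

variable {G : SimpleGraph V}

lemma aux_inducedEdges_univ (G : SimpleGraph V) :
    inducedEdges G Finset.univ = G.edgeFinset := by
  rw [inducedEdges]
  exact Finset.filter_true_of_mem (fun e _ => fun v _ => Finset.mem_univ v)

lemma aux_edgeProb_nonneg {S : Finset V} (μ : TreePMFOn G S) (e : Sym2 V) :
    0 ≤ edgeProbOn μ e := by
  refine Finset.sum_nonneg (fun T _ => ?_)
  by_cases h : e ∈ T
  · simpa [h] using μ.nonneg T
  · simp [h]

lemma aux_supp_subset (μ : TreePMFOn G Finset.univ) {T : Finset (Sym2 V)}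
    (h : μ.toFun T ≠ 0) : T ⊆ G.edgeFinset := by
  intro e he
  exact SimpleGraph.mem_edgeFinset.mpr ((μ.supp T h).1 (by exact_mod_cast he))

lemma aux_tree_card [Nonempty V] {T : Finset (Sym2 V)}
    (h : IsSpanningTreeOn G Finset.univ T) : T.card + 1 = Fintype.card V := by
  have htree : (fromEdgeSet (↑T : Set (Sym2 V))).IsTree := by
    constructor
    · exact SimpleGraph.Connected.mk
        (fun u v => h.2.2.2 u (Finset.mem_univ u) v (Finset.mem_univ v))
    · exact h.2.2.1
  have hset : (fromEdgeSet (↑T : Set (Sym2 V))).edgeSet = (↑T : Set (Sym2 V)) := by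
    rw [edgeSet_fromEdgeSet]
    ext e
    simp only [Set.mem_diff, Set.mem_setOf_eq, and_iff_left_iff_imp]
    intro he
    exact G.not_isDiag_of_mem_edgeSet (h.1 he)
  have hfin : (fromEdgeSet (↑T : Set (Sym2 V))).edgeFinset = T := by
    rw [SimpleGraph.edgeFinset]
    rw [Set.toFinset_congr hset]
    exact Finset.toFinset_coe T
  rw [← hfin]
  exact htree.card_edgeFinset

/-- Sum of edge probabilities over a set of edges. -/
lemma aux_sum_over (μ : TreePMFOn G Finset.univ) (L : Finset (Sym2 V)) :
    ∑ e ∈ L, edgeProbOn μ e =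
      ∑ T : Finset (Sym2 V), μ.toFun T * ((L ∩ T).card : ℝ) := by
  unfold edgeProbOn
  rw [Finset.sum_comm]
  refine Finset.sum_congr rfl (fun T _ => ?_)
  rw [Finset.sum_ite_mem, Finset.sum_const, nsmul_eq_mul, mul_comm]

lemma aux_row_sum [Nonempty V] (μ : TreePMFOn G Finset.univ) :
    ∑ e ∈ G.edgeFinset, edgeProbOn μ e = ((Fintype.card V - 1 : ℕ) : ℝ) := by
  rw [aux_sum_over]
  have h1 : ∀ T : Finset (Sym2 V),
      μ.toFun T * ((G.edgeFinset ∩ T).card : ℝ) =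
      μ.toFun T * ((Fintype.card V - 1 : ℕ) : ℝ) := by
    intro T
    by_cases hT : μ.toFun T = 0
    · rw [hT]; ring
    · have hsub : T ⊆ G.edgeFinset := aux_supp_subset μ hT
      have : G.edgeFinset ∩ T = T := Finset.inter_eq_right.mpr hsub
      rw [this]
      have hcard := aux_tree_card (μ.supp T hT)
      congr 2
      omega
  rw [Finset.sum_congr rfl (fun T _ => h1 T), ← Finset.sum_mul, μ.sum_one, one_mul]

lemma aux_var_compare [Nonempty V] {μ ν : TreePMFOn G Finset.univ}
    (hE : G.edgeFinset.Nonempty) (h : edgeVarOn μ ≤ edgeVarOn ν) :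
    ∑ e ∈ G.edgeFinset, (edgeProbOn μ e) ^ 2 ≤ ∑ e ∈ G.edgeFinset, (edgeProbOn ν e) ^ 2 := by
  rw [edgeVarOn, edgeVarOn, aux_inducedEdges_univ] at h
  rw [aux_row_sum μ, aux_row_sum ν] at h
  have hm : (0 : ℝ) < (G.edgeFinset.card : ℝ) := by
    exact_mod_cast Finset.card_pos.mpr hE
  have h2 : (∑ e ∈ G.edgeFinset, (edgeProbOn μ e) ^ 2) / (G.edgeFinset.card : ℝ) ≤
      (∑ e ∈ G.edgeFinset, (edgeProbOn ν e) ^ 2) / (G.edgeFinset.card : ℝ) := by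
    linarith
  have := mul_le_mul_of_nonneg_right h2 (le_of_lt hm)
  rw [div_mul_cancel₀ _ (ne_of_gt hm), div_mul_cancel₀ _ (ne_of_gt hm)] at this
  exact this

/-- First-order optimality: any spanning tree has η-weight at least `∑ η²`. -/
lemma aux_first_order [Nonempty V] {μ : TreePMFOn G Finset.univ}
    (hfair : IsFairOn μ) (hE : G.edgeFinset.Nonempty) {T₀ : Finset (Sym2 V)}
    (hT₀ : IsSpanningTreeOn G Finset.univ T₀) :
    ∑ e ∈ G.edgeFinset, (edgeProbOn μ e) ^ 2 ≤
      ∑ e ∈ G.edgeFinset, (if e ∈ T₀ then edgeProbOn μ e else 0) := by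
  set E := G.edgeFinset with hEdef
  set η : Sym2 V → ℝ := edgeProbOn μ with hη
  set A : ℝ := ∑ e ∈ E, (η e) ^ 2 with hA
  set W : ℝ := ∑ e ∈ E, (if e ∈ T₀ then η e else 0) with hW
  set B : ℝ := ∑ e ∈ E, ((if e ∈ T₀ then (1:ℝ) else 0) - η e) ^ 2 with hB
  have hBnn : 0 ≤ B := Finset.sum_nonneg (fun e _ => sq_nonneg _)
  -- for every t ∈ (0,1], 0 ≤ 2t(W - A) + t²B
  have key : ∀ t : ℝ, 0 < t → t ≤ 1 → 0 ≤ 2*t*(W - A) + t^2*B := by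
    intro t ht0 ht1
    set ν : TreePMFOn G Finset.univ := {
      toFun := fun T => (1-t) * μ.toFun T + t * (if T = T₀ then 1 else 0),
      nonneg := by
        intro T
        refine add_nonneg (mul_nonneg (by linarith) (μ.nonneg T)) (mul_nonneg (le_of_lt ht0) ?_)
        by_cases h : T = T₀ <;> simp [h]
      supp := by
        intro T h
        by_cases hT : T = T₀
        · subst hT; exact hT₀
        · simp only [if_neg hT, mul_zero, add_zero] at h
          exact μ.supp T (fun h0 => h (by rw [h0]; ring))
      sum_one := by
        rw [Finset.sum_add_distrib, ← Finset.mul_sum, ← Finset.mul_sum, μ.sum_one]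
        rw [Finset.sum_ite_eq' Finset.univ T₀ (fun _ => (1:ℝ))]
        simp
    } with hν
    have hprob : ∀ e : Sym2 V, edgeProbOn ν e =
        (1-t) * η e + t * (if e ∈ T₀ then (1:ℝ) else 0) := by
      intro e
      unfold edgeProbOn
      have hsplit : ∀ T : Finset (Sym2 V),
          (if e ∈ T then ν.toFun T else 0) =
          (1-t) * (if e ∈ T then μ.toFun T else 0)
            + t * (if T = T₀ then (if e ∈ T₀ then (1:ℝ) else 0) else 0) := by
        intro T
        by_cases heT : e ∈ T
        · by_cases hTT : T = T₀
          · subst hTT; simp [heT, hν]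
          · simp [heT, hTT, hν]
        · by_cases hTT : T = T₀
          · subst hTT; simp [heT, hν]
          · simp [heT, hTT, hν]
      rw [Finset.sum_congr rfl (fun T _ => hsplit T), Finset.sum_add_distrib,
        ← Finset.mul_sum, ← Finset.mul_sum]
      congr 1
      rw [Finset.sum_ite_eq' Finset.univ T₀ (fun _ => (if e ∈ T₀ then (1:ℝ) else 0))]
      simp
    have hcmp := aux_var_compare hE (hfair ν)
    have hexp : ∑ e ∈ E, (edgeProbOn ν e) ^ 2 = A + 2*t*(W - A) + t^2*B := by
      have hptw : ∀ e ∈ E, (edgeProbOn ν e) ^ 2 =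
          (η e)^2 + 2*t*((if e ∈ T₀ then η e else 0) - (η e)^2)
            + t^2*((if e ∈ T₀ then (1:ℝ) else 0) - η e)^2 := by
        intro e _
        rw [hprob e]
        by_cases h : e ∈ T₀ <;> · simp only [h, if_true, if_false]; ring
      rw [Finset.sum_congr rfl hptw, Finset.sum_add_distrib, Finset.sum_add_distrib,
        ← Finset.mul_sum, ← Finset.mul_sum, Finset.sum_sub_distrib]
    rw [hexp] at hcmp
    linarith
  -- conclude W ≥ A
  by_contra hcon
  push_neg at hcon
  set a : ℝ := A - W with ha
  have ha0 : 0 < a := by rw [ha]; linarith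
  set t : ℝ := min 1 (a / (B + 1)) with ht
  have hB1 : (0:ℝ) < B + 1 := by linarith
  have ht0 : 0 < t := lt_min one_pos (div_pos ha0 hB1)
  have ht1 : t ≤ 1 := min_le_left _ _
  have htB : t * (B + 1) ≤ a := by
    have := min_le_right 1 (a / (B + 1))
    calc t * (B+1) ≤ (a / (B+1)) * (B+1) := mul_le_mul_of_nonneg_right this (le_of_lt hB1)
      _ = a := by field_simp
  have := key t ht0 ht1
  nlinarith [mul_pos ht0 ht0, mul_pos ht0 ha0]

/-- Every tree in the support of a fair pmf has η-weight exactly `∑ η²`. -/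
lemma aux_support_weight [Nonempty V] {μ : TreePMFOn G Finset.univ}
    (hfair : IsFairOn μ) (hE : G.edgeFinset.Nonempty) {T : Finset (Sym2 V)}
    (hT : μ.toFun T ≠ 0) :
    ∑ e ∈ G.edgeFinset, (if e ∈ T then edgeProbOn μ e else 0) =
      ∑ e ∈ G.edgeFinset, (edgeProbOn μ e) ^ 2 := by
  set E := G.edgeFinset with hEdef
  set η : Sym2 V → ℝ := edgeProbOn μ with hη
  set A : ℝ := ∑ e ∈ E, (η e) ^ 2 with hA
  set W : Finset (Sym2 V) → ℝ := fun T' => ∑ e ∈ E, (if e ∈ T' then η e else 0) with hWdef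
  have h1 : ∑ T' : Finset (Sym2 V), μ.toFun T' * W T' = A := by
    have hstep : ∀ T' : Finset (Sym2 V), μ.toFun T' * W T' =
        ∑ e ∈ E, (η e) * (if e ∈ T' then μ.toFun T' else 0) := by
      intro T'
      rw [hWdef]
      rw [Finset.mul_sum]
      refine Finset.sum_congr rfl (fun e _ => ?_)
      by_cases h : e ∈ T' <;> simp [h] <;> ring
    rw [Finset.sum_congr rfl (fun T' _ => hstep T'), Finset.sum_comm]
    rw [hA]
    refine Finset.sum_congr rfl (fun e _ => ?_)
    rw [← Finset.mul_sum]
    rw [sq]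
    congr 1
  have h2 : ∑ T' : Finset (Sym2 V), μ.toFun T' * (W T' - A) = 0 := by
    have : ∀ T' : Finset (Sym2 V), μ.toFun T' * (W T' - A)
        = μ.toFun T' * W T' - μ.toFun T' * A := fun T' => by ring
    rw [Finset.sum_congr rfl (fun T' _ => this T'), Finset.sum_sub_distrib, h1,
      ← Finset.sum_mul, μ.sum_one]
    ring
  have h3 : ∀ T' ∈ Finset.univ (α := Finset (Sym2 V)), 0 ≤ μ.toFun T' * (W T' - A) := by
    intro T' _
    by_cases hT' : μ.toFun T' = 0
    · rw [hT']; simp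
    · have hWA : A ≤ W T' := aux_first_order hfair hE (μ.supp T' hT')
      exact mul_nonneg (μ.nonneg T') (by linarith)
  have h4 := (Finset.sum_eq_zero_iff_of_nonneg h3).mp h2 T (Finset.mem_univ T)
  rcases mul_eq_zero.mp h4 with h | h
  · exact absurd h hT
  · have : W T = A := by linarith
    exact this

end Analytic

section Main
set_option linter.unusedSectionVars false
set_option linter.unusedVariables false
set_option maxHeartbeats 1000000
open SimpleGraph

set_option linter.unusedSectionVars false
set_option linter.unusedVariables false
set_option maxHeartbeats 1000000
open SimpleGraph

variable {G : SimpleGraph V}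

lemma aux_weight_swap {η : Sym2 V → ℝ} {E T : Finset (Sym2 V)} (hTE : T ⊆ E)
    {e f : Sym2 V} (heE : e ∈ E) (heT : e ∉ T) (hfT : f ∈ T)
    (hT'E : insert e (T.erase f) ⊆ E) :
    ∑ g ∈ E, (if g ∈ insert e (T.erase f) then η g else 0) =
      (∑ g ∈ E, (if g ∈ T then η g else 0)) + η e - η f := by
  rw [Finset.sum_ite_mem, Finset.sum_ite_mem,
    Finset.inter_eq_right.mpr hTE, Finset.inter_eq_right.mpr hT'E]
  have hef : e ∉ T.erase f := fun h => heT (Finset.erase_subset _ _ h)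
  rw [Finset.sum_insert hef, Finset.sum_erase_eq_sub hfT]
  ring

lemma aux_eta_ge [Nonempty V] {μ : TreePMFOn G Finset.univ} (hfair : IsFairOn μ)
    (S : Finset V) (hmax : ∀ S', InH G S' → density G S' ≤ density G S)
    (hE : G.edgeFinset.Nonempty) (hpos : 0 < density G S) :
    ∀ e ∈ G.edgeFinset, (density G S)⁻¹ ≤ edgeProbOn μ e := by
  set E := G.edgeFinset with hEdef
  set η : Sym2 V → ℝ := edgeProbOn μ with hη
  set θ : ℝ := density G S with hθ
  by_contra hcon
  push_neg at hcon
  obtain ⟨e₀, he₀, hlt₀⟩ := hcon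
  obtain ⟨em, hem, hminp⟩ := E.exists_min_image η ⟨e₀, he₀⟩
  set t : ℝ := η em with ht
  have htlt : t < θ⁻¹ := lt_of_le_of_lt (hminp e₀ he₀) hlt₀
  set L : Finset (Sym2 V) := E.filter (fun e => η e = t) with hL
  have hLsub : L ⊆ E := Finset.filter_subset _ _
  have hemL : em ∈ L := Finset.mem_filter.mpr ⟨hem, rfl⟩
  have hLval : ∀ e ∈ L, η e = t := fun e he => (Finset.mem_filter.mp he).2
  have hmain : ∀ T : Finset (Sym2 V), μ.toFun T ≠ 0 →
      (L.card : ℝ) ≤ θ * ((L ∩ T).card : ℝ) := by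
    intro T hT
    have hTsp := μ.supp T hT
    have hTE : T ⊆ E := aux_supp_subset μ hT
    have hacycT : (fromEdgeSet (↑T : Set (Sym2 V))).IsAcyclic := hTsp.2.2.1
    have hacycF : (fromEdgeSet (↑(L ∩ T) : Set (Sym2 V))).IsAcyclic := by
      refine aux_acyclic_mono (fromEdgeSet_mono ?_) hacycT
      exact_mod_cast Finset.inter_subset_right
    have hsteppair : ∀ x y : V, s(x,y) ∈ L →
        (fromEdgeSet (↑(L ∩ T) : Set (Sym2 V))).Reachable x y := by
      intro x y hxyL
      have hxyE : s(x,y) ∈ G.edgeSet := SimpleGraph.mem_edgeFinset.mp (hLsub hxyL)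
      have hne : x ≠ y := ((SimpleGraph.mem_edgeSet _).mp hxyE).ne
      by_cases hT' : s(x,y) ∈ T
      · refine SimpleGraph.Adj.reachable ?_
        rw [fromEdgeSet_adj]
        exact ⟨by exact_mod_cast Finset.mem_inter.mpr ⟨hxyL, hT'⟩, hne⟩
      · obtain ⟨w0⟩ := hTsp.2.2.2 x (Finset.mem_univ x) y (Finset.mem_univ y)
        set p := w0.toPath with hp
        have hpedgesT : ∀ g ∈ (p : (fromEdgeSet (↑T : Set (Sym2 V))).Walk x y).edges,
            g ∈ T := by
          intro g hg
          have := SimpleGraph.Walk.edges_subset_edgeSet _ hg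
          rw [edgeSet_fromEdgeSet] at this
          exact_mod_cast this.1
        by_cases hall : ∀ g ∈ (p : (fromEdgeSet (↑T : Set (Sym2 V))).Walk x y).edges, g ∈ L
        · refine ⟨(p : (fromEdgeSet (↑T : Set (Sym2 V))).Walk x y).transfer _ ?_⟩
          intro g hg
          rw [edgeSet_fromEdgeSet]
          constructor
          · exact_mod_cast Finset.mem_inter.mpr ⟨hall g hg, hpedgesT g hg⟩
          · have := SimpleGraph.Walk.edges_subset_edgeSet _ hg
            rw [edgeSet_fromEdgeSet] at this
            exact this.2
        · exfalso
          push_neg at hall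
          obtain ⟨f, hf, hfnL⟩ := hall
          have hfT : f ∈ T := hpedgesT f hf
          have hfE : f ∈ E := hTE hfT
          have hft : t < η f :=
            lt_of_le_of_ne (hminp f hfE) (fun h => hfnL (Finset.mem_filter.mpr ⟨hfE, h.symm⟩))
          obtain ⟨hfT', hsw⟩ := aux_swap hTsp hxyE hT'
            (p : (fromEdgeSet (↑T : Set (Sym2 V))).Walk x y) p.2 hf
          have h1 := aux_first_order hfair hE hsw
          have h2 := aux_support_weight hfair hE hT
          have hT'E : insert s(x,y) (T.erase f) ⊆ E := by
            intro g hg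
            rcases Finset.mem_insert.mp hg with rfl | hmem
            · exact hLsub hxyL
            · exact hTE (Finset.erase_subset _ _ hmem)
          have h3 := aux_weight_swap (η := η) hTE (hLsub hxyL) hT' hfT hT'E
          have hxyt : η s(x,y) = t := hLval _ hxyL
          rw [h2] at h3
          rw [h3, hxyt] at h1
          linarith
    have hreach : ∀ e ∈ L, ∀ x ∈ e, ∀ y ∈ e,
        (fromEdgeSet (↑(L ∩ T) : Set (Sym2 V))).Reachable x y := by
      intro e he x hx y hy
      revert he hx hy
      induction e using Sym2.inductionOn with
      | _ u v =>
        intro he hx hy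
        rcases Sym2.mem_iff.mp hx with rfl | rfl <;> rcases Sym2.mem_iff.mp hy with rfl | rfl
        · exact Reachable.refl _
        · exact hsteppair _ _ he
        · exact (hsteppair _ _ he).symm
        · exact Reachable.refl _
    have := aux_dens_bound G S hmax L.card L (L ∩ T) le_rfl hLsub
      Finset.inter_subset_left hacycF hreach
    exact this
  -- sum over L
  have hsum := aux_sum_over μ L
  have hleft : ∑ e ∈ L, edgeProbOn μ e = t * (L.card : ℝ) := by
    rw [Finset.sum_congr rfl (fun e he => hLval e he), Finset.sum_const, nsmul_eq_mul, mul_comm]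
  have hLpos : (0:ℝ) < (L.card : ℝ) := by
    exact_mod_cast Finset.card_pos.mpr ⟨em, hemL⟩
  have hperT : ∀ T : Finset (Sym2 V),
      μ.toFun T * ((L.card : ℝ) / θ) ≤ μ.toFun T * ((L ∩ T).card : ℝ) := by
    intro T
    by_cases hT : μ.toFun T = 0
    · rw [hT]; ring_nf; exact le_refl _
    · refine mul_le_mul_of_nonneg_left ?_ (μ.nonneg T)
      rw [div_le_iff₀ hpos]
      calc (L.card : ℝ) ≤ θ * ((L ∩ T).card : ℝ) := hmain T hT
        _ = ((L ∩ T).card : ℝ) * θ := by ring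
  have hsum2 : (L.card : ℝ) / θ ≤ t * (L.card : ℝ) := by
    calc (L.card : ℝ) / θ = ∑ T : Finset (Sym2 V), μ.toFun T * ((L.card : ℝ) / θ) := by
          rw [← Finset.sum_mul, μ.sum_one, one_mul]
      _ ≤ ∑ T : Finset (Sym2 V), μ.toFun T * ((L ∩ T).card : ℝ) :=
          Finset.sum_le_sum (fun T _ => hperT T)
      _ = ∑ e ∈ L, edgeProbOn μ e := hsum.symm
      _ = t * (L.card : ℝ) := hleft
  have : θ⁻¹ ≤ t := by
    have h5 : θ⁻¹ * (L.card : ℝ) ≤ t * (L.card : ℝ) := by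
      calc θ⁻¹ * (L.card : ℝ) = (L.card : ℝ) / θ := by
            rw [inv_eq_one_div]; ring
        _ ≤ t * (L.card : ℝ) := hsum2
    exact le_of_mul_le_mul_right h5 hLpos
  linarith

lemma aux_sum_E0 (μ : TreePMFOn G Finset.univ) (S : Finset V) (hInH : InH G S) :
    ∑ e ∈ inducedEdges G S, edgeProbOn μ e ≤ (S.card : ℝ) - 1 := by
  set E₀ := inducedEdges G S with hE₀
  have hE0sub : E₀ ⊆ G.edgeFinset := Finset.filter_subset _ _
  have hend : ∀ e ∈ E₀, ∀ v ∈ e, v ∈ S := fun e he => (Finset.mem_filter.mp he).2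
  have hSne : S.Nonempty := by
    obtain ⟨⟨v, hv⟩⟩ := hInH.2.nonempty
    exact ⟨v, by exact_mod_cast hv⟩
  rw [aux_sum_over]
  have hper : ∀ T : Finset (Sym2 V),
      μ.toFun T * ((E₀ ∩ T).card : ℝ) ≤ μ.toFun T * ((S.card : ℝ) - 1) := by
    intro T
    by_cases hT : μ.toFun T = 0
    · rw [hT]; ring_nf; exact le_refl _
    refine mul_le_mul_of_nonneg_left ?_ (μ.nonneg T)
    have hTsp := μ.supp T hT
    have hacycF : (fromEdgeSet (↑(E₀ ∩ T) : Set (Sym2 V))).IsAcyclic := by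
      refine aux_acyclic_mono (fromEdgeSet_mono ?_) hTsp.2.2.1
      exact_mod_cast Finset.inter_subset_right
    obtain ⟨F', hFF', hF'E0, hF'acyc, hF'max⟩ :=
      aux_extend_forest (E₀ \ (E₀ ∩ T)).card E₀ (E₀ ∩ T) le_rfl
        Finset.inter_subset_left hacycF
    have hstep : ∀ x y : V, (fromEdgeSet (↑E₀ : Set (Sym2 V))).Adj x y →
        (fromEdgeSet (↑F' : Set (Sym2 V))).Reachable x y := by
      intro x y hxy
      rw [fromEdgeSet_adj] at hxy
      have hmem : s(x,y) ∈ E₀ := by exact_mod_cast hxy.1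
      by_cases hF'mem : s(x,y) ∈ F'
      · exact SimpleGraph.Adj.reachable (by rw [fromEdgeSet_adj]; exact ⟨by exact_mod_cast hF'mem, hxy.2⟩)
      · exact aux_reach_of_insert_not_acyclic hxy.2 hF'acyc (hF'max _ hmem hF'mem)
    have hreachE0 : ∀ u ∈ S, ∀ v ∈ S, (fromEdgeSet (↑F' : Set (Sym2 V))).Reachable u v := by
      intro u hu v hv
      refine aux_reach_promote hstep ?_
      -- reachability in fromEdgeSet E₀ from induced connectivity
      have hconn := hInH.2
      have hr : (G.induce (↑S : Set V)).Reachable ⟨u, by exact_mod_cast hu⟩ ⟨v, by exact_mod_cast hv⟩ :=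
        hconn.preconnected _ _
      have hφadj : ∀ {a b : (↑S : Set V)}, (G.induce (↑S : Set V)).Adj a b →
          (fromEdgeSet (↑E₀ : Set (Sym2 V))).Adj a.val b.val := by
        intro a b hab
        have hGadj : G.Adj a.val b.val := hab
        rw [fromEdgeSet_adj]
        constructor
        · have : s(a.val, b.val) ∈ E₀ := by
            rw [hE₀, inducedEdges, Finset.mem_filter]
            refine ⟨SimpleGraph.mem_edgeFinset.mpr hGadj, ?_⟩
            intro w hw
            rcases Sym2.mem_iff.mp hw with rfl | rfl
            · exact_mod_cast a.2
            · exact_mod_cast b.2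
          exact_mod_cast this
        · exact hGadj.ne
      obtain ⟨pw⟩ := hr
      clear hstep
      generalize hu1 : (⟨u, by exact_mod_cast hu⟩ : (↑S : Set V)) = u1 at pw
      generalize hv1 : (⟨v, by exact_mod_cast hv⟩ : (↑S : Set V)) = v1 at pw
      have hgen : ∀ (a b : (↑S : Set V)) (q : (G.induce (↑S : Set V)).Walk a b),
          (fromEdgeSet (↑E₀ : Set (Sym2 V))).Reachable a.val b.val := by
        intro a b q
        induction q with
        | nil => exact Reachable.refl _
        | cons hadj q ih => exact (hφadj hadj).reachable.trans ih
      have := hgen u1 v1 pw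
      rw [← hu1, ← hv1] at this
      exact this
    have hcount := aux_tree_count (G := G) hSne
      (fun e he => SimpleGraph.mem_edgeFinset.mp (hE0sub (hF'E0 (by exact_mod_cast he))))
      (fun e he => hend e (hF'E0 he)) hF'acyc hreachE0
    have hcard : (E₀ ∩ T).card ≤ F'.card := Finset.card_le_card hFF'
    have : ((E₀ ∩ T).card : ℝ) ≤ (F'.card : ℝ) := by exact_mod_cast hcard
    have hc2 : (F'.card : ℝ) = (S.card : ℝ) - 1 := by
      have := hcount
      push_cast [← this]
      ring
    linarith
  calc ∑ T : Finset (Sym2 V), μ.toFun T * ((E₀ ∩ T).card : ℝ)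
      ≤ ∑ T : Finset (Sym2 V), μ.toFun T * ((S.card : ℝ) - 1) :=
        Finset.sum_le_sum (fun T _ => hper T)
    _ = (S.card : ℝ) - 1 := by rw [← Finset.sum_mul, μ.sum_one, one_mul]

end Main

set_option maxHeartbeats 1000000 in
/-- If `H₀` (induced on `S`) is a minimal 1-densest subgraph of the finite
connected simple graph `G` with `H₀ ≠ G`, then for every fair pmf `μ*` on the spanning
trees of `G` and every edge `e` of `H₀`, the edge probability is
`η_{μ*}(e) = (|V(H₀)|-1)/|E(H₀)| = θ(H₀)⁻¹`. -/
theorem edgeProb_eq_inv_density_of_minimalDensest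
    {V : Type*} [Fintype V] [DecidableEq V] (G : SimpleGraph V) (hG : G.Connected)
    (S : Finset V) (hmin : IsMinimalDensest G S) (hne : S ≠ Finset.univ) :
    ∀ μ : TreePMFOn G Finset.univ, IsFairOn μ →
      ∀ e ∈ inducedEdges G S,
        edgeProbOn μ e = ((S.card : ℝ) - 1) / ((inducedEdges G S).card : ℝ) ∧
        edgeProbOn μ e = (density G S)⁻¹ := by
  intro μ hfair e he
  classical
  have hnev : Nonempty V := hG.nonempty
  have hInH : InH G S := hmin.1.1
  have hmax : ∀ S', InH G S' → density G S' ≤ density G S := hmin.1.2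
  set E₀ := inducedEdges G S with hE₀
  have hE0ne : E₀.Nonempty := hInH.1
  have hE0sub : E₀ ⊆ G.edgeFinset := Finset.filter_subset _ _
  have hEne : G.edgeFinset.Nonempty := ⟨e, hE0sub he⟩
  have hS2 : 2 ≤ S.card := by
    obtain ⟨e₀, he₀⟩ := hE0ne
    revert he₀
    induction e₀ using Sym2.inductionOn with
    | _ x y =>
      intro he₀
      have hmem := Finset.mem_filter.mp he₀
      have hxS : x ∈ S := hmem.2 x (Sym2.mem_mk_left x y)
      have hyS : y ∈ S := hmem.2 y (Sym2.mem_mk_right x y)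
      have hne' : x ≠ y := (SimpleGraph.mem_edgeFinset.mp hmem.1).ne
      exact Finset.one_lt_card.mpr ⟨x, hxS, y, hyS, hne'⟩
  have hm0 : (0:ℝ) < (E₀.card : ℝ) := by
    exact_mod_cast Finset.card_pos.mpr hE0ne
  have hs1 : (0:ℝ) < (S.card : ℝ) - 1 := by
    have : (2:ℝ) ≤ (S.card : ℝ) := by exact_mod_cast hS2
    linarith
  have hdens : density G S = ((E₀.card : ℝ)) / ((S.card : ℝ) - 1) := rfl
  have hpos : 0 < density G S := by rw [hdens]; exact div_pos hm0 hs1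
  have hge := aux_eta_ge hfair S hmax hEne hpos
  have hsum := aux_sum_E0 μ S hInH
  have hinv : (density G S)⁻¹ = ((S.card : ℝ) - 1) / ((E₀.card : ℝ)) := by
    rw [hdens, inv_div]
  set c : ℝ := ((S.card : ℝ) - 1) / ((E₀.card : ℝ)) with hc
  have hgec : ∀ e' ∈ E₀, c ≤ edgeProbOn μ e' := by
    intro e' he'
    have := hge e' (hE0sub he')
    rw [hinv] at this
    exact this
  have hsumc : ∑ _e ∈ E₀, c = (S.card : ℝ) - 1 := by
    rw [Finset.sum_const, nsmul_eq_mul, hc]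
    field_simp
  have hnonneg : ∀ e' ∈ E₀, 0 ≤ edgeProbOn μ e' - c := by
    intro e' he'
    linarith [hgec e' he']
  have hzero : ∑ e' ∈ E₀, (edgeProbOn μ e' - c) = 0 := by
    have h1 : ∑ e' ∈ E₀, (edgeProbOn μ e' - c) ≤ 0 := by
      rw [Finset.sum_sub_distrib, hsumc]
      linarith
    have h2 : 0 ≤ ∑ e' ∈ E₀, (edgeProbOn μ e' - c) := Finset.sum_nonneg hnonneg
    linarith
  have hfin := (Finset.sum_eq_zero_iff_of_nonneg hnonneg).mp hzero e he
  constructor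
  · linarith
  · rw [hinv]; linarith
end
end

section
/- Let G be a finite connected simple graph with at least one edge. If G has the strict 1-density property, then G is homogeneous: there exists a pmf μ on the spanning trees of G whose edge probabilities η_μ(e) are constant over all edges e of G. -/
open scoped Classical

noncomputable section

variable {V : Type*} [Fintype V] [DecidableEq V]

open SimpleGraph
set_option linter.unusedSectionVars false
set_option maxHeartbeats 1000000

/-- helper -/
lemma reach_of_adj_reach {G H : SimpleGraph V} (h : ∀ x y, G.Adj x y → H.Reachable x y)
    {u v : V} (huv : G.Reachable u v) : H.Reachable u v := by
  obtain ⟨p⟩ := huv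
  induction p with
  | nil => exact Reachable.refl _
  | cons ha _ ih => exact (h _ _ ha).trans ih

lemma acyclic_mono {G H : SimpleGraph V} (hle : G ≤ H) (hH : H.IsAcyclic) : G.IsAcyclic := by
  intro v p hp
  exact hH (p.mapLe hle) (hp.mapLe hle)
lemma reach_insert_decomp (F : Finset (Sym2 V)) (x y : V) {u v : V}
    (h : (fromEdgeSet (↑(insert s(x,y) F) : Set (Sym2 V))).Reachable u v) :
    (fromEdgeSet (↑F : Set (Sym2 V))).Reachable u v ∨
    ((fromEdgeSet (↑F : Set (Sym2 V))).Reachable u x ∧ (fromEdgeSet (↑F : Set (Sym2 V))).Reachable y v) ∨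
    ((fromEdgeSet (↑F : Set (Sym2 V))).Reachable u y ∧ (fromEdgeSet (↑F : Set (Sym2 V))).Reachable x v) := by
  set R := (fromEdgeSet (↑F : Set (Sym2 V))) with hR
  obtain ⟨p⟩ := h
  induction p with
  | nil => exact Or.inl (Reachable.refl _)
  | @cons a b c ha p ih =>
    rw [fromEdgeSet_adj, Finset.coe_insert, Set.mem_insert_iff] at ha
    obtain ⟨hmem | hmem, hne⟩ := ha
    · rw [Sym2.eq_iff] at hmem
      rcases ih with hreach | ⟨h1, h2⟩ | ⟨h1, h2⟩ <;>
        rcases hmem with ⟨ha', hb'⟩ | ⟨ha', hb'⟩ <;> subst ha' <;> subst hb' <;>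
        first
        | exact Or.inr (Or.inl ⟨Reachable.refl _, hreach⟩)
        | exact Or.inr (Or.inr ⟨Reachable.refl _, hreach⟩)
        | exact Or.inl h2
        | exact Or.inl (h1.symm.trans h2)
    · have hab : R.Reachable a b := ((fromEdgeSet_adj _).mpr ⟨hmem, hne⟩).reachable
      rcases ih with hreach | ⟨h1, h2⟩ | ⟨h1, h2⟩
      · exact Or.inl (hab.trans hreach)
      · exact Or.inr (Or.inl ⟨hab.trans h1, h2⟩)
      · exact Or.inr (Or.inr ⟨hab.trans h1, h2⟩)
lemma card_cc_add_card_le (F : Finset (Sym2 V)) :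
    Fintype.card V ≤ Nat.card (fromEdgeSet (↑F : Set (Sym2 V))).ConnectedComponent + F.card := by
  induction F using Finset.induction_on with
  | empty =>
    have hbij : Function.Bijective
        ((fromEdgeSet (↑(∅ : Finset (Sym2 V)) : Set (Sym2 V))).connectedComponentMk) := by
      constructor
      · intro u v h
        obtain ⟨p⟩ := ConnectedComponent.exact h
        cases p with
        | nil => rfl
        | cons ha _ => simp [fromEdgeSet_adj] at ha
      · intro c
        obtain ⟨z, hz⟩ := Quot.exists_rep c
        exact ⟨z, hz⟩
    have hcV := Nat.card_eq_of_bijective _ hbij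
    rw [Finset.card_empty, Nat.add_zero, ← hcV, Nat.card_eq_fintype_card]
  | @insert a F haF IH =>
    induction a using Sym2.ind with
    | _ x y =>
      have hkey : Nat.card (fromEdgeSet (↑F : Set (Sym2 V))).ConnectedComponent ≤
          Nat.card (fromEdgeSet (↑(insert s(x,y) F) : Set (Sym2 V))).ConnectedComponent + 1 := by
        set GF := fromEdgeSet (↑F : Set (Sym2 V)) with hGF
        set GI := fromEdgeSet (↑(insert s(x,y) F) : Set (Sym2 V)) with hGI
        haveI : Fintype GF.ConnectedComponent := Fintype.ofFinite _
        haveI : Fintype GI.ConnectedComponent := Fintype.ofFinite _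
        have hle : GF ≤ GI := fromEdgeSet_mono (by simp [Finset.coe_insert, Set.subset_insert])
        set φ : GF.ConnectedComponent → GI.ConnectedComponent :=
          ConnectedComponent.lift (fun v => GI.connectedComponentMk v)
            (fun v w p _ => ConnectedComponent.sound (p.reachable.mono hle)) with hφ
        have hinj : Set.InjOn φ ↑(Finset.univ.erase (GF.connectedComponentMk x)) := by
          intro c hc d hd hcd
          obtain ⟨zc, rfl⟩ := Quot.exists_rep c
          obtain ⟨zd, rfl⟩ := Quot.exists_rep d
          have hr : GI.Reachable zc zd := ConnectedComponent.exact hcd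
          rcases reach_insert_decomp F x y hr with h1 | ⟨h1, h2⟩ | ⟨h1, h2⟩
          · exact ConnectedComponent.sound h1
          · exact absurd (ConnectedComponent.sound h1)
              (Finset.ne_of_mem_erase (by exact_mod_cast hc))
          · exact absurd ((ConnectedComponent.sound h2).symm)
              (Finset.ne_of_mem_erase (by exact_mod_cast hd))
        have hcard : (Finset.univ.erase (GF.connectedComponentMk x)).card ≤
            Fintype.card GI.ConnectedComponent := by
          have := Finset.card_le_card_of_injOn (t := Finset.univ) φ
            (fun z _ => Finset.mem_univ _) hinj
          simpa using this
        rw [Finset.card_erase_of_mem (Finset.mem_univ _), Finset.card_univ] at hcard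
        rw [Nat.card_eq_fintype_card, Nat.card_eq_fintype_card]
        omega
      rw [Finset.card_insert_of_notMem haF]
      omega

section Swap

variable (G : SimpleGraph V)

/-- every vertex is on one of the two sides of an edge of a preconnected edge set -/
lemma two_sides {T : Finset (Sym2 V)} (x y : V) (he₀ : s(x,y) ∈ T)
    (hconn : ∀ u w : V, (fromEdgeSet (↑T : Set (Sym2 V))).Reachable u w) (z : V) :
    (fromEdgeSet (↑(T.erase s(x,y)) : Set (Sym2 V))).Reachable z x ∨
    (fromEdgeSet (↑(T.erase s(x,y)) : Set (Sym2 V))).Reachable z y := by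
  have h := hconn z x
  rw [← Finset.insert_erase he₀] at h
  rcases reach_insert_decomp (T.erase s(x,y)) x y h with h1 | ⟨h1, h2⟩ | ⟨h1, h2⟩
  · exact Or.inl h1
  · exact Or.inl h1
  · exact Or.inr h1

/-- erased-edge graph is below the edge-deleted graph -/
lemma erase_le_sdiff {T : Finset (Sym2 V)} (e₀ : Sym2 V) :
    fromEdgeSet (↑(T.erase e₀) : Set (Sym2 V)) ≤
      fromEdgeSet (↑T : Set (Sym2 V)) \ fromEdgeSet {e₀} := by
  intro a b hab
  rw [fromEdgeSet_adj] at hab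
  obtain ⟨hm, hne⟩ := hab
  rw [Finset.coe_erase, Set.mem_diff, Set.mem_singleton_iff] at hm
  rw [sdiff_adj, fromEdgeSet_adj, fromEdgeSet_adj]
  exact ⟨⟨hm.1, hne⟩, fun hc => hm.2 hc.1⟩

/-- the two sides of an edge of an acyclic graph are not connected after erasing it -/
lemma sides_not_reach {T : Finset (Sym2 V)} (x y : V) (he₀ : s(x,y) ∈ T) (hxy : x ≠ y)
    (hacyc : (fromEdgeSet (↑T : Set (Sym2 V))).IsAcyclic) :
    ¬ (fromEdgeSet (↑(T.erase s(x,y)) : Set (Sym2 V))).Reachable x y := by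
  intro hreach
  have hmem : s(x,y) ∈ (fromEdgeSet (↑T : Set (Sym2 V))).edgeSet := by
    rw [edgeSet_fromEdgeSet]
    exact ⟨he₀, by simp [hxy]⟩
  have hbridge := (isAcyclic_iff_forall_edge_isBridge.mp hacyc) hmem
  rw [isBridge_iff] at hbridge
  exact hbridge (hreach.mono (erase_le_sdiff (T := T) s(x,y)))

end Swap

section SwapMain

lemma spanning_card {G : SimpleGraph V} [Nonempty V] {T : Finset (Sym2 V)}
    (hT : IsSpanningTreeOn G Finset.univ T) : T.card + 1 = Fintype.card V := by
  obtain ⟨hsub, -, hacyc, hconn⟩ := hT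
  have htree : (fromEdgeSet (↑T : Set (Sym2 V))).IsTree :=
    ⟨⟨fun a b => hconn a (Finset.mem_univ a) b (Finset.mem_univ b)⟩, hacyc⟩
  have hef : (fromEdgeSet (↑T : Set (Sym2 V))).edgeFinset = T := by
    ext e
    rw [mem_edgeFinset, edgeSet_fromEdgeSet, Set.mem_diff]
    constructor
    · exact fun h => by exact_mod_cast h.1
    · intro h
      exact ⟨by exact_mod_cast h, G.not_isDiag_of_mem_edgeSet (hsub h)⟩
  rw [← hef]
  exact htree.card_edgeFinset

lemma swap_spanning {G : SimpleGraph V} {T : Finset (Sym2 V)}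
    (hT : IsSpanningTreeOn G Finset.univ T) {x y u v : V}
    (he₀ : s(x,y) ∈ T) (hf : s(u,v) ∈ G.edgeSet) (hfT : s(u,v) ∉ T) (huv : u ≠ v)
    (hsep : ¬ (fromEdgeSet (↑(T.erase s(x,y)) : Set (Sym2 V))).Reachable u v) :
    IsSpanningTreeOn G Finset.univ (insert s(u,v) (T.erase s(x,y))) := by
  obtain ⟨hsub, -, hacyc, hconn⟩ := hT
  have hconn' : ∀ a b : V, (fromEdgeSet (↑T : Set (Sym2 V))).Reachable a b :=
    fun a b => hconn a (Finset.mem_univ a) b (Finset.mem_univ b)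
  set R := fromEdgeSet (↑(T.erase s(x,y)) : Set (Sym2 V)) with hRdef
  set T' := insert s(u,v) (T.erase s(x,y)) with hT'def
  set GT' := fromEdgeSet (↑T' : Set (Sym2 V)) with hGT'def
  have hle₂ : R ≤ GT' := fromEdgeSet_mono (by exact_mod_cast Finset.subset_insert _ _)
  have hadjuv : GT'.Adj u v := by
    rw [hGT'def, fromEdgeSet_adj]
    exact ⟨by exact_mod_cast Finset.mem_insert_self _ _, huv⟩
  -- opposite sides
  have hu := two_sides x y he₀ hconn' u
  have hv := two_sides x y he₀ hconn' v
  have hopp : (R.Reachable u x ∧ R.Reachable v y) ∨ (R.Reachable u y ∧ R.Reachable v x) := by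
    rcases hu with h1 | h1 <;> rcases hv with h2 | h2
    · exact absurd (h1.trans h2.symm) hsep
    · exact Or.inl ⟨h1, h2⟩
    · exact Or.inr ⟨h1, h2⟩
    · exact absurd (h1.trans h2.symm) hsep
  have hXY : GT'.Reachable x y := by
    rcases hopp with ⟨h1, h2⟩ | ⟨h1, h2⟩
    · exact (h1.mono hle₂).symm.trans (hadjuv.reachable.trans (h2.mono hle₂))
    · exact (h2.mono hle₂).symm.trans (hadjuv.reachable.symm.trans (h1.mono hle₂))
  have hXY' : GT'.Reachable x y := hXY
  refine ⟨?_, fun e _ w _ => Finset.mem_univ _, ?_, ?_⟩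
  · intro e he
    rw [hT'def] at he
    rw [Finset.coe_insert, Set.mem_insert_iff] at he
    rcases he with rfl | he
    · exact hf
    · exact hsub (by exact_mod_cast Finset.mem_coe.mp (Finset.erase_subset _ _ (by exact_mod_cast he)))
  · -- acyclic
    intro w p hp
    by_cases hfe : s(u,v) ∈ p.edges
    · have hkey := adj_and_reachable_delete_edges_iff_exists_cycle.mpr ⟨w, p, hp, hfe⟩
      have hle₃ : GT' \ fromEdgeSet {s(u,v)} ≤ R := by
        intro a b hab
        rw [sdiff_adj] at hab
        obtain ⟨h1, hns⟩ := hab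
        obtain ⟨hm, hne⟩ := (fromEdgeSet_adj _).mp h1
        rw [Finset.coe_insert, Set.mem_insert_iff] at hm
        rcases hm with heq | hm
        · exact absurd ((fromEdgeSet_adj _).mpr ⟨by rw [heq]; exact Set.mem_singleton _, hne⟩) hns
        · exact (fromEdgeSet_adj _).mpr ⟨hm, hne⟩
      exact hsep (hkey.2.mono hle₃)
    · have hedges : ∀ e ∈ p.edges, e ∈ R.edgeSet := by
        intro e he
        have h1 := p.edges_subset_edgeSet he
        simp only [hGT'def, edgeSet_fromEdgeSet, Set.mem_diff] at h1
        simp only [hRdef, edgeSet_fromEdgeSet, Set.mem_diff]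
        refine ⟨?_, h1.2⟩
        have h2 := h1.1
        rw [hT'def, Finset.coe_insert, Set.mem_insert_iff] at h2
        rcases h2 with rfl | h2
        · exact absurd he hfe
        · exact h2
      have hacyc' : R.IsAcyclic :=
        acyclic_mono (fromEdgeSet_mono (by exact_mod_cast Finset.erase_subset _ _)) hacyc
      exact hacyc' (p.transfer R hedges) (hp.transfer hedges)
  · -- preconnected
    intro a _ b _
    refine reach_of_adj_reach (fun c d hcd => ?_) (hconn' a b)
    rw [fromEdgeSet_adj] at hcd
    obtain ⟨hm, hne⟩ := hcd
    by_cases heq : s(c,d) = s(x,y)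
    · rw [Sym2.eq_iff] at heq
      rcases heq with ⟨rfl, rfl⟩ | ⟨rfl, rfl⟩
      · exact hXY
      · exact hXY.symm
    · have hmem : s(c,d) ∈ T.erase s(x,y) := Finset.mem_erase.mpr ⟨heq, by exact_mod_cast hm⟩
      have : R.Adj c d := (fromEdgeSet_adj _).mpr ⟨by exact_mod_cast hmem, hne⟩
      exact this.reachable.mono hle₂

end SwapMain

section PathSep

lemma path_sep {T : Finset (Sym2 V)} (hacyc : (fromEdgeSet (↑T : Set (Sym2 V))).IsAcyclic)
    {u v : V} (p : (fromEdgeSet (↑T : Set (Sym2 V))).Walk u v) (hp : p.IsPath)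
    {e₀ : Sym2 V} (he : e₀ ∈ p.edges) :
    ¬ (fromEdgeSet (↑(T.erase e₀) : Set (Sym2 V))).Reachable u v := by
  rintro ⟨q₀⟩
  have hle : fromEdgeSet (↑(T.erase e₀) : Set (Sym2 V)) ≤ fromEdgeSet (↑T : Set (Sym2 V)) :=
    fromEdgeSet_mono (by exact_mod_cast Finset.erase_subset _ _)
  set q₁ := (q₀.mapLe hle).toPath with hq₁
  have hpq : (⟨p, hp⟩ : (fromEdgeSet (↑T : Set (Sym2 V))).Path u v) = q₁ :=
    isAcyclic_iff_path_unique.mp hacyc _ _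
  have he' : e₀ ∈ (q₁ : (fromEdgeSet (↑T : Set (Sym2 V))).Walk u v).edges := by
    rw [← hpq]; exact he
  have he'' : e₀ ∈ (q₀.mapLe hle).edges := Walk.edges_toPath_subset _ he'
  have he''' : e₀ ∈ q₀.edges := by
    simp only [Walk.mapLe, Walk.edges_map, List.mem_map, Hom.ofLE_apply,
      Sym2.map_id', id] at he''
    obtain ⟨e, he1, rfl⟩ := he''
    simpa using he1
  have hmem := q₀.edges_subset_edgeSet he'''
  rw [edgeSet_fromEdgeSet, Set.mem_diff] at hmem
  have : e₀ ∈ T.erase e₀ := by exact_mod_cast hmem.1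
  exact (Finset.notMem_erase _ _) this

end PathSep

section Exists

lemma exists_spanning (G : SimpleGraph V) (hG : G.Connected) :
    ∃ T : Finset (Sym2 V), IsSpanningTreeOn G Finset.univ T := by
  classical
  set cands : Finset (Finset (Sym2 V)) := Finset.filter
      (fun T : Finset (Sym2 V) => ∀ z w : V, (fromEdgeSet (↑T : Set (Sym2 V))).Reachable z w)
      G.edgeFinset.powerset with hcands
  have hne : cands.Nonempty := by
    rw [hcands]
    refine ⟨G.edgeFinset, Finset.mem_filter.mpr ⟨Finset.mem_powerset_self _, ?_⟩⟩
    intro z w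
    rw [coe_edgeFinset]
    rw [fromEdgeSet_edgeSet]
    exact hG.preconnected z w
  obtain ⟨T, hTmem, hTmin⟩ := Finset.exists_min_image _ Finset.card hne
  rw [Finset.mem_filter, Finset.mem_powerset] at hTmem
  obtain ⟨hTsub, hTconn⟩ := hTmem
  refine ⟨T, ?_, fun e _ w _ => Finset.mem_univ _, ?_, fun a _ b _ => hTconn a b⟩
  · intro e he
    exact mem_edgeFinset.mp (hTsub (by exact_mod_cast he))
  · -- acyclic by minimality
    by_contra hcyc
    rw [SimpleGraph.IsAcyclic] at hcyc
    push_neg at hcyc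
    obtain ⟨w, p, hp⟩ := hcyc
    cases p with
    | nil => exact hp.not_of_nil
    | @cons _ z _ ha q =>
      have hedge : s(w, z) ∈ (Walk.cons ha q).edges := by simp
      have hkey := adj_and_reachable_delete_edges_iff_exists_cycle.mpr ⟨w, _, hp, hedge⟩
      have hwz : s(w,z) ∈ T := by
        have := ha
        rw [fromEdgeSet_adj] at this
        exact_mod_cast this.1
      have hle₃ : (fromEdgeSet (↑T : Set (Sym2 V)) \ fromEdgeSet {s(w,z)}) ≤
          fromEdgeSet (↑(T.erase s(w,z)) : Set (Sym2 V)) := by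
        intro a b hab
        rw [sdiff_adj] at hab
        obtain ⟨h1, hns⟩ := hab
        obtain ⟨hm, hne'⟩ := (fromEdgeSet_adj _).mp h1
        refine (fromEdgeSet_adj _).mpr ⟨?_, hne'⟩
        have : s(a,b) ≠ s(w,z) := fun hc =>
          hns ((fromEdgeSet_adj _).mpr ⟨by rw [hc]; exact Set.mem_singleton _, hne'⟩)
        exact_mod_cast Finset.mem_erase.mpr ⟨this, by exact_mod_cast hm⟩
      have hreach' : (fromEdgeSet (↑(T.erase s(w,z)) : Set (Sym2 V))).Reachable w z :=
        hkey.2.mono hle₃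
      have hconn' : ∀ a b : V, (fromEdgeSet (↑(T.erase s(w,z)) : Set (Sym2 V))).Reachable a b := by
        intro a b
        refine reach_of_adj_reach (fun c d hcd => ?_) (hTconn a b)
        obtain ⟨hm, hne'⟩ := (fromEdgeSet_adj _).mp hcd
        by_cases heq : s(c,d) = s(w,z)
        · rw [Sym2.eq_iff] at heq
          rcases heq with ⟨rfl, rfl⟩ | ⟨rfl, rfl⟩
          · exact hreach'
          · exact hreach'.symm
        · have : s(c,d) ∈ T.erase s(w,z) := Finset.mem_erase.mpr ⟨heq, by exact_mod_cast hm⟩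
          exact ((fromEdgeSet_adj _).mpr ⟨by exact_mod_cast this, hne'⟩ :
            (fromEdgeSet (↑(T.erase s(w,z)) : Set (Sym2 V))).Adj c d).reachable
      have hmem' : T.erase s(w,z) ∈ cands := by
        rw [hcands]
        exact Finset.mem_filter.mpr ⟨Finset.mem_powerset.mpr ((Finset.erase_subset _ _).trans hTsub),
          hconn'⟩
      have := hTmin _ hmem'
      have hlt : (T.erase s(w,z)).card < T.card := Finset.card_erase_lt_of_mem hwz
      omega

end Exists

section Components

/-- graphs with the same reachability relation have the same number of components -/
lemma cc_card_congr {G H : SimpleGraph V} (h : ∀ a b : V, G.Reachable a b ↔ H.Reachable a b) :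
    Nat.card G.ConnectedComponent = Nat.card H.ConnectedComponent := by
  refine Nat.card_congr ⟨ConnectedComponent.lift (fun v => H.connectedComponentMk v)
      (fun v w pw _ => ConnectedComponent.sound ((h v w).mp pw.reachable)),
    ConnectedComponent.lift (fun v => G.connectedComponentMk v)
      (fun v w pw _ => ConnectedComponent.sound ((h v w).mpr pw.reachable)), ?_, ?_⟩
  · intro c
    obtain ⟨z, rfl⟩ := Quot.exists_rep c
    rfl
  · intro c
    obtain ⟨z, rfl⟩ := Quot.exists_rep c
    rfl

/-- the canonical component of an edge -/
def compOf (B : Finset (Sym2 V)) (e : Sym2 V) :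
    (fromEdgeSet (↑B : Set (Sym2 V))).ConnectedComponent :=
  (fromEdgeSet (↑B : Set (Sym2 V))).connectedComponentMk e.out.1

lemma compOf_eq {B : Finset (Sym2 V)} {e : Sym2 V} (heB : e ∈ B) (hnd : ¬ e.IsDiag)
    {a : V} (ha : a ∈ e) :
    compOf B e = (fromEdgeSet (↑B : Set (Sym2 V))).connectedComponentMk a := by
  induction e using Sym2.ind with
  | _ x y =>
    have hxy : x ≠ y := by simpa using hnd
    have hadj : (fromEdgeSet (↑B : Set (Sym2 V))).Adj x y :=
      (fromEdgeSet_adj _).mpr ⟨by exact_mod_cast heB, hxy⟩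
    have hmkeq := ConnectedComponent.sound hadj.reachable
    have h1 : (s(x,y) : Sym2 V).out.1 ∈ (s(x,y) : Sym2 V) := Sym2.out_fst_mem _
    rw [Sym2.mem_iff] at h1 ha
    unfold compOf
    rcases h1 with h1 | h1 <;> rcases ha with rfl | rfl <;> rw [h1] <;> simp [hmkeq]

/-- a walk in `fromEdgeSet B` whose edges lie in `S` gives reachability in the induced graph -/
lemma induce_reach (G : SimpleGraph V) (F : Finset (Sym2 V)) (S : Finset V)
    (hFE : ∀ e ∈ F, e ∈ G.edgeSet) (hFS : ∀ e ∈ F, ∀ v ∈ e, v ∈ S)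
    {z w : V} (hz : z ∈ S) (hw : w ∈ S)
    (h : (fromEdgeSet (↑F : Set (Sym2 V))).Reachable z w) :
    (G.induce (↑S : Set V)).Reachable ⟨z, hz⟩ ⟨w, hw⟩ := by
  obtain ⟨p⟩ := h
  induction p with
  | nil => exact Reachable.refl _
  | @cons a t c ha q ih =>
    obtain ⟨hm, hne⟩ := (fromEdgeSet_adj _).mp ha
    have hmF : s(a,t) ∈ F := by exact_mod_cast hm
    have htS : t ∈ S := hFS _ hmF t (by simp)
    have haS : a ∈ S := hFS _ hmF a (by simp)
    have hadj : (G.induce (↑S : Set V)).Adj ⟨a, haS⟩ ⟨t, htS⟩ := by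
      simp only [comap_adj, Function.Embedding.coe_subtype]
      exact G.mem_edgeSet.mp (hFE _ hmF)
    exact hadj.reachable.trans (ih htS hw)

/-- a walk in `fromEdgeSet B` starting in the component `c` only uses edges of that component -/
lemma walk_in_component (B : Finset (Sym2 V))
    {z w : V}
    (h : (fromEdgeSet (↑B : Set (Sym2 V))).Reachable z w) :
    (fromEdgeSet (↑(B.filter (fun e =>
        compOf B e = (fromEdgeSet (↑B : Set (Sym2 V))).connectedComponentMk z)) :
      Set (Sym2 V))).Reachable z w := by
  obtain ⟨p⟩ := h
  induction p with
  | nil => exact Reachable.refl _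
  | @cons a t c ha q ih =>
    obtain ⟨hm, hne⟩ := (fromEdgeSet_adj _).mp ha
    have hmB : s(a,t) ∈ B := by exact_mod_cast hm
    have hcomp : compOf B s(a,t) =
        (fromEdgeSet (↑B : Set (Sym2 V))).connectedComponentMk a :=
      compOf_eq hmB (by simpa using hne) (by simp)
    have hmk : (fromEdgeSet (↑B : Set (Sym2 V))).connectedComponentMk t =
        (fromEdgeSet (↑B : Set (Sym2 V))).connectedComponentMk a :=
      (ConnectedComponent.sound ha.reachable).symm
    have hadj : (fromEdgeSet (↑(B.filter (fun e =>
        compOf B e = (fromEdgeSet (↑B : Set (Sym2 V))).connectedComponentMk a)) :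
      Set (Sym2 V))).Adj a t := by
      refine (fromEdgeSet_adj _).mpr ⟨?_, hne⟩
      exact_mod_cast Finset.mem_filter.mpr ⟨hmB, hcomp⟩
    have ih' := ih
    rw [hmk] at ih'
    exact hadj.reachable.trans ih'

end Components

section Opt

def pmfSet (G : SimpleGraph V) : Set (Finset (Sym2 V) → ℝ) :=
  {p | (∀ T, 0 ≤ p T) ∧ (∀ T, p T ≠ 0 → IsSpanningTreeOn G Finset.univ T) ∧
    (∑ T : Finset (Sym2 V), p T) = 1}

def eta (p : Finset (Sym2 V) → ℝ) (e : Sym2 V) : ℝ :=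
  ∑ T : Finset (Sym2 V), if e ∈ T then p T else 0

def Phi (G : SimpleGraph V) (p : Finset (Sym2 V) → ℝ) : ℝ :=
  ∑ e ∈ G.edgeFinset, (eta p e) ^ 2

lemma eta_continuous (e : Sym2 V) : Continuous (fun p : Finset (Sym2 V) → ℝ => eta p e) := by
  unfold eta
  refine continuous_finset_sum _ (fun T _ => ?_)
  by_cases h : e ∈ T <;> simp [h, continuous_apply, continuous_const]

lemma exists_min (G : SimpleGraph V) (hG : G.Connected) :
    ∃ p ∈ pmfSet G, ∀ q ∈ pmfSet G, Phi G p ≤ Phi G q := by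
  -- nonempty
  obtain ⟨T₀, hT₀⟩ := exists_spanning G hG
  have hne : (pmfSet G).Nonempty := by
    refine ⟨fun S => if S = T₀ then 1 else 0, ?_, ?_, ?_⟩
    · intro T; by_cases h : T = T₀ <;> simp [h]
    · intro T hT
      by_cases h : T = T₀
      · exact h ▸ hT₀
      · simp [h] at hT
    · simp [Finset.sum_ite_eq' Finset.univ T₀ (fun _ => (1:ℝ))]
  -- compact
  have hclosed : IsClosed (pmfSet G) := by
    have heq : pmfSet G = (⋂ T : Finset (Sym2 V), {p : Finset (Sym2 V) → ℝ | 0 ≤ p T}) ∩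
        ((⋂ T ∈ {T : Finset (Sym2 V) | ¬ IsSpanningTreeOn G Finset.univ T},
          {p : Finset (Sym2 V) → ℝ | p T = 0}) ∩
         {p : Finset (Sym2 V) → ℝ | (∑ T : Finset (Sym2 V), p T) = 1}) := by
      ext p
      simp only [pmfSet, Set.mem_setOf_eq, Set.mem_inter_iff, Set.mem_iInter]
      constructor
      · rintro ⟨h1, h2, h3⟩
        exact ⟨h1, fun T hT => by_contra fun hne' => hT (h2 T hne'), h3⟩
      · rintro ⟨h1, h2, h3⟩
        exact ⟨h1, fun T hT => by_contra fun hns => hT (h2 T hns), h3⟩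
    rw [heq]
    refine IsClosed.inter (isClosed_iInter fun T =>
        isClosed_le continuous_const (continuous_apply T)) (IsClosed.inter ?_ ?_)
    · exact isClosed_biInter fun T _ => isClosed_eq (continuous_apply T) continuous_const
    · exact isClosed_eq (continuous_finset_sum _ fun T _ => continuous_apply T) continuous_const
  have hsubset : pmfSet G ⊆ Set.pi Set.univ (fun _ : Finset (Sym2 V) => Set.Icc (0:ℝ) 1) := by
    rintro p ⟨h1, _, h3⟩ T _
    refine ⟨h1 T, ?_⟩
    calc p T ≤ ∑ S : Finset (Sym2 V), p S :=
          Finset.single_le_sum (fun S _ => h1 S) (Finset.mem_univ T)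
    _ = 1 := h3
  have hcompact : IsCompact (pmfSet G) :=
    IsCompact.of_isClosed_subset (isCompact_univ_pi fun _ => isCompact_Icc) hclosed hsubset
  have hcont : ContinuousOn (Phi G) (pmfSet G) := by
    refine Continuous.continuousOn ?_
    exact continuous_finset_sum _ fun e _ => (eta_continuous e).pow 2
  obtain ⟨p, hp, hmin⟩ := hcompact.exists_isMinOn hne hcont
  exact ⟨p, hp, fun q hq => hmin hq⟩

end Opt

section FirstOrder

lemma eta_shift {p : Finset (Sym2 V) → ℝ} {T T' : Finset (Sym2 V)} (hTT' : T' ≠ T) (ε : ℝ)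
    (e : Sym2 V) :
    eta (fun S => p S + ε * ((if S = T' then (1:ℝ) else 0) - (if S = T then 1 else 0))) e =
      eta p e + ε * ((if e ∈ T' then (1:ℝ) else 0) - (if e ∈ T then 1 else 0)) := by
  unfold eta
  have h1 : ∀ S : Finset (Sym2 V),
      (if e ∈ S then p S + ε * ((if S = T' then (1:ℝ) else 0) - (if S = T then 1 else 0)) else 0)
      = (if e ∈ S then p S else 0)
        + ε * ((if S = T' then (if e ∈ T' then (1:ℝ) else 0) else 0)
             - (if S = T then (if e ∈ T then (1:ℝ) else 0) else 0)) := by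
    intro S
    by_cases h : e ∈ S
    · by_cases h2 : S = T' <;> by_cases h3 : S = T <;> subst_eqs <;> simp_all <;> ring
    · by_cases h2 : S = T' <;> by_cases h3 : S = T <;> subst_eqs <;> simp_all
  rw [Finset.sum_congr rfl (fun S _ => h1 S)]
  rw [Finset.sum_add_distrib, ← Finset.mul_sum, Finset.sum_sub_distrib]
  rw [Finset.sum_ite_eq' Finset.univ T', Finset.sum_ite_eq' Finset.univ T]
  simp

lemma first_order {G : SimpleGraph V} {p : Finset (Sym2 V) → ℝ}
    (hp : p ∈ pmfSet G) (hmin : ∀ q ∈ pmfSet G, Phi G p ≤ Phi G q)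
    {T : Finset (Sym2 V)} (hT : p T ≠ 0) {e₀ f : Sym2 V} (he₀ : e₀ ∈ T) (hf : f ∉ T)
    (hsp' : IsSpanningTreeOn G Finset.univ (insert f (T.erase e₀))) :
    eta p e₀ ≤ eta p f := by
  obtain ⟨hnn, hsupp, hsum⟩ := hp
  set T' := insert f (T.erase e₀) with hT'
  have hTT' : T' ≠ T := by
    intro h
    exact hf (h ▸ Finset.mem_insert_self f _)
  have hpT : 0 < p T := lt_of_le_of_ne (hnn T) (Ne.symm hT)
  have hTsp := hsupp T hT
  have hTE : T ⊆ G.edgeFinset := fun e he => mem_edgeFinset.mpr (hTsp.1 (by exact_mod_cast he))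
  have hT'E : T' ⊆ G.edgeFinset := fun e he => mem_edgeFinset.mpr (hsp'.1 (by exact_mod_cast he))
  set d : Sym2 V → ℝ := fun e => (if e ∈ T' then (1:ℝ) else 0) - (if e ∈ T then 1 else 0) with hd
  set D : ℝ := eta p f - eta p e₀ with hD
  set C : ℝ := ∑ e ∈ G.edgeFinset, (d e)^2 with hC
  have hCnn : 0 ≤ C := Finset.sum_nonneg fun e _ => sq_nonneg _
  -- the directional inequality
  have hdir : ∀ ε : ℝ, 0 < ε → ε ≤ p T → 0 ≤ 2 * ε * D + ε^2 * C := by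
    intro ε hε1 hε2
    set q : Finset (Sym2 V) → ℝ :=
      fun S => p S + ε * ((if S = T' then (1:ℝ) else 0) - (if S = T then 1 else 0)) with hq
    have hqmem : q ∈ pmfSet G := by
      refine ⟨?_, ?_, ?_⟩
      · intro S
        show 0 ≤ p S + ε * ((if S = T' then (1:ℝ) else 0) - (if S = T then 1 else 0))
        by_cases h2 : S = T'
        · have hST : S ≠ T := fun h => hTT' (by rw [← h2, h])
          rw [if_pos h2, if_neg hST]
          have h4 := hnn S
          ring_nf
          linarith
        · rw [if_neg h2]
          by_cases h3 : S = T
          · rw [if_pos h3]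
            have h4 : p S = p T := by rw [h3]
            ring_nf
            linarith
          · rw [if_neg h3]
            have h4 := hnn S
            ring_nf
            linarith
      · intro S hS
        by_cases h2 : S = T'
        · exact h2 ▸ hsp'
        · by_cases h3 : S = T
          · exact h3 ▸ hTsp
          · refine hsupp S ?_
            simp only [hq, if_neg h2, if_neg h3] at hS
            simpa using hS
      · simp only [hq]
        rw [Finset.sum_add_distrib, hsum, ← Finset.mul_sum, Finset.sum_sub_distrib]
        rw [Finset.sum_ite_eq' Finset.univ T' (fun _ => (1:ℝ)),
          Finset.sum_ite_eq' Finset.univ T (fun _ => (1:ℝ))]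
        simp
    have hphi := hmin q hqmem
    have hqeta : ∀ e, eta q e = eta p e + ε * d e := fun e => eta_shift hTT' ε e
    have hterm : ∀ e ∈ G.edgeFinset, (eta q e)^2 =
        (eta p e)^2 + 2 * ε * (eta p e * d e) + ε^2 * (d e)^2 := by
      intro e _
      rw [hqeta e]; ring
    have hexpand : Phi G q = Phi G p + 2 * ε * (∑ e ∈ G.edgeFinset, eta p e * d e)
        + ε^2 * C := by
      unfold Phi
      rw [Finset.sum_congr rfl hterm, Finset.sum_add_distrib, Finset.sum_add_distrib,
        ← Finset.mul_sum, ← Finset.mul_sum, hC]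
    have hsumd : (∑ e ∈ G.edgeFinset, eta p e * d e) = D := by
      have hsplit : ∀ e ∈ G.edgeFinset, eta p e * d e =
          (if e ∈ T' then eta p e else 0) - (if e ∈ T then eta p e else 0) := by
        intro e _
        by_cases h2 : e ∈ T' <;> by_cases h3 : e ∈ T <;> simp [hd, h2, h3]
      rw [Finset.sum_congr rfl hsplit, Finset.sum_sub_distrib]
      rw [← Finset.sum_filter, ← Finset.sum_filter]
      rw [Finset.filter_mem_eq_inter, Finset.filter_mem_eq_inter]
      rw [Finset.inter_eq_right.mpr hT'E, Finset.inter_eq_right.mpr hTE]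
      have hfe : f ∉ T.erase e₀ := fun h => hf (Finset.mem_of_mem_erase h)
      rw [hT', Finset.sum_insert hfe, Finset.sum_erase_eq_sub he₀, hD]
      ring
    rw [hexpand, hsumd] at hphi
    linarith
  -- conclude D ≥ 0
  by_contra hlt
  push_neg at hlt
  have hDneg : D < 0 := by rw [hD]; linarith
  set ε : ℝ := min (p T) (-D / (C + 1)) with hε
  have hC1 : (0:ℝ) < C + 1 := by linarith
  have hε1 : 0 < ε := lt_min hpT (div_pos (neg_pos.mpr hDneg) hC1)
  have hεle : ε ≤ -D / (C + 1) := min_le_right _ _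
  have h2 : ε * (C + 1) ≤ -D := (le_div_iff₀ hC1).mp hεle
  have h0 := hdir ε hε1 (min_le_left _ _)
  nlinarith [mul_le_mul_of_nonneg_left h2 hε1.le, mul_pos hε1 hε1,
    mul_neg_of_pos_of_neg hε1 hDneg]

end FirstOrder

/-- A finite connected simple graph with at least one edge that has the
strict 1-density property is homogeneous: some pmf on its spanning trees has constant
edge probabilities. -/
theorem homogeneous_of_strictDensity
    {V : Type*} [Fintype V] [DecidableEq V] (G : SimpleGraph V) (hG : G.Connected)
    (hE : G.edgeFinset.Nonempty) (hstrict : StrictDensityOn G Finset.univ) :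
    IsHomogeneousOn G Finset.univ := by
  classical
  obtain ⟨p, hp, hmin⟩ := exists_min G hG
  obtain ⟨hnn, hsupp, hsum⟩ := hp
  have hp' : p ∈ pmfSet G := ⟨hnn, hsupp, hsum⟩
  haveI : Nonempty V := hG.nonempty
  set E := G.edgeFinset with hEdef
  set n := Fintype.card V with hn
  set m := E.card with hm
  have hEuniv : inducedEdges G Finset.univ = E := by
    unfold inducedEdges
    exact Finset.filter_true_of_mem (fun e _ => fun v _ => Finset.mem_univ v)
  have hn2 : 2 ≤ n := by
    obtain ⟨e, he⟩ := hE
    have he' := mem_edgeFinset.mp he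
    induction e using Sym2.ind with
    | _ x y =>
      exact Fintype.one_lt_card_iff.mpr ⟨x, y, (G.mem_edgeSet.mp he').ne⟩
  have hmpos : 0 < m := Finset.card_pos.mpr hE
  set η := eta p with hη
  have hcard : ∀ T, p T ≠ 0 → (T.card : ℝ) = (n:ℝ) - 1 := by
    intro T hT
    have h := spanning_card (hsupp T hT)
    have h2 : ((T.card + 1 : ℕ) : ℝ) = (n:ℝ) := by exact_mod_cast congrArg (Nat.cast (R := ℝ)) h
    push_cast at h2
    linarith
  have hTE : ∀ T, p T ≠ 0 → T ⊆ E := by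
    intro T hT e he
    exact mem_edgeFinset.mpr ((hsupp T hT).1 (by exact_mod_cast he))
  -- the total edge probability equals n - 1
  have hP1 : ∑ e ∈ E, η e = (n:ℝ) - 1 := by
    rw [hη]
    unfold eta
    rw [Finset.sum_comm]
    have hin : ∀ T : Finset (Sym2 V), (∑ e ∈ E, if e ∈ T then p T else 0)
        = ((n:ℝ) - 1) * p T := by
      intro T
      rw [← Finset.sum_filter, Finset.sum_const]
      by_cases hT : p T = 0
      · simp [hT]
      · rw [Finset.filter_mem_eq_inter, Finset.inter_eq_right.mpr (hTE T hT)]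
        rw [nsmul_eq_mul, hcard T hT]
    rw [Finset.sum_congr rfl (fun T _ => hin T), ← Finset.mul_sum, hsum, mul_one]
  -- minimal edge probability
  obtain ⟨f₀, hf₀E, hf₀min⟩ := Finset.exists_min_image E η hE
  set b := η f₀ with hbdef
  set B := E.filter (fun e => η e = b) with hB
  have hBsub : B ⊆ E := Finset.filter_subset _ _
  have hf₀B : f₀ ∈ B := Finset.mem_filter.mpr ⟨hf₀E, rfl⟩
  have hbE : ∀ e ∈ B, η e = b := fun e he => (Finset.mem_filter.mp he).2
  have hble : ∀ e ∈ E, b ≤ η e := hf₀min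
  have hbm : b * m ≤ (n:ℝ) - 1 := by
    have h := Finset.sum_le_sum hble
    rw [Finset.sum_const, hP1, nsmul_eq_mul] at h
    rw [mul_comm]
    exact_mod_cast h
  have hb0 : 0 ≤ b := by
    rw [hbdef, hη]
    exact Finset.sum_nonneg fun T _ => by
      by_cases h : f₀ ∈ T <;> simp [h, hnn T]
  -- the exchange step: B-edges have endpoints connected within T ∩ B
  have hstep : ∀ T, p T ≠ 0 → ∀ c d : V, (fromEdgeSet (↑B : Set (Sym2 V))).Adj c d →
      (fromEdgeSet (↑(B.filter (· ∈ T)) : Set (Sym2 V))).Reachable c d := by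
    intro T hT c d hcd
    obtain ⟨hmB', hne⟩ := (fromEdgeSet_adj _).mp hcd
    have hmB : s(c,d) ∈ B := by exact_mod_cast hmB'
    by_cases hmemT : s(c,d) ∈ T
    · exact ((fromEdgeSet_adj _).mpr
        ⟨by exact_mod_cast Finset.mem_filter.mpr ⟨hmB, hmemT⟩, hne⟩).reachable
    · obtain ⟨hsub, -, hacyc, hconn⟩ := hsupp T hT
      obtain ⟨q⟩ := hconn c (Finset.mem_univ c) d (Finset.mem_univ d)
      set pth := q.toPath with hpth
      have hedges : ∀ e₀ ∈ (pth : (fromEdgeSet (↑T : Set (Sym2 V))).Walk c d).edges,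
          e₀ ∈ B.filter (· ∈ T) := by
        intro e₀ he₀
        have he₀T : e₀ ∈ T := by
          have h1 := Walk.edges_subset_edgeSet _ he₀
          rw [edgeSet_fromEdgeSet, Set.mem_diff] at h1
          exact_mod_cast h1.1
        have he₀E : e₀ ∈ E := hTE T hT he₀T
        refine Finset.mem_filter.mpr ⟨?_, he₀T⟩
        revert he₀ he₀T he₀E
        induction e₀ using Sym2.ind with
        | _ x y =>
          intro he₀ he₀T he₀E
          have hsep := path_sep hacyc (pth : (fromEdgeSet (↑T : Set (Sym2 V))).Walk c d)
            pth.2 he₀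
          have hfge : s(c,d) ∈ G.edgeSet := mem_edgeFinset.mp (hBsub hmB)
          have hsp' := swap_spanning ⟨hsub, fun e _ w _ => Finset.mem_univ _, hacyc, hconn⟩
            he₀T hfge hmemT hne hsep
          have hle := first_order hp' hmin hT he₀T hmemT hsp'
          have hgeb := hble _ he₀E
          have hfb : η s(c,d) = b := hbE _ hmB
          rw [hB, Finset.mem_filter]
          exact ⟨he₀E, le_antisymm (by rw [← hfb]; exact hle) hgeb⟩
      have hedges' : ∀ e₀ ∈ (pth : (fromEdgeSet (↑T : Set (Sym2 V))).Walk c d).edges,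
          e₀ ∈ (fromEdgeSet (↑(B.filter (· ∈ T)) : Set (Sym2 V))).edgeSet := by
        intro e₀ he₀
        rw [edgeSet_fromEdgeSet, Set.mem_diff]
        have h1 := Walk.edges_subset_edgeSet _ he₀
        rw [edgeSet_fromEdgeSet, Set.mem_diff] at h1
        exact ⟨by exact_mod_cast hedges e₀ he₀, h1.2⟩
      exact ⟨Walk.transfer _ _ hedges'⟩
  -- counting components
  set HB := fromEdgeSet (↑B : Set (Sym2 V)) with hHB
  set cB := Nat.card HB.ConnectedComponent with hcB
  have hP4 : ∀ T, p T ≠ 0 → (n:ℕ) ≤ cB + (B.filter (· ∈ T)).card := by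
    intro T hT
    have h1 := card_cc_add_card_le (B.filter (· ∈ T))
    have h2 : Nat.card HB.ConnectedComponent =
        Nat.card (fromEdgeSet (↑(B.filter (· ∈ T)) : Set (Sym2 V))).ConnectedComponent := by
      refine cc_card_congr (fun a b' => ⟨?_, ?_⟩)
      · exact fun h => reach_of_adj_reach (hstep T hT) h
      · exact fun h => h.mono (fromEdgeSet_mono (by exact_mod_cast Finset.filter_subset _ _))
    rw [hcB, h2]
    exact h1
  have hsum_etaB : (n:ℝ) - cB ≤ b * B.card := by
    have h1 : ∑ f ∈ B, η f = b * B.card := by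
      rw [Finset.sum_congr rfl hbE, Finset.sum_const, nsmul_eq_mul, mul_comm]
    have h2 : (n:ℝ) - cB ≤ ∑ f ∈ B, η f := by
      have hswap : ∑ f ∈ B, η f
          = ∑ T : Finset (Sym2 V), ((B.filter (· ∈ T)).card : ℝ) * p T := by
        rw [hη]
        unfold eta
        rw [Finset.sum_comm]
        refine Finset.sum_congr rfl (fun T _ => ?_)
        rw [← Finset.sum_filter, Finset.sum_const, nsmul_eq_mul]
      have hge : ∀ T : Finset (Sym2 V), ((n:ℝ) - cB) * p T
          ≤ ((B.filter (· ∈ T)).card : ℝ) * p T := by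
        intro T
        by_cases hT : p T = 0
        · simp [hT]
        · refine mul_le_mul_of_nonneg_right ?_ (hnn T)
          have := hP4 T hT
          have hcast : (n:ℝ) ≤ (cB:ℝ) + ((B.filter (· ∈ T)).card : ℝ) := by exact_mod_cast this
          linarith
      calc (n:ℝ) - cB = ∑ T : Finset (Sym2 V), ((n:ℝ) - cB) * p T := by
            rw [← Finset.mul_sum, hsum, mul_one]
        _ ≤ ∑ T : Finset (Sym2 V), ((B.filter (· ∈ T)).card : ℝ) * p T :=
            Finset.sum_le_sum (fun T _ => hge T)
        _ = ∑ f ∈ B, η f := hswap.symm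
    linarith
  -- component decomposition
  haveI : Fintype HB.ConnectedComponent := Fintype.ofFinite _
  set Sc : HB.ConnectedComponent → Finset V :=
    fun c => Finset.univ.filter (fun z => HB.connectedComponentMk z = c) with hSc
  set Bc : HB.ConnectedComponent → Finset (Sym2 V) :=
    fun c => B.filter (fun e => compOf B e = c) with hBc
  have hScsum : ∑ c : HB.ConnectedComponent, (Sc c).card = n := by
    rw [hn, ← Finset.card_univ (α := V)]
    exact (Finset.card_eq_sum_card_fiberwise
      (f := HB.connectedComponentMk) (fun x _ => Finset.mem_univ _)).symm
  have hBcsum : ∑ c : HB.ConnectedComponent, (Bc c).card = B.card :=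
    (Finset.card_eq_sum_card_fiberwise (f := compOf B) (fun x _ => Finset.mem_univ _)).symm
  have hcBcard : cB = Fintype.card HB.ConnectedComponent := Nat.card_eq_fintype_card
  have hnd : ∀ e ∈ B, ¬ e.IsDiag := fun e he =>
    G.not_isDiag_of_mem_edgeSet (mem_edgeFinset.mp (hBsub he))
  have hend : ∀ e ∈ B, ∀ v ∈ e, v ∈ Sc (compOf B e) := by
    intro e he v hv
    simp only [hSc]
    exact Finset.mem_filter.mpr ⟨Finset.mem_univ v, (compOf_eq he (hnd e he) hv).symm⟩
  have hn1pos : (0:ℝ) < (n:ℝ) - 1 := by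
    have : (2:ℝ) ≤ (n:ℝ) := by exact_mod_cast hn2
    linarith
  by_cases hbig : ∃ c, (Bc c).Nonempty ∧ Sc c = Finset.univ
  · -- a single component covers everything : B = E and we are done
    obtain ⟨c₀, hc₀ne, hc₀uni⟩ := hbig
    have hcB1 : cB = 1 := by
      rw [hcBcard]
      refine Fintype.card_eq_one_iff.mpr ⟨c₀, fun d => ?_⟩
      obtain ⟨z, rfl⟩ := Quot.exists_rep d
      have hz : z ∈ Sc c₀ := hc₀uni ▸ Finset.mem_univ z
      simp only [hSc] at hz
      exact (Finset.mem_filter.mp hz).2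
    have h1 : (n:ℝ) - 1 ≤ b * B.card := by
      rw [hcB1] at hsum_etaB
      exact_mod_cast hsum_etaB
    have hbpos : 0 < b := by
      by_contra h
      push_neg at h
      have h2 : b * B.card ≤ 0 := mul_nonpos_of_nonpos_of_nonneg h (Nat.cast_nonneg _)
      linarith
    have hge : (m:ℝ) ≤ (B.card:ℝ) := by
      have h3 : b * (m:ℝ) ≤ b * (B.card:ℝ) := by linarith
      exact le_of_mul_le_mul_left h3 hbpos
    have hBE' : B = E := Finset.eq_of_subset_of_card_le hBsub (by exact_mod_cast hge)
    refine ⟨⟨p, hnn, hsupp, hsum⟩, b, ?_⟩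
    intro e he
    rw [hEuniv] at he
    have heB : e ∈ B := hBE' ▸ he
    have hfin := hbE e heB
    rw [hη] at hfin
    unfold eta at hfin
    unfold edgeProbOn
    exact hfin
  · -- otherwise every component with an edge is proper : contradiction with strict density
    push_neg at hbig
    exfalso
    set θ : ℝ := (m:ℝ) / ((n:ℝ) - 1) with hθ
    have hθ0 : 0 ≤ θ := div_nonneg (Nat.cast_nonneg _) (le_of_lt hn1pos)
    have hduniv : density G Finset.univ = θ := by
      unfold density
      rw [hEuniv, Finset.card_univ, hθ, hn]
    have hScne : ∀ c : HB.ConnectedComponent, 0 < (Sc c).card := by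
      intro c
      obtain ⟨z, hz⟩ := Quot.exists_rep c
      refine Finset.card_pos.mpr ⟨z, ?_⟩
      simp only [hSc]
      exact Finset.mem_filter.mpr ⟨Finset.mem_univ z, hz⟩
    have hstrictc : ∀ c : HB.ConnectedComponent, (Bc c).Nonempty →
        ((Bc c).card : ℝ) < θ * (((Sc c).card:ℝ) - 1) := by
      intro c hce
      obtain ⟨e, he⟩ := hce
      obtain ⟨heB, hec⟩ := Finset.mem_filter.mp (by simp only [hBc] at he; exact he)
      have hendc : ∀ v ∈ e, v ∈ Sc c := fun v hv => hec ▸ hend e heB v hv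
      have h2lt : 1 < (Sc c).card := by
        clear he hec
        revert hendc heB
        induction e using Sym2.ind with
        | _ x y =>
          intro heB hendc
          have hxy : x ≠ y := by simpa using hnd _ heB
          exact Finset.one_lt_card.mpr ⟨x, hendc x (by simp), y, hendc y (by simp), hxy⟩
      have hBcsubInd : Bc c ⊆ inducedEdges G (Sc c) := by
        intro e' he'
        obtain ⟨he'B, he'c⟩ := Finset.mem_filter.mp (by simp only [hBc] at he'; exact he')
        refine Finset.mem_filter.mpr ⟨hBsub he'B, ?_⟩
        intro v hv
        exact he'c ▸ hend e' he'B v hv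
      have hInH : InH G (Sc c) := by
        constructor
        · exact ⟨e, hBcsubInd he⟩
        · haveI hne' : Nonempty (↑(↑(Sc c) : Set V)) := by
            obtain ⟨z, hz⟩ := Finset.card_pos.mp (hScne c)
            exact ⟨⟨z, by exact_mod_cast hz⟩⟩
          refine ⟨fun zz ww => ?_⟩
          obtain ⟨z, hz⟩ := zz
          obtain ⟨w, hw⟩ := ww
          have hzS : z ∈ Sc c := by exact_mod_cast hz
          have hwS : w ∈ Sc c := by exact_mod_cast hw
          have hzS' := hzS
          have hwS' := hwS
          simp only [hSc, Finset.mem_filter] at hzS' hwS'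
          have hzc : HB.connectedComponentMk z = c := hzS'.2
          have hwc : HB.connectedComponentMk w = c := hwS'.2
          have hreach : HB.Reachable z w := ConnectedComponent.exact (hzc.trans hwc.symm)
          have hwalk := walk_in_component B hreach
          rw [hzc] at hwalk
          have hBceq : B.filter (fun e => compOf B e = c) = Bc c := by simp only [hBc]
          rw [hBceq] at hwalk
          refine induce_reach G (Bc c) (Sc c) ?_ ?_ hzS hwS hwalk
          · intro e' he'2
            exact mem_edgeFinset.mp
              (hBsub (Finset.mem_filter.mp (by simp only [hBc] at he'2; exact he'2)).1)
          · intro e' he'2 v hv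
            obtain ⟨h1, h2⟩ := Finset.mem_filter.mp (by simp only [hBc] at he'2; exact he'2)
            exact h2 ▸ hend e' h1 v hv
      have hne_univ : Sc c ≠ Finset.univ := hbig c ⟨e, he⟩
      have hdlt : density G (Sc c) < θ := by
        rw [← hduniv]
        exact hstrict (Sc c) (Finset.subset_univ _) hInH hne_univ
      have hsc1 : (0:ℝ) < ((Sc c).card:ℝ) - 1 := by
        have h3 : (2:ℝ) ≤ ((Sc c).card:ℝ) := by exact_mod_cast h2lt
        linarith
      have hindcard : ((inducedEdges G (Sc c)).card : ℝ) =
          density G (Sc c) * (((Sc c).card:ℝ) - 1) := by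
        unfold density
        field_simp
      have hle1 : ((Bc c).card:ℝ) ≤ ((inducedEdges G (Sc c)).card:ℝ) := by
        exact_mod_cast Finset.card_le_card hBcsubInd
      calc ((Bc c).card:ℝ) ≤ density G (Sc c) * (((Sc c).card:ℝ) - 1) := by
            rw [← hindcard]; exact hle1
        _ < θ * (((Sc c).card:ℝ) - 1) := mul_lt_mul_of_pos_right hdlt hsc1
    have hweak : ∀ c : HB.ConnectedComponent,
        ((Bc c).card : ℝ) ≤ θ * (((Sc c).card:ℝ) - 1) := by
      intro c
      by_cases hce : (Bc c).Nonempty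
      · exact le_of_lt (hstrictc c hce)
      · rw [Finset.not_nonempty_iff_eq_empty] at hce
        rw [hce]
        simp only [Finset.card_empty, Nat.cast_zero]
        have h1 : (1:ℝ) ≤ ((Sc c).card:ℝ) := by exact_mod_cast hScne c
        nlinarith
    have hc₀ne : (Bc (compOf B f₀)).Nonempty := by
      refine ⟨f₀, ?_⟩
      simp only [hBc]
      exact Finset.mem_filter.mpr ⟨hf₀B, rfl⟩
    have hlt := Finset.sum_lt_sum (fun c (_ : c ∈ Finset.univ) => hweak c)
      ⟨compOf B f₀, Finset.mem_univ _, hstrictc _ hc₀ne⟩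
    have hLHS : ∑ c : HB.ConnectedComponent, ((Bc c).card:ℝ) = (B.card:ℝ) := by
      rw [← Nat.cast_sum]
      exact_mod_cast congrArg (Nat.cast (R := ℝ)) hBcsum
    have hRHS : ∑ c : HB.ConnectedComponent, θ * (((Sc c).card:ℝ) - 1)
        = θ * ((n:ℝ) - (cB:ℝ)) := by
      rw [← Finset.mul_sum]
      congr 1
      rw [Finset.sum_sub_distrib, Finset.sum_const, Finset.card_univ]
      have h4 : ∑ c : HB.ConnectedComponent, ((Sc c).card:ℝ) = (n:ℝ) := by
        rw [← Nat.cast_sum]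
        exact_mod_cast congrArg (Nat.cast (R := ℝ)) hScsum
      rw [h4, hcBcard]
      push_cast
      ring
    have hθb : θ * b ≤ 1 := by
      rw [hθ, div_mul_eq_mul_div, div_le_one hn1pos]
      nlinarith [hbm]
    rw [hLHS, hRHS] at hlt
    nlinarith [mul_le_mul_of_nonneg_left hsum_etaB hθ0,
      mul_le_mul_of_nonneg_right hθb (Nat.cast_nonneg (α := ℝ) B.card)]
end
end
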